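/- arXiv:2311.05901 — 8 statements merged into one kernel-verified Lean document; each statement's English description precedes it below -/
import Mathlib

section
/- The chromatic number of the n-dimensional cyclohedron is asymptotically n ln n; that is, the limit as n tends to infinity of γ_n/(n ln n) equals 1. -/
/-- The cyclic segment `[a,b]` of `[n]₀ = {0,...,n}`: the set
`{i : a ≤ i ≤ b}` if `a ≤ b`, and `{i : a ≤ i ≤ n} ∪ {i : 0 ≤ i ≤ b}` if `a > b`. -/
def CSeg (n a b : ℕ) : Finset ℕ :=
  if a ≤ b then Finset.Icc a b else Finset.Icc a n ∪ Finset.Icc 0 b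

/-- `(a, b)` are the endpoints of a genuine cyclic segment of `[n]₀`: `a, b ∈ [n]₀`
and `[a,b]` is a proper subset of `[n]₀`. -/
def IsCSeg (n a b : ℕ) : Prop :=
  a ≤ n ∧ b ≤ n ∧ CSeg n a b ⊂ Finset.range (n + 1)

/-- `[c,d]` overlaps `[a,b]`: `c > a` and the two cyclic segments are neither disjoint
nor comparable with respect to inclusion. -/
def COverlaps (n a b c d : ℕ) : Prop :=
  c > a ∧ (CSeg n a b ∩ CSeg n c d).Nonempty ∧
    ¬ CSeg n a b ⊆ CSeg n c d ∧ ¬ CSeg n c d ⊆ CSeg n a b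

/-- `[c,d]` follows `[a,b]`: `b ⊞ 1 = c`, where `⊞` is addition modulo `n + 1`. -/
def CFollows (n a b c d : ℕ) : Prop :=
  (b + 1) % (n + 1) = c

/-- `[a,b]` precedes `[c,d]`: `[c,d]` overlaps `[a,b]` or `[c,d]` follows `[a,b]`. -/
def CPrecedes (n a b c d : ℕ) : Prop :=
  COverlaps n a b c d ∨ CFollows n a b c d

/-- `X` is a cyclic segment of `[n]₀` (as a set). -/
def IsCSegSet (n : ℕ) (X : Finset ℕ) : Prop :=
  ∃ a b : ℕ, IsCSeg n a b ∧ X = CSeg n a b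

/-- Two cyclic segments are separated when one of them precedes the other. -/
def CSegSeparated (n : ℕ) (X Y : Finset ℕ) : Prop :=
  ∃ a b c d : ℕ, IsCSeg n a b ∧ IsCSeg n c d ∧ X = CSeg n a b ∧ Y = CSeg n c d ∧
    (CPrecedes n a b c d ∨ CPrecedes n c d a b)

/-- A proper colouring of the `n`-dimensional cyclohedron with `m` colours:
a function from the cyclic segments of `[n]₀` to `{1,...,m}` such that any two
distinct cyclic segments of the same colour are separated. -/
def IsProperColouringCyclo (n m : ℕ) (f : Finset ℕ → ℕ) : Prop :=
  (∀ X, IsCSegSet n X → f X ∈ Finset.Icc 1 m) ∧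
  ∀ X Y, IsCSegSet n X → IsCSegSet n Y → X ≠ Y → f X = f Y → CSegSeparated n X Y

/-- The chromatic number `γ_n` of the `n`-dimensional cyclohedron. -/
noncomputable def cycloChromatic (n : ℕ) : ℕ :=
  sInf {m : ℕ | ∃ f : Finset ℕ → ℕ, IsProperColouringCyclo n m f}

namespace Cyclo

/-- helper: mod for x < 2N -/
lemma mod_two_cases {N x : ℕ} (hN : 0 < N) (h : x < 2 * N) :
    x % N = if x < N then x else x - N := by
  split_ifs with h1
  · exact Nat.mod_eq_of_lt h1
  · rw [Nat.mod_eq_sub_mod (le_of_not_gt h1), Nat.mod_eq_of_lt (by omega)]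

/-- the cyclic segment starting at `a` with length `ℓ` -/
def Arc (n a ℓ : ℕ) : Finset ℕ := (Finset.range ℓ).image (fun t => (a + t) % (n+1))

lemma mem_Arc {n a ℓ x : ℕ} : x ∈ Arc n a ℓ ↔ ∃ t, t < ℓ ∧ x = (a + t) % (n+1) := by
  simp [Arc, Finset.mem_image, Finset.mem_range, eq_comm]

lemma Arc_card {n a ℓ : ℕ} (h : ℓ ≤ n + 1) : (Arc n a ℓ).card = ℓ := by
  rw [Arc, Finset.card_image_of_injOn, Finset.card_range]
  intro t1 h1 t2 h2 he
  simp only [Finset.coe_range, Set.mem_Iio] at h1 h2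
  have : (a + t1) % (n+1) = (a + t2) % (n+1) := he
  have h3 := Nat.ModEq.add_left_cancel' a (this : Nat.ModEq (n+1) (a+t1) (a+t2))
  rwa [Nat.ModEq, Nat.mod_eq_of_lt (by omega), Nat.mod_eq_of_lt (by omega)] at h3

lemma Arc_subset_range {n a ℓ : ℕ} : Arc n a ℓ ⊆ Finset.range (n + 1) := by
  intro x hx
  rcases mem_Arc.1 hx with ⟨t, _, rfl⟩
  exact Finset.mem_range.2 (Nat.mod_lt _ (by omega))

lemma Arc_ssubset {n a ℓ : ℕ} (h : ℓ ≤ n) : Arc n a ℓ ⊂ Finset.range (n + 1) := by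
  refine Finset.ssubset_iff_subset_ne.2 ⟨Arc_subset_range, fun he => ?_⟩
  have := congrArg Finset.card he
  rw [Arc_card (by omega), Finset.card_range] at this
  omega

end Cyclo
namespace Cyclo

/-- length of the cyclic segment [a,b] -/
def clen (n a b : ℕ) : ℕ := (b + (n+1) - a) % (n+1) + 1

lemma CSeg_eq_Arc {n a b : ℕ} (ha : a ≤ n) (hb : b ≤ n) :
    CSeg n a b = Arc n a (clen n a b) := by
  have hN : 0 < n + 1 := by omega
  rcases le_or_gt a b with hab | hab
  · have hlen : clen n a b = b - a + 1 := by
      unfold clen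
      rw [show b + (n+1) - a = (b - a) + (n+1) by omega, Nat.add_mod_right,
        Nat.mod_eq_of_lt (by omega)]
    rw [hlen, CSeg, if_pos hab]
    ext x
    rw [Finset.mem_Icc, mem_Arc]
    constructor
    · rintro ⟨h1, h2⟩
      exact ⟨x - a, by omega, by rw [show a + (x - a) = x by omega, Nat.mod_eq_of_lt (by omega)]⟩
    · rintro ⟨t, ht, rfl⟩
      rw [Nat.mod_eq_of_lt (by omega)]
      omega
  · have hlen : clen n a b = (n + 1) - (a - b) + 1 := by
      unfold clen
      rw [show b + (n+1) - a = (n+1) - (a-b) by omega, Nat.mod_eq_of_lt (by omega)]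
    rw [hlen, CSeg, if_neg (by omega)]
    ext x
    rw [Finset.mem_union, Finset.mem_Icc, Finset.mem_Icc, mem_Arc]
    constructor
    · rintro (⟨h1, h2⟩ | ⟨h1, h2⟩)
      · exact ⟨x - a, by omega, by rw [show a + (x - a) = x by omega, Nat.mod_eq_of_lt (by omega)]⟩
      · refine ⟨x + (n + 1) - a, by omega, ?_⟩
        rw [show a + (x + (n+1) - a) = x + (n+1) by omega, Nat.add_mod_right,
          Nat.mod_eq_of_lt (by omega)]
    · rintro ⟨t, ht, rfl⟩
      rw [mod_two_cases hN (by omega)]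
      split_ifs with h1 <;> omega

lemma clen_le {n a b : ℕ} : clen n a b ≤ n + 1 := by
  unfold clen
  have := Nat.mod_lt (b + (n+1) - a) (show 0 < n+1 by omega)
  omega

lemma clen_pos {n a b : ℕ} : 1 ≤ clen n a b := by unfold clen; omega

lemma IsCSeg_iff {n a b : ℕ} :
    IsCSeg n a b ↔ a ≤ n ∧ b ≤ n ∧ clen n a b ≤ n := by
  constructor
  · rintro ⟨ha, hb, hss⟩
    refine ⟨ha, hb, ?_⟩
    by_contra h
    have h1 : clen n a b = n + 1 := by have := @clen_le n a b; omega
    have h2 := CSeg_eq_Arc ha hb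
    rw [h1] at h2
    have hcard : (CSeg n a b).card = n + 1 := by rw [h2, Arc_card (le_refl _)]
    have := Finset.card_lt_card hss
    rw [hcard, Finset.card_range] at this
    omega
  · rintro ⟨ha, hb, hl⟩
    refine ⟨ha, hb, ?_⟩
    rw [CSeg_eq_Arc ha hb]
    exact Arc_ssubset hl

/-- endpoint of the arc starting at a with length ℓ -/
def aend (n a ℓ : ℕ) : ℕ := (a + ℓ - 1) % (n + 1)

lemma Arc_eq_CSeg {n a ℓ : ℕ} (ha : a ≤ n) (h1 : 1 ≤ ℓ) (h2 : ℓ ≤ n) :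
    CSeg n a (aend n a ℓ) = Arc n a ℓ ∧ IsCSeg n a (aend n a ℓ) := by
  have hN : 0 < n + 1 := by omega
  have hbn : aend n a ℓ ≤ n := by
    have := Nat.mod_lt (a + ℓ - 1) hN; unfold aend; omega
  have hclen : clen n a (aend n a ℓ) = ℓ := by
    unfold clen aend
    rw [mod_two_cases hN (show a + ℓ - 1 < 2*(n+1) by omega)]
    split_ifs with h3
    · rw [show a + ℓ - 1 + (n+1) - a = (ℓ - 1) + (n+1) by omega, Nat.add_mod_right,
        Nat.mod_eq_of_lt (by omega)]
      omega
    · rw [show a + ℓ - 1 - (n+1) + (n+1) - a = ℓ - 1 by omega,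
        Nat.mod_eq_of_lt (by omega)]
      omega
  constructor
  · rw [CSeg_eq_Arc ha hbn, hclen]
  · rw [IsCSeg_iff]
    exact ⟨ha, hbn, by omega⟩

lemma IsCSegSet_iff {n : ℕ} {X : Finset ℕ} :
    IsCSegSet n X ↔ ∃ a ℓ, a ≤ n ∧ 1 ≤ ℓ ∧ ℓ ≤ n ∧ X = Arc n a ℓ := by
  constructor
  · rintro ⟨a, b, hab, rfl⟩
    rw [IsCSeg_iff] at hab
    exact ⟨a, clen n a b, hab.1, clen_pos, hab.2.2, CSeg_eq_Arc hab.1 hab.2.1⟩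
  · rintro ⟨a, ℓ, ha, h1, h2, rfl⟩
    obtain ⟨he, hi⟩ := Arc_eq_CSeg ha h1 h2
    exact ⟨a, aend n a ℓ, hi, he.symm⟩

/-- uniqueness of representation -/
lemma Arc_inj {n a a' ℓ ℓ' : ℕ} (ha : a ≤ n) (ha' : a' ≤ n)
    (h1 : 1 ≤ ℓ) (h2 : ℓ ≤ n) (h1' : 1 ≤ ℓ') (h2' : ℓ' ≤ n)
    (he : Arc n a ℓ = Arc n a' ℓ') : a = a' ∧ ℓ = ℓ' := by
  have hN : 0 < n + 1 := by omega
  have hll : ℓ = ℓ' := by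
    have := congrArg Finset.card he
    rwa [Arc_card (by omega), Arc_card (by omega)] at this
  subst hll
  refine ⟨?_, rfl⟩
  by_contra hne
  -- a ∈ Arc n a' ℓ, so a = (a' + t) % (n+1) with 1 ≤ t < ℓ
  have hmem : a ∈ Arc n a' ℓ := by
    rw [← he, mem_Arc]
    exact ⟨0, by omega, by rw [Nat.add_zero, Nat.mod_eq_of_lt (by omega)]⟩
  rcases mem_Arc.1 hmem with ⟨t, ht, hat⟩
  have htpos : 1 ≤ t := by
    rcases Nat.eq_zero_or_pos t with h | h
    · exfalso; apply hne; rw [hat, h, Nat.add_zero, Nat.mod_eq_of_lt (by omega)]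
    · exact h
  -- predecessor of a: p = (a + n) % (n+1) ∈ Arc n a' ℓ but ∉ Arc n a ℓ
  have hpmem : (a + n) % (n+1) ∈ Arc n a' ℓ := by
    rw [mem_Arc]
    refine ⟨t - 1, by omega, ?_⟩
    have : a' + (t - 1) + (n + 1) = (a' + t) + n := by omega
    calc (a + n) % (n+1) = ((a' + t) % (n+1) + n) % (n+1) := by rw [hat]
      _ = ((a' + t) + n) % (n+1) := Nat.mod_add_mod _ _ _
      _ = (a' + (t - 1)) % (n+1) := by rw [← this, Nat.add_mod_right]
  have hpnot : (a + n) % (n+1) ∉ Arc n a ℓ := by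
    rw [mem_Arc]
    rintro ⟨s, hs, hps⟩
    have : (a + n) % (n+1) = (a + s) % (n+1) := hps
    have h3 := Nat.ModEq.add_left_cancel' a (this : Nat.ModEq (n+1) (a+n) (a+s))
    rw [Nat.ModEq, Nat.mod_eq_of_lt (by omega), Nat.mod_eq_of_lt (by omega)] at h3
    omega
  rw [he] at hpnot
  exact hpnot hpmem

end Cyclo
namespace Cyclo

lemma mod_self_eq_zero {N : ℕ} : N % N = 0 := Nat.mod_self N

/-- (c + N - a) % N explicitly, for a, c < N -/
lemma gap_eq {n a c : ℕ} (ha : a ≤ n) (hc : c ≤ n) :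
    (c + (n+1) - a) % (n+1) = if a ≤ c then c - a else c + (n+1) - a := by
  have hN : 0 < n + 1 := by omega
  rw [mod_two_cases hN (by omega)]
  split_ifs with h1 h2 h2 <;> omega

lemma mod_shift {N a c d : ℕ} (hN : 0 < N) (ha : a < N) (h : (a + d) % N = c % N) :
    (c + N - a) % N = d % N := by
  have h1 : (c + N - a) + a ≡ d + a [MOD N] := by
    rw [show (c + N - a) + a = c + N by omega]
    calc c + N ≡ c [MOD N] := (Nat.add_mod_right c N : (c + N) % N = c % N)
      _ ≡ a + d [MOD N] := (h : Nat.ModEq N (a+d) c).symm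
      _ = d + a := by omega
  exact Nat.ModEq.add_right_cancel' a h1

/-- c is reached from a by the gap -/
lemma start_add_gap {n a c : ℕ} (ha : a ≤ n) (hc : c ≤ n) :
    (a + (c + (n+1) - a) % (n+1)) % (n+1) = c := by
  have hN : 0 < n + 1 := by omega
  rw [Nat.add_mod_mod, show a + (c + (n+1) - a) = c + (n+1) by omega,
    Nat.add_mod_right, Nat.mod_eq_of_lt (by omega)]

lemma Arc_subset_of {n a c ℓ ℓ' : ℕ} (ha : a ≤ n) (hc : c ≤ n)
    (h : (c + (n+1) - a) % (n+1) + ℓ' ≤ ℓ) : Arc n c ℓ' ⊆ Arc n a ℓ := by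
  intro x hx
  rcases mem_Arc.1 hx with ⟨t, ht, rfl⟩
  rw [mem_Arc]
  refine ⟨(c + (n+1) - a) % (n+1) + t, by omega, ?_⟩
  have h1 : ((a + (c + (n+1) - a) % (n+1)) % (n+1) + t) % (n+1)
      = ((a + (c + (n+1) - a) % (n+1)) + t) % (n+1) := Nat.mod_add_mod _ _ _
  rw [start_add_gap ha hc] at h1
  rw [h1, add_assoc]

lemma gap_inter {n a c ℓ ℓ' : ℕ} (ha : a ≤ n) (hc : c ≤ n) (h2 : ℓ ≤ n) (h2' : ℓ' ≤ n)
    (h : (Arc n a ℓ ∩ Arc n c ℓ').Nonempty) :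
    (c + (n+1) - a) % (n+1) + 1 ≤ ℓ ∨ (a + (n+1) - c) % (n+1) + 1 ≤ ℓ' := by
  have hN : 0 < n + 1 := by omega
  rcases h with ⟨x, hx⟩
  rw [Finset.mem_inter] at hx
  rcases mem_Arc.1 hx.1 with ⟨s, hs, hxs⟩
  rcases mem_Arc.1 hx.2 with ⟨t, ht, hxt⟩
  have h0 : (a + s) % (n+1) = (c + t) % (n+1) := by rw [← hxs, ← hxt]
  rcases le_or_gt t s with hts | hts
  · left
    have h1 : (a + (s - t)) + t ≡ c + t [MOD (n+1)] := by
      rw [show a + (s - t) + t = a + s by omega]; exact h0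
    have h3 := mod_shift hN (show a < n+1 by omega) (Nat.ModEq.add_right_cancel' t h1)
    rw [Nat.mod_eq_of_lt (show s - t < n+1 by omega)] at h3
    omega
  · right
    have h1 : (c + (t - s)) + s ≡ a + s [MOD (n+1)] := by
      rw [show c + (t - s) + s = c + t by omega]; exact h0.symm
    have h3 := mod_shift hN (show c < n+1 by omega) (Nat.ModEq.add_right_cancel' s h1)
    rw [Nat.mod_eq_of_lt (show t - s < n+1 by omega)] at h3
    omega

end Cyclo
namespace Cyclo

lemma b_eq_aend {n a b : ℕ} (ha : a ≤ n) (hb : b ≤ n) : b = aend n a (clen n a b) := by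
  unfold aend clen
  rw [show a + ((b + (n+1) - a) % (n+1) + 1) - 1 = a + (b + (n+1) - a) % (n+1) by omega,
    start_add_gap ha hb]

lemma aend_succ {n a ℓ : ℕ} (h1 : 1 ≤ ℓ) : (aend n a ℓ + 1) % (n+1) = (a + ℓ) % (n+1) := by
  unfold aend
  rw [Nat.mod_add_mod, show a + ℓ - 1 + 1 = a + ℓ by omega]

lemma sep_cases {n a c ℓ ℓ' : ℕ} (ha : a ≤ n) (hc : c ≤ n) (h1 : 1 ≤ ℓ) (h2 : ℓ ≤ n)
    (h1' : 1 ≤ ℓ') (h2' : ℓ' ≤ n)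
    (hsep : CSegSeparated n (Arc n a ℓ) (Arc n c ℓ')) :
    (a ≠ c ∧ (Arc n a ℓ ∩ Arc n c ℓ').Nonempty ∧
      ¬ Arc n a ℓ ⊆ Arc n c ℓ' ∧ ¬ Arc n c ℓ' ⊆ Arc n a ℓ)
    ∨ (a + ℓ) % (n+1) = c ∨ (c + ℓ') % (n+1) = a := by
  obtain ⟨p, q, r, s, hpq, hrs, hX, hY, hor⟩ := hsep
  obtain ⟨hp, hq, hclpq⟩ := IsCSeg_iff.1 hpq
  obtain ⟨hr, hs, hclrs⟩ := IsCSeg_iff.1 hrs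
  rw [CSeg_eq_Arc hp hq] at hX
  rw [CSeg_eq_Arc hr hs] at hY
  obtain ⟨hap, halp⟩ := Arc_inj ha hp h1 h2 clen_pos hclpq hX
  obtain ⟨hcr, hclr⟩ := Arc_inj hc hr h1' h2' clen_pos hclrs hY
  have hqe : q = aend n a ℓ := by rw [hap, halp]; exact b_eq_aend hp hq
  have hse : s = aend n c ℓ' := by rw [hcr, hclr]; exact b_eq_aend hr hs
  have hXY : CSeg n p q = Arc n a ℓ := by rw [CSeg_eq_Arc hp hq, ← halp, ← hap]
  have hYX : CSeg n r s = Arc n c ℓ' := by rw [CSeg_eq_Arc hr hs, ← hclr, ← hcr]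
  rcases hor with (hov | hfo) | (hov | hfo)
  · left
    obtain ⟨hgt, hne, hs1, hs2⟩ := hov
    rw [hXY, hYX] at hne hs1 hs2
    exact ⟨by omega, hne, hs1, hs2⟩
  · right; left
    have : (q + 1) % (n+1) = r := hfo
    rw [hqe, aend_succ h1] at this
    rw [this, ← hcr]
  · left
    obtain ⟨hgt, hne, hs1, hs2⟩ := hov
    rw [hXY, hYX] at hne hs1 hs2
    rw [Finset.inter_comm] at hne
    exact ⟨by omega, hne, hs2, hs1⟩
  · right; right
    have : (s + 1) % (n+1) = p := hfo
    rw [hse, aend_succ h1'] at this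
    rw [this, ← hap]

lemma gap_eq_of_follows {n a c ℓ : ℕ} (ha : a ≤ n) (hc : c ≤ n) (h2 : ℓ ≤ n)
    (h : (a + ℓ) % (n+1) = c) : (c + (n+1) - a) % (n+1) = ℓ := by
  have := mod_shift (show 0 < n+1 by omega) (show a < n+1 by omega)
    (show (a + ℓ) % (n+1) = c % (n+1) by rw [h, Nat.mod_eq_of_lt (by omega)])
  rwa [Nat.mod_eq_of_lt (show ℓ < n+1 by omega)] at this

lemma gap_add_gap {n a c : ℕ} (ha : a ≤ n) (hc : c ≤ n) (hne : a ≠ c) :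
    (a + (n+1) - c) % (n+1) = (n+1) - (c + (n+1) - a) % (n+1) := by
  rw [gap_eq ha hc, gap_eq hc ha]
  split_ifs <;> omega

lemma gap_pos {n a c : ℕ} (ha : a ≤ n) (hc : c ≤ n) (hne : a ≠ c) :
    1 ≤ (c + (n+1) - a) % (n+1) := by
  rw [gap_eq ha hc]; split_ifs <;> omega

/-- Key consequence of separation, when the backward gap is too large. -/
lemma sep_key {n a c ℓ ℓ' : ℕ} (ha : a ≤ n) (hc : c ≤ n) (h1 : 1 ≤ ℓ) (h2 : ℓ ≤ n)
    (h1' : 1 ≤ ℓ') (h2' : ℓ' ≤ n) (hne : a ≠ c)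
    (hsep : CSegSeparated n (Arc n a ℓ) (Arc n c ℓ'))
    (hbig : ℓ' < (n+1) - (c + (n+1) - a) % (n+1)) :
    (c + (n+1) - a) % (n+1) ≤ ℓ ∧ ℓ < (c + (n+1) - a) % (n+1) + ℓ' := by
  have hgg := gap_add_gap ha hc hne
  rcases sep_cases ha hc h1 h2 h1' h2' hsep with hov | hfo | hfo
  · obtain ⟨_, hne2, _, hns⟩ := hov
    have hgi := gap_inter ha hc h2 h2' hne2
    have hgl : (c + (n+1) - a) % (n+1) + 1 ≤ ℓ := by
      rcases hgi with h | h
      · exact h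
      · omega
    refine ⟨by omega, ?_⟩
    by_contra hcon
    exact hns (Arc_subset_of ha hc (by omega))
  · have := gap_eq_of_follows ha hc h2 hfo
    omega
  · have := gap_eq_of_follows hc ha h2' hfo
    omega

lemma sep_same_start {n a ℓ ℓ' : ℕ} (ha : a ≤ n) (h1 : 1 ≤ ℓ) (h2 : ℓ ≤ n)
    (h1' : 1 ≤ ℓ') (h2' : ℓ' ≤ n)
    (hsep : CSegSeparated n (Arc n a ℓ) (Arc n a ℓ')) : False := by
  rcases sep_cases ha ha h1 h2 h1' h2' hsep with hov | hfo | hfo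
  · exact hov.1 rfl
  · have := gap_eq_of_follows ha ha h2 hfo
    rw [show a + (n+1) - a = n+1 by omega, Nat.mod_self] at this
    omega
  · have := gap_eq_of_follows ha ha h2' hfo
    rw [show a + (n+1) - a = n+1 by omega, Nat.mod_self] at this
    omega

/-- Construction of separation for the upper bound: same length, close starts. -/
lemma sep_construct {n a c ℓ : ℕ} (hac : a < c) (hc : c ≤ n) (h1 : 1 ≤ ℓ) (h2 : ℓ ≤ n)
    (hd : c - a ≤ ℓ) : CSegSeparated n (Arc n a ℓ) (Arc n c ℓ) := by
  have ha : a ≤ n := by omega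
  obtain ⟨hea, hia⟩ := Arc_eq_CSeg ha h1 h2
  obtain ⟨hec, hic⟩ := Arc_eq_CSeg hc h1 h2
  refine ⟨a, aend n a ℓ, c, aend n c ℓ, hia, hic, hea.symm, hec.symm, Or.inl ?_⟩
  rcases eq_or_lt_of_le hd with hdeq | hdlt
  · -- touching: follows
    right
    show (aend n a ℓ + 1) % (n+1) = c
    rw [aend_succ h1, show a + ℓ = c by omega, Nat.mod_eq_of_lt (by omega)]
  · -- overlap
    left
    rw [COverlaps, hea, hec]
    refine ⟨hac, ⟨c, ?_⟩, ?_, ?_⟩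
    · rw [Finset.mem_inter]
      constructor
      · exact mem_Arc.2 ⟨c - a, by omega, by rw [show a + (c-a) = c by omega,
          Nat.mod_eq_of_lt (by omega)]⟩
      · exact mem_Arc.2 ⟨0, by omega, by rw [Nat.add_zero, Nat.mod_eq_of_lt (by omega)]⟩
    · intro hsub
      have := Finset.eq_of_subset_of_card_le hsub (by rw [Arc_card (by omega), Arc_card (by omega)])
      have := (Arc_inj ha hc h1 h2 h1 h2 this).1
      omega
    · intro hsub
      have := Finset.eq_of_subset_of_card_le hsub (by rw [Arc_card (by omega), Arc_card (by omega)])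
      have := (Arc_inj hc ha h1 h2 h1 h2 this).1
      omega

end Cyclo
namespace Cyclo

lemma sep_symm {n : ℕ} {X Y : Finset ℕ} (h : CSegSeparated n X Y) : CSegSeparated n Y X := by
  obtain ⟨a, b, c, d, h1, h2, h3, h4, h5⟩ := h
  exact ⟨c, d, a, b, h2, h1, h4, h3, h5.symm⟩

/-- number of colours used for arcs of length j -/
def W (n j : ℕ) : ℕ := n / (j+1) + 1

def base (n ℓ : ℕ) : ℕ := ∑ j ∈ Finset.Icc 1 (ℓ-1), W n j

lemma base_succ {n ℓ : ℕ} (h : 1 ≤ ℓ) : base n (ℓ+1) = base n ℓ + W n ℓ := by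
  unfold base
  rw [show ℓ + 1 - 1 = (ℓ - 1) + 1 by omega, Finset.sum_Icc_succ_top (by omega),
    show ℓ - 1 + 1 = ℓ by omega]

lemma base_mono {n ℓ ℓ' : ℕ} (h : ℓ ≤ ℓ') : base n ℓ ≤ base n ℓ' := by
  apply Finset.sum_le_sum_of_subset
  apply Finset.Icc_subset_Icc_right
  omega

-- canonical representative of a cyclic segment set
open Classical in
noncomputable def rep (n : ℕ) (X : Finset ℕ) : ℕ × ℕ :=
  if h : IsCSegSet n X then
    ((IsCSegSet_iff.1 h).choose, (IsCSegSet_iff.1 h).choose_spec.choose)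
  else (0, 0)

lemma rep_spec {n : ℕ} {X : Finset ℕ} (h : IsCSegSet n X) :
    (rep n X).1 ≤ n ∧ 1 ≤ (rep n X).2 ∧ (rep n X).2 ≤ n ∧ X = Arc n (rep n X).1 (rep n X).2 := by
  rw [rep, dif_pos h]
  exact (IsCSegSet_iff.1 h).choose_spec.choose_spec

noncomputable def colour (n : ℕ) (X : Finset ℕ) : ℕ :=
  base n (rep n X).2 + (rep n X).1 / ((rep n X).2 + 1) + 1

lemma colour_lt {n ℓ ℓ' a c : ℕ} (h1 : 1 ≤ ℓ) (ha : a ≤ n) (hlt : ℓ < ℓ') :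
    base n ℓ + a / (ℓ+1) + 1 < base n ℓ' + c / (ℓ'+1) + 1 := by
  have hdle := Nat.div_le_div_right (c := ℓ+1) ha
  have hb := base_succ (n := n) h1
  have hm := base_mono (n := n) (show ℓ+1 ≤ ℓ' by omega)
  unfold W at hb
  obtain ⟨q, hq⟩ : ∃ q, a/(ℓ+1) = q := ⟨_, rfl⟩
  obtain ⟨r, hr⟩ : ∃ r, c/(ℓ'+1) = r := ⟨_, rfl⟩
  obtain ⟨s, hs⟩ : ∃ s, n/(ℓ+1) = s := ⟨_, rfl⟩
  rw [hq, hs] at hdle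
  rw [hs] at hb
  rw [hq, hr]
  omega

lemma colour_mem {n : ℕ} {X : Finset ℕ} (h : IsCSegSet n X) :
    colour n X ∈ Finset.Icc 1 (base n (n+1)) := by
  obtain ⟨ha, h1, h2, _⟩ := rep_spec h
  rw [Finset.mem_Icc]
  unfold colour
  constructor
  · exact Nat.le_add_left 1 _
  · have := colour_lt (c := 0) h1 ha (show (rep n X).2 < n + 1 by omega)
    have h0 : (0 : ℕ) / (n + 1 + 1) = 0 := Nat.zero_div _
    omega

lemma colour_proper {n : ℕ} : IsProperColouringCyclo n (base n (n+1)) (colour n) := by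
  refine ⟨fun X hX => colour_mem hX, fun X Y hX hY hne hcol => ?_⟩
  obtain ⟨haX, h1X, h2X, hXa⟩ := rep_spec hX
  obtain ⟨haY, h1Y, h2Y, hYa⟩ := rep_spec hY
  unfold colour at hcol
  obtain ⟨a, ℓ, hAX⟩ : ∃ a ℓ, rep n X = (a, ℓ) := ⟨_, _, rfl⟩
  obtain ⟨c, ℓ', hAY⟩ : ∃ c l, rep n Y = (c, l) := ⟨_, _, rfl⟩
  simp only [hAX, hAY] at haX h1X h2X hXa haY h1Y h2Y hYa hcol
  have hll : ℓ = ℓ' := by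
    rcases Nat.lt_trichotomy ℓ ℓ' with h | h | h
    · exact absurd hcol (Nat.ne_of_lt (colour_lt h1X haX h))
    · exact h
    · exact absurd hcol.symm (Nat.ne_of_lt (colour_lt h1Y haY h))
  subst hll
  have hdiv : a / (ℓ + 1) = c / (ℓ + 1) := by omega
  have hanec : a ≠ c := fun hac => hne (by rw [hXa, hYa, hac])
  have hclose : ∀ u v : ℕ, u < v → u / (ℓ+1) = v / (ℓ+1) → v - u ≤ ℓ := by
    intro u v huv hd
    have h1 := Nat.div_add_mod v (ℓ+1)
    have h2 := Nat.div_mul_le_self u (ℓ+1)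
    have h3 := Nat.mod_lt v (show 0 < ℓ+1 by omega)
    obtain ⟨q, hq⟩ : ∃ q, v/(ℓ+1) = q := ⟨_, rfl⟩
    obtain ⟨r, hr⟩ : ∃ r, v % (ℓ+1) = r := ⟨_, rfl⟩
    rw [hd] at h2
    rw [hq] at h1 h2
    rw [hr] at h1 h3
    rw [show (ℓ+1) * q = q * (ℓ+1) from Nat.mul_comm _ _] at h1
    omega
  rw [hXa, hYa]
  rcases Nat.lt_or_ge a c with hac | hca
  · exact sep_construct hac haY h1X h2X (hclose a c hac hdiv)
  · have hca' : c < a := by omega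
    exact sep_symm (sep_construct hca' haX h1X h2X (hclose c a hca' hdiv.symm))

theorem gamma_le_base (n : ℕ) : cycloChromatic n ≤ base n (n+1) :=
  Nat.sInf_le ⟨colour n, colour_proper⟩

end Cyclo
namespace Cyclo

lemma sep_gap {n a c ℓ ℓ' : ℕ} (ha : a ≤ n) (hc : c ≤ n) (h1 : 1 ≤ ℓ) (h2 : ℓ ≤ n)
    (h1' : 1 ≤ ℓ') (h2' : ℓ' ≤ n)
    (hsep : CSegSeparated n (Arc n a ℓ) (Arc n c ℓ')) :
    (c + (n+1) - a) % (n+1) ≤ ℓ ∨ (a + (n+1) - c) % (n+1) ≤ ℓ' := by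
  rcases sep_cases ha hc h1 h2 h1' h2' hsep with hov | hfo | hfo
  · rcases gap_inter ha hc h2 h2' hov.2.1 with h | h
    · exact Or.inl (by omega)
    · exact Or.inr (by omega)
  · exact Or.inl (le_of_eq (gap_eq_of_follows ha hc h2 hfo))
  · exact Or.inr (le_of_eq (gap_eq_of_follows hc ha h2' hfo))

/-- Core combinatorial lemma: in a family of pairwise separated short arcs,
every arc has length at least (size of family) - 1. -/
lemma class_size {n K : ℕ} (hK3 : 3 * K ≤ n) (C : Finset (ℕ × ℕ))
    (hC : ∀ p ∈ C, p.1 ≤ n ∧ 1 ≤ p.2 ∧ p.2 ≤ K)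
    (hsep : ∀ p ∈ C, ∀ q ∈ C, p ≠ q → CSegSeparated n (Arc n p.1 p.2) (Arc n q.1 q.2))
    {u : ℕ × ℕ} (hu : u ∈ C) : C.card ≤ u.2 + 1 := by
  have hN : 0 < n + 1 := by omega
  obtain ⟨hu1, hu2, hu3⟩ := hC u hu
  have hK1 : 1 ≤ K := by omega
  have hKn : K ≤ n := by omega
  -- window origin
  set b : ℕ := (u.1 + (n+1) - K) % (n+1) with hbdef
  have hb : b ≤ n := by
    have := Nat.mod_lt (u.1 + (n+1) - K) hN; omega
  -- normalized position
  set x : ℕ × ℕ → ℕ := fun q => (q.1 + (n+1) - b) % (n+1) with hxdef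
  have hstart : ∀ q ∈ C, (b + x q) % (n+1) = q.1 := by
    intro q hq
    exact start_add_gap hb (hC q hq).1
  -- same start implies equal members
  have hsame : ∀ q ∈ C, ∀ r ∈ C, q.1 = r.1 → q = r := by
    intro q hq r hr hqr
    by_contra hne
    obtain ⟨hq1, hq2, hq3⟩ := hC q hq
    obtain ⟨hr1, hr2, hr3⟩ := hC r hr
    have := hsep q hq r hr hne
    rw [hqr] at this
    exact sep_same_start hr1 hq2 (by omega) hr2 (by omega) this
  have hxinj : ∀ q ∈ C, ∀ r ∈ C, x q = x r → q = r := by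
    intro q hq r hr hxy
    apply hsame q hq r hr
    rw [← hstart q hq, ← hstart r hr, hxy]
  -- x u = K
  have hxu : x u = K := by
    have h1 : (b + K) % (n+1) = u.1 % (n+1) := by
      rw [hbdef, Nat.mod_add_mod, show u.1 + (n+1) - K + K = u.1 + (n+1) by omega,
        Nat.add_mod_right]
    have := mod_shift hN (show b < n + 1 by omega) h1
    rw [hxdef]
    simp only []
    rw [this, Nat.mod_eq_of_lt (by omega)]
  -- window bound
  have hwin : ∀ q ∈ C, x q ≤ 2 * K := by
    intro q hq
    by_cases hqu : q = u
    · rw [hqu, hxu]; omega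
    obtain ⟨hq1, hq2, hq3⟩ := hC q hq
    have hneq : u.1 ≠ q.1 := fun h => hqu (hsame q hq u hu h.symm)
    have hgg := gap_add_gap hu1 hq1 hneq
    have hgaps := sep_gap hu1 hq1 hu2 (by omega) hq2 (by omega)
      (hsep u hu q hq (fun h => hqu h.symm))
    -- x q = (K + g) % (n+1) where g = gap from u.1 to q.1
    have hxq : x q = (K + (q.1 + (n+1) - u.1) % (n+1)) % (n+1) := by
      have hgm : (q.1 + (n+1) - u.1) % (n+1) < n + 1 := Nat.mod_lt _ hN
      apply mod_shift hN (show b < n+1 by omega)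
      calc (b + (K + (q.1 + (n+1) - u.1) % (n+1))) % (n+1)
          = ((u.1 + (n+1) - K) % (n+1) + (K + (q.1 + (n+1) - u.1) % (n+1))) % (n+1) := by
            rw [hbdef]
        _ = ((u.1 + (n+1) - K) + (K + (q.1 + (n+1) - u.1) % (n+1))) % (n+1) :=
            Nat.mod_add_mod _ _ _
        _ = ((u.1 + (q.1 + (n+1) - u.1) % (n+1)) + (n+1)) % (n+1) := by
            rw [show (u.1 + (n+1) - K) + (K + (q.1 + (n+1) - u.1) % (n+1))
              = (u.1 + (q.1 + (n+1) - u.1) % (n+1)) + (n+1) by omega]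
        _ = (u.1 + (q.1 + (n+1) - u.1) % (n+1)) % (n+1) := Nat.add_mod_right _ _
        _ = q.1 % (n+1) := by rw [start_add_gap hu1 hq1, Nat.mod_eq_of_lt (by omega)]
    have hglt : (q.1 + (n+1) - u.1) % (n+1) < n + 1 := Nat.mod_lt _ hN
    rcases hgaps with hg | hg
    · -- forward gap small : g ≤ u.2 ≤ K
      rw [hxq, Nat.mod_eq_of_lt (by omega)]
      omega
    · -- backward gap small : g ≥ n+1-K
      rw [hxq, mod_two_cases hN (by omega)]
      split_ifs with hsplit <;> omega
  -- pairwise gap in normalized coordinates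
  have hgap : ∀ q ∈ C, ∀ r ∈ C, x q < x r → (r.1 + (n+1) - q.1) % (n+1) = x r - x q := by
    intro q hq r hr hlt
    have hq1 := (hC q hq).1
    have hr1 := (hC r hr).1
    have h1 : (q.1 + (x r - x q)) % (n+1) = r.1 % (n+1) := by
      rw [← hstart q hq, Nat.mod_add_mod, show b + x q + (x r - x q) = b + x r by omega,
        hstart r hr]
      exact (Nat.mod_eq_of_lt (by omega)).symm
    have := mod_shift hN (show q.1 < n+1 by omega) h1
    rw [this, Nat.mod_eq_of_lt (show x r - x q < n + 1 by have := hwin r hr; omega)]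
  -- pairwise relation
  have hrel : ∀ q ∈ C, ∀ r ∈ C, x q < x r → x r ≤ x q + q.2 ∧ x q + q.2 < x r + r.2 := by
    intro q hq r hr hlt
    obtain ⟨hq1, hq2, hq3⟩ := hC q hq
    obtain ⟨hr1, hr2, hr3⟩ := hC r hr
    have hne : q ≠ r := fun h => by rw [h] at hlt; omega
    have hne1 : q.1 ≠ r.1 := by
      intro h
      exact hne (hsame q hq r hr h)
    have hg := hgap q hq r hr hlt
    have hwr := hwin r hr
    have hwq := hwin q hq
    have hkey := sep_key hq1 hr1 hq2 (by omega) hr2 (by omega) hne1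
      (hsep q hq r hr hne) (by rw [hg]; omega)
    rw [hg] at hkey
    omega
  -- counting
  set e : ℕ × ℕ → ℕ := fun q => x q + q.2 with hedef
  obtain ⟨z, hz, hzmax⟩ := C.exists_max_image x ⟨u, hu⟩
  have hM1 : ∀ v ∈ C, x z ≤ e v := by
    intro v hv
    rcases Nat.lt_or_ge (x v) (x z) with h | h
    · exact (hrel v hv z hz h).1
    · have : x v = x z := le_antisymm (hzmax v hv) h
      have hv2 := (hC v hv).2.1
      simp only [hedef]
      omega
  set P' : Finset (ℕ × ℕ) := C.filter (fun q => x q < x u) with hPdef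
  set Q' : Finset (ℕ × ℕ) := C.filter (fun q => x u < x q) with hQdef
  have hQcard : Q'.card ≤ x z - x u := by
    have h1 : Q'.card ≤ (Finset.Icc (x u + 1) (x z)).card := by
      apply Finset.card_le_card_of_injOn x
      · intro v hv
        rw [hQdef, Finset.mem_coe, Finset.mem_filter] at hv
        rw [Finset.mem_coe, Finset.mem_Icc]
        exact ⟨by omega, hzmax v hv.1⟩
      · intro v hv w hw hvw
        rw [hQdef, Finset.mem_coe, Finset.mem_filter] at hv hw
        exact hxinj v hv.1 w hw.1 hvw
    rwa [Nat.card_Icc, show x z + 1 - (x u + 1) = x z - x u by omega] at h1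
  have hPcard : P'.card ≤ e u - x z := by
    have h1 : P'.card ≤ (Finset.Icc (x z) (e u - 1)).card := by
      apply Finset.card_le_card_of_injOn e
      · intro v hv
        rw [hPdef, Finset.mem_coe, Finset.mem_filter] at hv
        rw [Finset.mem_coe, Finset.mem_Icc]
        have h2 := hM1 v hv.1
        have h3 := (hrel v hv.1 u hu hv.2).2
        simp only [hedef] at h2 h3 ⊢
        omega
      · intro v hv w hw hvw
        rw [hPdef, Finset.mem_coe, Finset.mem_filter] at hv hw
        by_contra hne
        have hxne : x v ≠ x w := fun h => hne (hxinj v hv.1 w hw.1 h)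
        rcases Nat.lt_or_ge (x v) (x w) with h | h
        · have := (hrel v hv.1 w hw.1 h).2
          simp only [hedef] at hvw
          omega
        · have hlt : x w < x v := by omega
          have := (hrel w hw.1 v hv.1 hlt).2
          simp only [hedef] at hvw
          omega
    rw [Nat.card_Icc] at h1
    simp only [hedef] at h1 ⊢
    omega
  have hdisj : Disjoint P' Q' := by
    rw [Finset.disjoint_left]
    intro q hqP hqQ
    rw [hPdef, Finset.mem_filter] at hqP
    rw [hQdef, Finset.mem_filter] at hqQ
    omega
  have herase : C.erase u = P' ∪ Q' := by
    ext q
    rw [Finset.mem_erase, Finset.mem_union, hPdef, hQdef, Finset.mem_filter,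
      Finset.mem_filter]
    constructor
    · rintro ⟨hne, hqC⟩
      have : x q ≠ x u := fun h => hne (hxinj q hqC u hu h)
      rcases Nat.lt_or_ge (x q) (x u) with h | h
      · exact Or.inl ⟨hqC, h⟩
      · exact Or.inr ⟨hqC, by omega⟩
    · rintro (⟨hqC, h⟩ | ⟨hqC, h⟩) <;>
        exact ⟨fun he => by rw [he] at h; omega, hqC⟩
  have hcard1 : (C.erase u).card = C.card - 1 := Finset.card_erase_of_mem hu
  have hcard2 : (P' ∪ Q').card = P'.card + Q'.card := Finset.card_union_of_disjoint hdisj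
  have hpos : 0 < C.card := Finset.card_pos.2 ⟨u, hu⟩
  have hMzu : x u ≤ x z := hzmax u hu
  have hMe : x z ≤ e u := hM1 u hu
  rw [herase, hcard2] at hcard1
  simp only [hedef] at hMe hPcard
  obtain ⟨XU, hXU⟩ : ∃ t, x u = t := ⟨_, rfl⟩
  obtain ⟨XZ, hXZ⟩ : ∃ t, x z = t := ⟨_, rfl⟩
  obtain ⟨PC, hPC⟩ : ∃ t, P'.card = t := ⟨_, rfl⟩
  obtain ⟨QC, hQC⟩ : ∃ t, Q'.card = t := ⟨_, rfl⟩
  obtain ⟨CC, hCC⟩ : ∃ t, C.card = t := ⟨_, rfl⟩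
  rw [hXU, hXZ] at hMzu hMe hPcard hQcard
  rw [hPC] at hPcard hcard1
  rw [hQC] at hQcard hcard1
  rw [hCC] at hcard1 hpos ⊢
  omega

end Cyclo
namespace Cyclo

theorem gamma_lower (n : ℕ) (hn : 3 ≤ n) :
    ((n : ℝ) + 1) * ∑ ℓ ∈ Finset.Icc 1 (n/3), (1 : ℝ)/(ℓ+1) ≤ (cycloChromatic n : ℝ) := by
  set K := n / 3 with hKdef
  have hK3 : 3 * K ≤ n := by rw [hKdef, Nat.mul_comm]; exact Nat.div_mul_le_self n 3
  have hK1 : 1 ≤ K := by rw [hKdef]; omega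
  have hKn : K ≤ n := by omega
  -- get an optimal proper colouring
  have hmem : cycloChromatic n ∈ {m : ℕ | ∃ f : Finset ℕ → ℕ, IsProperColouringCyclo n m f} :=
    Nat.sInf_mem ⟨base n (n+1), colour n, colour_proper⟩
  obtain ⟨f, hf⟩ := hmem
  set m := cycloChromatic n with hmdef
  set P : Finset (ℕ × ℕ) := Finset.range (n+1) ×ˢ Finset.Icc 1 K with hPdef
  set w : ℕ × ℕ → ℝ := fun p => 1/((p.2 : ℝ)+1) with hwdef
  have hPmem : ∀ p ∈ P, p.1 ≤ n ∧ 1 ≤ p.2 ∧ p.2 ≤ K := by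
    intro p hp
    rw [hPdef, Finset.mem_product, Finset.mem_range, Finset.mem_Icc] at hp
    exact ⟨by omega, hp.2.1, hp.2.2⟩
  have hseg : ∀ p ∈ P, IsCSegSet n (Arc n p.1 p.2) := by
    intro p hp
    obtain ⟨h1, h2, h3⟩ := hPmem p hp
    exact IsCSegSet_iff.2 ⟨p.1, p.2, h1, h2, by omega, rfl⟩
  have hmaps : ∀ p ∈ P, f (Arc n p.1 p.2) ∈ Finset.Icc 1 m :=
    fun p hp => hf.1 _ (hseg p hp)
  -- fiberwise decomposition
  have hsum : ∑ p ∈ P, w p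
      = ∑ c ∈ Finset.Icc 1 m, ∑ p ∈ P.filter (fun p => f (Arc n p.1 p.2) = c), w p :=
    (Finset.sum_fiberwise_of_maps_to hmaps w).symm
  -- each class has weight at most 1
  have hclass : ∀ c ∈ Finset.Icc 1 m,
      ∑ p ∈ P.filter (fun p => f (Arc n p.1 p.2) = c), w p ≤ 1 := by
    intro c _
    set C := P.filter (fun p => f (Arc n p.1 p.2) = c) with hCdef
    have hCsub : C ⊆ P := Finset.filter_subset _ _
    have hCmem : ∀ p ∈ C, p.1 ≤ n ∧ 1 ≤ p.2 ∧ p.2 ≤ K := fun p hp => hPmem p (hCsub hp)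
    have hCsep : ∀ p ∈ C, ∀ q ∈ C, p ≠ q →
        CSegSeparated n (Arc n p.1 p.2) (Arc n q.1 q.2) := by
      intro p hp q hq hne
      obtain ⟨hp1, hp2, hp3⟩ := hCmem p hp
      obtain ⟨hq1, hq2, hq3⟩ := hCmem q hq
      have hane : Arc n p.1 p.2 ≠ Arc n q.1 q.2 := by
        intro h
        obtain ⟨h1, h2⟩ := Arc_inj hp1 hq1 hp2 (by omega) hq2 (by omega) h
        exact hne (Prod.ext h1 h2)
      have hfc : f (Arc n p.1 p.2) = f (Arc n q.1 q.2) := by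
        rw [hCdef, Finset.mem_filter] at hp hq
        rw [hp.2, hq.2]
      exact hf.2 _ _ (hseg p (hCsub hp)) (hseg q (hCsub hq)) hane hfc
    rcases C.eq_empty_or_nonempty with hemp | hne
    · rw [hemp, Finset.sum_empty]; norm_num
    · have hk : 0 < C.card := Finset.card_pos.2 hne
      have hbound : ∀ p ∈ C, w p ≤ 1 / (C.card : ℝ) := by
        intro p hp
        have hcs := class_size hK3 C hCmem hCsep hp
        rw [hwdef]
        apply one_div_le_one_div_of_le
        · exact_mod_cast hk
        · exact_mod_cast hcs
      calc ∑ p ∈ C, w p ≤ C.card • (1 / (C.card : ℝ)) :=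
            Finset.sum_le_card_nsmul C w _ hbound
        _ = (C.card : ℝ) * (1 / (C.card : ℝ)) := nsmul_eq_mul _ _
        _ = 1 := by
            rw [mul_one_div]
            exact div_self (ne_of_gt (by exact_mod_cast hk))
  -- total weight equals (n+1) * harmonic-ish sum
  have htot : ∑ p ∈ P, w p = ((n : ℝ) + 1) * ∑ ℓ ∈ Finset.Icc 1 K, (1 : ℝ)/(ℓ+1) := by
    rw [hPdef, Finset.sum_product]
    calc ∑ a ∈ Finset.range (n+1), ∑ ℓ ∈ Finset.Icc 1 K, w (a, ℓ)
        = ∑ _a ∈ Finset.range (n+1), ∑ ℓ ∈ Finset.Icc 1 K, (1 : ℝ)/(ℓ+1) := rfl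
      _ = (Finset.range (n+1)).card • ∑ ℓ ∈ Finset.Icc 1 K, (1 : ℝ)/(ℓ+1) :=
          Finset.sum_const _
      _ = ((n : ℝ) + 1) * ∑ ℓ ∈ Finset.Icc 1 K, (1 : ℝ)/(ℓ+1) := by
          rw [Finset.card_range, nsmul_eq_mul]
          push_cast
          ring
  have hfinal : ∑ p ∈ P, w p ≤ (m : ℝ) := by
    rw [hsum]
    calc ∑ c ∈ Finset.Icc 1 m, ∑ p ∈ P.filter (fun p => f (Arc n p.1 p.2) = c), w p
        ≤ ∑ _c ∈ Finset.Icc 1 m, (1 : ℝ) := Finset.sum_le_sum hclass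
      _ = ((Finset.Icc 1 m).card : ℝ) := by rw [Finset.sum_const, nsmul_eq_mul, mul_one]
      _ = (m : ℝ) := by rw [Nat.card_Icc]; norm_num
  rw [htot] at hfinal
  exact hfinal

end Cyclo
namespace Cyclo

lemma sum_inv_succ_eq (K : ℕ) :
    ∑ ℓ ∈ Finset.Icc 1 K, (1 : ℝ)/(ℓ+1) = (harmonic (K+1) : ℝ) - 1 := by
  have h1 : (harmonic (K+1) : ℝ) = ∑ i ∈ Finset.range (K+1), (1 : ℝ)/(i+1) := by
    rw [harmonic]
    push_cast
    simp [one_div]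
  rw [h1, Finset.sum_range_succ']
  have h2 : ∑ ℓ ∈ Finset.Icc 1 K, (1 : ℝ)/(ℓ+1) = ∑ i ∈ Finset.range K, (1 : ℝ)/(1+i+1) := by
    rw [show Finset.Icc 1 K = Finset.Ico 1 (K+1) by rw [Finset.Ico_add_one_right_eq_Icc],
      Finset.sum_Ico_eq_sum_range]
    norm_num
  rw [h2]
  norm_num
  apply Finset.sum_congr rfl
  intro i _
  ring_nf

/-- Lower bound in log form. -/
lemma gamma_lower_log (n : ℕ) (hn : 3 ≤ n) :
    ((n : ℝ) + 1) * (Real.log ((n : ℝ)/3) - 1) ≤ (cycloChromatic n : ℝ) := by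
  have h1 := gamma_lower n hn
  rw [sum_inv_succ_eq] at h1
  refine le_trans ?_ h1
  apply mul_le_mul_of_nonneg_left _ (by positivity)
  have h2 : Real.log ((n : ℝ)/3) ≤ Real.log ((n/3 : ℕ) + 2 : ℕ) := by
    apply Real.log_le_log (by positivity)
    have : (3 : ℕ) * (n/3) + 3 > n := by omega
    push_cast
    have h3 : (n : ℝ) < 3 * ((n/3 : ℕ) : ℝ) + 3 := by exact_mod_cast this
    linarith
  have h3 := log_add_one_le_harmonic (n/3 + 1)
  have h4 : ((n/3 + 1 + 1 : ℕ) : ℝ) = ((n/3 : ℕ) + 2 : ℕ) := by push_cast; ring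
  rw [h4] at h3
  linarith

/-- Upper bound in log form. -/
lemma gamma_upper_log (n : ℕ) (hn : 1 ≤ n) :
    (cycloChromatic n : ℝ) ≤ (n : ℝ) * Real.log ((n : ℝ) + 1) + (n : ℝ) := by
  have h1 := gamma_le_base n
  have h2 : ((base n (n+1) : ℕ) : ℝ) ≤ (n : ℝ) * ((harmonic (n+1) : ℝ) - 1) + n := by
    rw [base, show n + 1 - 1 = n by omega]
    have h3 : ((∑ j ∈ Finset.Icc 1 n, W n j : ℕ) : ℝ)
        = ∑ j ∈ Finset.Icc 1 n, (((n / (j+1) : ℕ) : ℝ) + 1) := by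
      simp only [W]
      push_cast
      rfl
    rw [h3, Finset.sum_add_distrib, Finset.sum_const, Nat.card_Icc,
      show n + 1 - 1 = n by omega]
    have h4 : ∑ j ∈ Finset.Icc 1 n, ((n / (j+1) : ℕ) : ℝ)
        ≤ ∑ j ∈ Finset.Icc 1 n, (n : ℝ)/((j : ℝ)+1) := by
      apply Finset.sum_le_sum
      intro j _
      have := Nat.cast_div_le (α := ℝ) (m := n) (n := j + 1)
      push_cast at this ⊢
      exact this
    have h5 : ∑ j ∈ Finset.Icc 1 n, (n : ℝ)/((j : ℝ)+1)
        = (n : ℝ) * ((harmonic (n+1) : ℝ) - 1) := by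
      rw [← sum_inv_succ_eq, Finset.mul_sum]
      apply Finset.sum_congr rfl
      intro j _
      ring
    rw [nsmul_eq_mul, mul_one]
    linarith
  have h6 : (harmonic (n+1) : ℝ) ≤ 1 + Real.log ((n : ℝ) + 1) := by
    have := harmonic_le_one_add_log (n+1)
    push_cast at this
    exact this
  have h7 : (cycloChromatic n : ℝ) ≤ ((base n (n+1) : ℕ) : ℝ) := by exact_mod_cast h1
  nlinarith [Nat.cast_nonneg (α := ℝ) n]

end Cyclo
namespace Cyclo

open Filter Real

noncomputable def lofn (n : ℕ) : ℝ :=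
  ((n : ℝ) + 1) * (Real.log n - Real.log 3 - 1) / ((n : ℝ) * Real.log n)

noncomputable def hifn (n : ℕ) : ℝ :=
  ((n : ℝ) * Real.log ((n : ℝ) + 1) + n) / ((n : ℝ) * Real.log n)

lemma h1n_tendsto : Tendsto (fun n : ℕ => 1 / (n : ℝ)) atTop (nhds 0) :=
  tendsto_one_div_atTop_nhds_zero_nat

lemma hinvlog_tendsto : Tendsto (fun n : ℕ => 1 / Real.log n) atTop (nhds 0) := by
  have h1 : Tendsto (fun n : ℕ => Real.log n) atTop atTop :=
    Real.tendsto_log_atTop.comp tendsto_natCast_atTop_atTop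
  simpa [one_div, Pi.inv_def] using h1.inv_tendsto_atTop

lemma lofn_tendsto : Tendsto lofn atTop (nhds 1) := by
  have hA : Tendsto (fun n : ℕ => 1 + 1 / (n : ℝ)) atTop (nhds (1 + 0)) :=
    tendsto_const_nhds.add h1n_tendsto
  have hB : Tendsto (fun n : ℕ => 1 - (Real.log 3 + 1) * (1 / Real.log n)) atTop
      (nhds (1 - (Real.log 3 + 1) * 0)) :=
    tendsto_const_nhds.sub (tendsto_const_nhds.mul hinvlog_tendsto)
  have hAB := hA.mul hB
  norm_num at hAB
  apply hAB.congr'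
  filter_upwards [eventually_ge_atTop 3] with n hn
  have hn0 : (0 : ℝ) < n := by exact_mod_cast (by omega : 0 < n)
  have hlogpos : 0 < Real.log n := Real.log_pos (by exact_mod_cast (by omega : 1 < n))
  rw [lofn]
  field_simp
  ring_nf

lemma hifn_tendsto : Tendsto hifn atTop (nhds 1) := by
  have hC : Tendsto (fun n : ℕ => Real.log (1 + 1 / (n : ℝ))) atTop (nhds (Real.log (1 + 0))) :=
    (tendsto_const_nhds.add h1n_tendsto).log (by norm_num)
  have hD : Tendsto (fun n : ℕ => 1 + (Real.log (1 + 1 / (n : ℝ)) + 1) * (1 / Real.log n))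
      atTop (nhds (1 + (Real.log (1 + 0) + 1) * 0)) :=
    tendsto_const_nhds.add ((hC.add tendsto_const_nhds).mul hinvlog_tendsto)
  norm_num at hD
  apply hD.congr'
  filter_upwards [eventually_ge_atTop 3] with n hn
  have hn0 : (0 : ℝ) < n := by exact_mod_cast (by omega : 0 < n)
  have hlogpos : 0 < Real.log n := Real.log_pos (by exact_mod_cast (by omega : 1 < n))
  have hlogsplit : Real.log ((n : ℝ) + 1) = Real.log n + Real.log (1 + 1 / (n : ℝ)) := by
    rw [show (n : ℝ) + 1 = (n : ℝ) * (1 + 1 / (n : ℝ)) by field_simp,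
      Real.log_mul (by positivity) (by positivity)]
  rw [hifn, hlogsplit]
  field_simp
  ring_nf

end Cyclo

/-- Corollary: `γ_n ∼ n ln n`, i.e. `γ_n / (n ln n) → 1` as `n → ∞`. -/
theorem cycloChromatic_asymptotic :
    Filter.Tendsto (fun n : ℕ => (cycloChromatic n : ℝ) / ((n : ℝ) * Real.log n))
      Filter.atTop (nhds 1) := by
  open Cyclo Filter Real in
  apply tendsto_of_tendsto_of_tendsto_of_le_of_le' Cyclo.lofn_tendsto Cyclo.hifn_tendsto
  · filter_upwards [Filter.eventually_ge_atTop 3] with n hn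
    have hn0 : (0 : ℝ) < n := by exact_mod_cast (by omega : 0 < n)
    have hlogpos : 0 < Real.log n := Real.log_pos (by exact_mod_cast (by omega : 1 < n))
    have h1 := Cyclo.gamma_lower_log n hn
    have hlogdiv : Real.log ((n : ℝ)/3) = Real.log n - Real.log 3 :=
      Real.log_div (by positivity) (by norm_num)
    have h2 : ((n : ℝ) + 1) * (Real.log n - Real.log 3 - 1) ≤ (cycloChromatic n : ℝ) := by
      rw [show Real.log (n:ℝ) - Real.log 3 - 1 = Real.log ((n:ℝ)/3) - 1 by rw [hlogdiv]]
      exact h1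
    rw [Cyclo.lofn]
    exact (div_le_div_iff_of_pos_right (mul_pos hn0 hlogpos)).2 h2
  · filter_upwards [Filter.eventually_ge_atTop 3] with n hn
    have hn0 : (0 : ℝ) < n := by exact_mod_cast (by omega : 0 < n)
    have hlogpos : 0 < Real.log n := Real.log_pos (by exact_mod_cast (by omega : 1 < n))
    have h1 := Cyclo.gamma_upper_log n (by omega)
    rw [Cyclo.hifn]
    exact (div_le_div_iff_of_pos_right (mul_pos hn0 hlogpos)).2 h1
end

section
/- For every n ≥ 2, the chromatic number of the n-dimensional cyclohedron satisfies γ_n ≤ Σ_{i=2}^{⌈n/2⌉+1} (A_i + 1), where A_i are defined by the recursion: B₂ = 0; B_i = n+1+B_{i−1}−(i−1)A_{i−1} for 2 < i ≤ ⌈n/2⌉+1; A_i = ⌈(n+1+B_i)/i⌉ if i ≤ ⌈n/2⌉, A_{⌈n/2⌉+1} = 1 if n is even, and A_{⌈n/2⌉+1} = 0 if n is odd. -/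
set_option linter.unusedVariables false



/-- The pair `(A_i, B_i)` of the cyclohedron recursion (at argument `j`, the index is
`i = j + 2`): `B₂ = 0`; `B_i = n + 1 + B_{i-1} - (i-1)·A_{i-1}` for `2 < i ≤ ⌈n/2⌉ + 1`;
`A_i = ⌈(n + 1 + B_i)/i⌉` if `i ≤ ⌈n/2⌉`, `A_{⌈n/2⌉+1} = 1` if `n` is even and
`A_{⌈n/2⌉+1} = 0` if `n` is odd.  (Note `⌈n/2⌉ = (n+1)/2` in natural division.) -/
noncomputable def cycloAB (n : ℕ) : ℕ → ℤ × ℤ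
  | 0 =>
      (if 2 ≤ (n + 1) / 2 then ⌈((n : ℚ) + 1) / 2⌉
        else if n % 2 = 0 then 1 else 0, 0)
  | j + 1 =>
      let p := cycloAB n j
      let B : ℤ := (n : ℤ) + 1 + p.2 - ((j : ℤ) + 2) * p.1
      (if j + 3 ≤ (n + 1) / 2 then ⌈((n : ℚ) + 1 + (B : ℚ)) / ((j : ℚ) + 3)⌉
        else if n % 2 = 0 then 1 else 0, B)

/-- `A_i` from the cyclohedron recursion above, for `i ≥ 2`. -/
noncomputable def cycloA (n i : ℕ) : ℤ := (cycloAB n (i - 2)).1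

namespace Cyclo

/-- cyclic difference `(x - y) mod m` for `x, y < m`, without `%`. -/
def dmn (m x y : ℕ) : ℕ := if y ≤ x then x - y else x + m - y

/-- the arc with start `a` and length `ℓ` in `Z_{n+1}`. -/
def ArcSet (n a ℓ : ℕ) : Finset ℕ :=
  (Finset.range (n+1)).filter fun x => dmn (n+1) x a < ℓ

lemma mod2 {m z : ℕ} (h : z < 2*m) : z % m = if z < m then z else z - m := by
  split_ifs with h1
  · exact Nat.mod_eq_of_lt h1
  · rw [Nat.mod_eq_sub_mod (le_of_not_gt h1)]
    exact Nat.mod_eq_of_lt (by omega)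

lemma mod3 {m z : ℕ} (hm : 0 < m) (h : z < 3*m) :
    z % m = if z < m then z else if z < 2*m then z - m else z - 2*m := by
  split_ifs with h1 h2
  · exact Nat.mod_eq_of_lt h1
  · rw [Nat.mod_eq_sub_mod (le_of_not_gt h1)]; exact Nat.mod_eq_of_lt (by omega)
  · rw [Nat.mod_eq_sub_mod (le_of_not_gt h1), Nat.mod_eq_sub_mod (by omega)]
    have : z - m - m = z - 2*m := by omega
    rw [this]; exact Nat.mod_eq_of_lt (by omega)

lemma dmn_lt {m x y : ℕ} (hx : x < m) (hy : y < m) : dmn m x y < m := by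
  unfold dmn; split_ifs <;> omega

lemma dmn_self {m x : ℕ} : dmn m x x = 0 := by unfold dmn; simp

lemma dmn_pos {m x y : ℕ} (hx : x < m) (hy : y < m) (hne : x ≠ y) : 1 ≤ dmn m x y := by
  unfold dmn; split_ifs <;> omega

lemma dmn_antisymm {m x y : ℕ} (hx : x < m) (hy : y < m) (hne : x ≠ y) :
    dmn m x y + dmn m y x = m := by
  unfold dmn; split_ifs <;> omega

lemma dmn_inv {m x w u : ℕ} (hx : x < m) (hw : w < m) (h : dmn m x w = u) :
    x = (w + u) % m := by
  have hu : u < m := h ▸ dmn_lt hx hw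
  have h2 := mod2 (m := m) (z := w + u) (by omega)
  rw [h2]; unfold dmn at h; split_ifs at h <;> split_ifs <;> omega

lemma mem_CSeg {n a b x : ℕ} :
    x ∈ CSeg n a b ↔ ((a ≤ b ∧ a ≤ x ∧ x ≤ b) ∨ (b < a ∧ ((a ≤ x ∧ x ≤ n) ∨ x ≤ b))) := by
  unfold CSeg
  split_ifs with h <;> simp only [Finset.mem_Icc, Finset.mem_union] <;> omega

lemma mem_ArcSet {n a ℓ x : ℕ} :
    x ∈ ArcSet n a ℓ ↔ x < n+1 ∧ dmn (n+1) x a < ℓ := by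
  simp [ArcSet, Finset.mem_filter, Finset.mem_range]

lemma CSeg_eq_ArcSet {n a b : ℕ} (ha : a ≤ n) (hb : b ≤ n) :
    CSeg n a b = ArcSet n a (dmn (n+1) b a + 1) := by
  ext x
  rw [mem_CSeg, mem_ArcSet]
  unfold dmn
  split_ifs <;> omega

lemma card_ArcSet {n a ℓ : ℕ} (ha : a < n+1) (hℓ : ℓ ≤ n+1) :
    (ArcSet n a ℓ).card = ℓ := by
  have himg : ArcSet n a ℓ = (Finset.range ℓ).image (fun t => (a + t) % (n+1)) := by
    ext x
    simp only [mem_ArcSet, Finset.mem_image, Finset.mem_range]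
    constructor
    · rintro ⟨hx, hd⟩
      exact ⟨dmn (n+1) x a, hd, (dmn_inv hx ha rfl).symm⟩
    · rintro ⟨t, ht, rfl⟩
      have h2 := mod2 (m := n+1) (z := a + t) (by omega)
      constructor
      · exact Nat.mod_lt _ (by omega)
      · unfold dmn; split_ifs at h2 ⊢ <;> omega
  rw [himg, Finset.card_image_of_injOn, Finset.card_range]
  intro t ht t' ht' hEq
  simp only [Finset.coe_range, Set.mem_Iio] at ht ht'
  have hEq' : (a + t) % (n+1) = (a + t') % (n+1) := hEq
  have h2 := mod2 (m := n+1) (z := a + t) (by omega)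
  have h2' := mod2 (m := n+1) (z := a + t') (by omega)
  split_ifs at h2 h2' <;> omega


lemma mod_eval {m z : ℕ} (hm : 0 < m) (h : z < 2*m) :
    (z < m ∧ z % m = z) ∨ (m ≤ z ∧ z % m = z - m) := by
  have := mod2 (m := m) (z := z) h
  split_ifs at this
  · exact Or.inl ⟨by omega, this⟩
  · exact Or.inr ⟨by omega, this⟩

lemma dmn_eval (m x y : ℕ) :
    (y ≤ x ∧ dmn m x y = x - y) ∨ (x < y ∧ dmn m x y = x + m - y) := by
  unfold dmn; split_ifs with h
  · exact Or.inl ⟨h, rfl⟩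
  · exact Or.inr ⟨by omega, rfl⟩

lemma arc_proper {n a ℓ : ℕ} (ha : a < n+1) (h1 : 1 ≤ ℓ) (h2 : ℓ ≤ n) :
    IsCSeg n a ((a + ℓ - 1) % (n+1)) ∧ CSeg n a ((a + ℓ - 1) % (n+1)) = ArcSet n a ℓ := by
  have hb : (a + ℓ - 1) % (n+1) < n+1 := Nat.mod_lt _ (by omega)
  have hbm := mod_eval (m := n+1) (z := a + ℓ - 1) (by omega) (by omega)
  have hdb : dmn (n+1) ((a + ℓ - 1) % (n+1)) a = ℓ - 1 := by
    rcases dmn_eval (n+1) ((a + ℓ - 1) % (n+1)) a with ⟨h3, h4⟩ | ⟨h3, h4⟩ <;> omega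
  have hEq : CSeg n a ((a + ℓ - 1) % (n+1)) = ArcSet n a ℓ := by
    rw [CSeg_eq_ArcSet (by omega) (by omega), hdb]
    congr 1; omega
  refine ⟨⟨by omega, by omega, ?_⟩, hEq⟩
  rw [hEq, Finset.ssubset_iff_subset_ne]
  constructor
  · exact Finset.filter_subset _ _
  · intro hcontra
    have := congrArg Finset.card hcontra
    rw [card_ArcSet ha (by omega), Finset.card_range] at this
    omega

lemma ArcSet_start {n a ℓ : ℕ} (ha : a < n+1) (h1 : 1 ≤ ℓ) (h2 : ℓ ≤ n) :
    (ArcSet n a ℓ).filter (fun x => (x + n) % (n+1) ∉ ArcSet n a ℓ) = {a} := by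
  ext x
  simp only [Finset.mem_filter, Finset.mem_singleton, mem_ArcSet]
  constructor
  · rintro ⟨⟨hx, hd⟩, hpred⟩
    by_contra hne
    apply hpred
    have hpm := mod_eval (m := n+1) (z := x + n) (by omega) (by omega)
    have hdx : 1 ≤ dmn (n+1) x a := dmn_pos hx ha hne
    have hppos : (x + n) % (n+1) < n + 1 := Nat.mod_lt _ (by omega)
    refine ⟨hppos, ?_⟩
    rcases dmn_eval (n+1) x a with ⟨h3, h4⟩ | ⟨h3, h4⟩ <;>
      rcases dmn_eval (n+1) ((x + n) % (n+1)) a with ⟨h5, h6⟩ | ⟨h5, h6⟩ <;> omega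
  · intro hxeq
    refine ⟨⟨by omega, ?_⟩, ?_⟩
    · rcases dmn_eval (n+1) x a with ⟨h3, h4⟩ | ⟨h3, h4⟩ <;> omega
    · rintro ⟨hx2, hd⟩
      have hpm := mod_eval (m := n+1) (z := x + n) (by omega) (by omega)
      rcases dmn_eval (n+1) ((x + n) % (n+1)) a with ⟨h3, h4⟩ | ⟨h3, h4⟩ <;> omega

/-- canonical start of a segment set -/
def startOf (n : ℕ) (X : Finset ℕ) : ℕ :=
  (X.filter (fun x => (x + n) % (n+1) ∉ X)).sum id

lemma startOf_ArcSet {n a ℓ : ℕ} (ha : a < n+1) (h1 : 1 ≤ ℓ) (h2 : ℓ ≤ n) :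
    startOf n (ArcSet n a ℓ) = a := by
  unfold startOf
  rw [ArcSet_start ha h1 h2, Finset.sum_singleton, id]

lemma decompose {n : ℕ} {X : Finset ℕ} (h : IsCSegSet n X) :
    ∃ a ℓ : ℕ, a < n+1 ∧ 1 ≤ ℓ ∧ ℓ ≤ n ∧ X = ArcSet n a ℓ := by
  obtain ⟨a, b, ⟨ha, hb, hss⟩, hX⟩ := h
  have hdlt := dmn_lt (m := n+1) (x := b) (y := a) (by omega) (by omega)
  refine ⟨a, dmn (n+1) b a + 1, by omega, by omega, ?_, ?_⟩
  · have hcard : X.card = dmn (n+1) b a + 1 := by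
      rw [hX, CSeg_eq_ArcSet ha hb, card_ArcSet (by omega) (by omega)]
    have hlt : X.card < n+1 := by
      rw [hX]
      have := Finset.card_lt_card hss
      rwa [Finset.card_range] at this
    omega
  · rw [hX, CSeg_eq_ArcSet ha hb]

/-- Master separation lemma. -/
lemma sep_master {n a ℓ c ℓ' : ℕ} (ha : a < n+1) (hc : c < n+1)
    (h1 : 1 ≤ ℓ) (hll : ℓ ≤ ℓ') (hn' : ℓ' ≤ n)
    (hd1 : 1 ≤ dmn (n+1) c a) (hd2 : dmn (n+1) c a ≤ ℓ)
    (hside : dmn (n+1) c a + ℓ' < (n+1) + ℓ) :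
    CSegSeparated n (ArcSet n a ℓ) (ArcSet n c ℓ') := by
  have hn : ℓ ≤ n := le_trans hll hn'
  obtain ⟨hC1, hE1⟩ := arc_proper ha h1 hn
  obtain ⟨hC2, hE2⟩ := arc_proper hc (by omega) hn'
  have hne : a ≠ c := by
    intro hEq; rw [hEq, dmn_self] at hd1; omega
  refine ⟨a, (a + ℓ - 1) % (n+1), c, (c + ℓ' - 1) % (n+1), hC1, hC2, hE1.symm, hE2.symm, ?_⟩
  by_cases hfol : dmn (n+1) c a = ℓ
  · -- follows : (b+1) % m = c
    left; right
    show ((a + ℓ - 1) % (n+1) + 1) % (n+1) = c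
    have hbm := mod_eval (m := n+1) (z := a + ℓ - 1) (by omega) (by omega)
    have hres := mod_eval (m := n+1) (z := (a + ℓ - 1) % (n+1) + 1) (by omega)
      (by rcases hbm with ⟨h3, h4⟩ | ⟨h3, h4⟩ <;> omega)
    rcases dmn_eval (n+1) c a with ⟨h3, h4⟩ | ⟨h3, h4⟩ <;>
      rcases hres with ⟨h5, h6⟩ | ⟨h5, h6⟩ <;> omega
  · -- overlap
    have hdlt : dmn (n+1) c a < ℓ := by omega
    have hanti := dmn_antisymm (m := n+1) (x := a) (y := c) ha hc hne
    -- witness w2 for fact2 : reaches beyond the end of X_a, inside X_c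
    set w2 : ℕ := if a + ℓ < n+1 then a + ℓ else a + ℓ - (n+1) with hw2def
    have hw2 : (a + ℓ < n+1 ∧ w2 = a + ℓ) ∨ (n+1 ≤ a + ℓ ∧ w2 = a + ℓ - (n+1)) := by
      rw [hw2def]; split_ifs with h
      · exact Or.inl ⟨h, rfl⟩
      · exact Or.inr ⟨by omega, rfl⟩
    have hw2lt : w2 < n+1 := by rcases hw2 with ⟨h3, h4⟩ | ⟨h3, h4⟩ <;> omega
    have fact2 : ¬ ArcSet n c ℓ' ⊆ ArcSet n a ℓ := by
      intro hsub
      have hin : w2 ∈ ArcSet n c ℓ' := by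
        rw [mem_ArcSet]
        refine ⟨hw2lt, ?_⟩
        rcases dmn_eval (n+1) w2 c with ⟨h3, h4⟩ | ⟨h3, h4⟩ <;>
          rcases dmn_eval (n+1) c a with ⟨h5, h6⟩ | ⟨h5, h6⟩ <;> omega
      have hout := (mem_ArcSet.mp (hsub hin)).2
      rcases dmn_eval (n+1) w2 a with ⟨h3, h4⟩ | ⟨h3, h4⟩ <;> omega
    have fact3 : ¬ ArcSet n a ℓ ⊆ ArcSet n c ℓ' := by
      intro hsub
      by_cases hwrap : dmn (n+1) a c < ℓ'
      · -- X_c wraps past a ; witness (c + ℓ') reduced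
        set w3 : ℕ := if c + ℓ' < n+1 then c + ℓ' else c + ℓ' - (n+1) with hw3def
        have hw3 : (c + ℓ' < n+1 ∧ w3 = c + ℓ') ∨ (n+1 ≤ c + ℓ' ∧ w3 = c + ℓ' - (n+1)) := by
          rw [hw3def]; split_ifs with h
          · exact Or.inl ⟨h, rfl⟩
          · exact Or.inr ⟨by omega, rfl⟩
        have hw3lt : w3 < n+1 := by rcases hw3 with ⟨h3, h4⟩ | ⟨h3, h4⟩ <;> omega
        have hin : w3 ∈ ArcSet n a ℓ := by
          rw [mem_ArcSet]
          refine ⟨hw3lt, ?_⟩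
          rcases dmn_eval (n+1) w3 a with ⟨h3, h4⟩ | ⟨h3, h4⟩ <;>
            rcases dmn_eval (n+1) c a with ⟨h5, h6⟩ | ⟨h5, h6⟩ <;>
            rcases dmn_eval (n+1) a c with ⟨h7, h8⟩ | ⟨h7, h8⟩ <;> omega
        have hout := (mem_ArcSet.mp (hsub hin)).2
        rcases dmn_eval (n+1) w3 c with ⟨h3, h4⟩ | ⟨h3, h4⟩ <;> omega
      · have hin : a ∈ ArcSet n a ℓ := mem_ArcSet.mpr ⟨ha, by rw [dmn_self]; omega⟩
        have hout := (mem_ArcSet.mp (hsub hin)).2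
        omega
    have hcmem : c ∈ CSeg n a ((a + ℓ - 1) % (n+1)) ∩ CSeg n c ((c + ℓ' - 1) % (n+1)) := by
      rw [hE1, hE2, Finset.mem_inter, mem_ArcSet, mem_ArcSet, dmn_self]
      exact ⟨⟨hc, by omega⟩, hc, by omega⟩
    rcases lt_trichotomy a c with hlt | hEq | hgt
    · left; left
      exact ⟨hlt, ⟨c, hcmem⟩, by rw [hE1, hE2]; exact fact3, by rw [hE1, hE2]; exact fact2⟩
    · exact absurd hEq hne
    · right; left
      refine ⟨hgt, ⟨c, ?_⟩, by rw [hE1, hE2]; exact fact2, by rw [hE1, hE2]; exact fact3⟩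
      rw [Finset.inter_comm] at hcmem
      exact hcmem

/-- rotation separation: same length, length at least half the circle -/
lemma sep_rot {n a c ℓ : ℕ} (ha : a < n+1) (hc : c < n+1) (hne : a ≠ c)
    (h1 : 1 ≤ ℓ) (hn : ℓ ≤ n) (hhalf : n + 1 ≤ 2*ℓ + 1) :
    CSegSeparated n (ArcSet n a ℓ) (ArcSet n c ℓ) := by
  have hanti := dmn_antisymm (m := n+1) (x := c) (y := a) hc ha hne.symm
  by_cases hd : dmn (n+1) c a ≤ ℓ
  · exact sep_master ha hc h1 le_rfl hn (dmn_pos hc ha hne.symm) hd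
      (by have := dmn_lt hc ha; omega)
  · apply sep_symm
    exact sep_master hc ha h1 le_rfl hn (dmn_pos ha hc hne) (by omega)
      (by have := dmn_lt ha hc; omega)


/-! ### The recursion, in ℕ.  `abN n j = (A_{j+2}, r_{j+2})` where `r_i = n+1+B_i`. -/

def abN (n : ℕ) : ℕ → ℕ × ℕ
  | 0 => (if 2 ≤ (n+1)/2 then (n+2)/2 else if n % 2 = 0 then 1 else 0, n+1)
  | j+1 =>
      let p := abN n j
      let r' := (n+1) - ((j+2) * p.1 - p.2)
      (if j+3 ≤ (n+1)/2 then (r' + (j+2))/(j+3) else if n % 2 = 0 then 1 else 0, r')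

/-- `A i` for `i ≥ 2` -/
def AN (n i : ℕ) : ℕ := (abN n (i-2)).1
/-- `r i = n+1+B_i` for `i ≥ 2` -/
def rN (n i : ℕ) : ℕ := (abN n (i-2)).2
/-- slack of stage `i` -/
def sN (n i : ℕ) : ℕ := i * AN n i - rN n i

/-- start position of stage `i`'s block -/
def pNaux (n : ℕ) : ℕ → ℕ
  | 0 => 0
  | j+1 => (pNaux n j + (j+2) * (abN n j).1) % (n+1)

def pN (n i : ℕ) : ℕ := pNaux n (i-2)

/-- number of stage colours -/
def SN (n : ℕ) : ℕ := ∑ j ∈ Finset.range ((n+1)/2 - 1), (abN n j).1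

/-- first colour of stage `i` -/
def baseN (n i : ℕ) : ℕ := 1 + ∑ j ∈ Finset.range (i-2), (abN n j).1

/-- total number of colours -/
def MN (n : ℕ) : ℕ := SN n + (n - (n+1)/2) + 1

/-- The colouring on (start, length) parameters. -/
def g (n a ℓ : ℕ) : ℕ :=
  if (n+1)/2 + 1 ≤ ℓ then SN n + (ℓ - (n+1)/2)
  else if ℓ + 1 ≤ (n+1)/2 ∧ dmn (n+1) a (pN n (ℓ+1)) < rN n (ℓ+1) then
    baseN n (ℓ+1) + (dmn (n+1) a (pN n (ℓ+1))) / (ℓ+1)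
  else if 2 ≤ ℓ ∧ dmn (n+1) a ((pN n ℓ + rN n ℓ) % (n+1)) < sN n ℓ then
    baseN n ℓ + (rN n ℓ + dmn (n+1) a ((pN n ℓ + rN n ℓ) % (n+1))) / ℓ
  else MN n

/-- the colouring on segment sets -/
def F (n : ℕ) (X : Finset ℕ) : ℕ := g n (startOf n X) X.card

lemma ceil_div_facts {r i : ℕ} (hi : 0 < i) :
    r ≤ i * ((r + i - 1) / i) ∧ i * ((r + i - 1) / i) ≤ r + i - 1 := by
  constructor
  · have h := (Nat.div_lt_iff_lt_mul hi).mp (Nat.lt_succ_self ((r + i - 1) / i))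
    have h2 : ((r + i - 1) / i).succ * i = i * ((r + i - 1) / i) + i := by
      rw [Nat.succ_mul, Nat.mul_comm]
    omega
  · have h := Nat.div_mul_le_self (r + i - 1) i
    have h2 : ((r + i - 1) / i) * i = i * ((r + i - 1) / i) := Nat.mul_comm _ _
    omega

/-- invariants of the recursion, valid for stages `2 ≤ i ≤ K`. -/
lemma invariants (n : ℕ) (hn : 2 ≤ n) :
    ∀ j : ℕ, j + 2 ≤ (n+1)/2 →
      1 ≤ (abN n j).2 ∧ (abN n j).2 ≤ n+1 ∧
      (abN n j).2 ≤ (j+2) * (abN n j).1 ∧ (j+2) * (abN n j).1 ≤ (abN n j).2 + (j+1) := by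
  intro j
  induction j with
  | zero =>
      intro hj
      simp only [abN]
      rw [if_pos hj]
      omega
  | succ j ih =>
      intro hj
      obtain ⟨ih1, ih2, ih3, ih4⟩ := ih (by omega)
      have hj3 : j + 1 + 2 = j + 3 := by omega
      rw [hj3]
      show _ ∧ _ ∧ _ ∧ _
      rw [abN]
      simp only
      rw [if_pos hj]
      set r' := (n+1) - ((j+2) * (abN n j).1 - (abN n j).2) with hr'
      have hK : 2 * ((n+1)/2) ≤ n + 1 := by omega
      have hr'1 : 1 ≤ r' := by omega
      have hr'2 : r' ≤ n+1 := by omega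
      have hc := ceil_div_facts (r := r') (i := j+3) (by omega)
      have e : r' + (j+3) - 1 = r' + (j+2) := by omega
      rw [e] at hc
      exact ⟨hr'1, hr'2, by omega, by omega⟩


lemma mod_eval3 {m z : ℕ} (hm : 0 < m) (h : z < 3*m) :
    (z < m ∧ z % m = z) ∨ (m ≤ z ∧ z < 2*m ∧ z % m = z - m) ∨ (2*m ≤ z ∧ z % m = z - 2*m) := by
  have := mod3 hm h
  split_ifs at this with h1 h2
  · exact Or.inl ⟨h1, this⟩
  · exact Or.inr (Or.inl ⟨by omega, h2, this⟩)
  · exact Or.inr (Or.inr ⟨by omega, this⟩)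

/-- stage facts in terms of `AN`, `rN` -/
lemma stage_facts {n : ℕ} (hn : 2 ≤ n) {i : ℕ} (h2 : 2 ≤ i) (hiK : i ≤ (n+1)/2) :
    1 ≤ rN n i ∧ rN n i ≤ n+1 ∧ rN n i ≤ i * AN n i ∧ i * AN n i ≤ rN n i + (i-1) := by
  obtain ⟨h3, h4, h5, h6⟩ := invariants n hn (i-2) (by omega)
  rw [show i - 2 + 2 = i from by omega] at h5 h6
  unfold AN rN
  exact ⟨h3, h4, h5, by omega⟩

lemma pNaux_lt {n : ℕ} : ∀ j, pNaux n j < n+1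
  | 0 => Nat.succ_pos n
  | j+1 => Nat.mod_lt _ (Nat.succ_pos n)

lemma pN_lt {n i : ℕ} : pN n i < n+1 := pNaux_lt _

lemma pN_succ (n k : ℕ) :
    pN n (k+3) = (pN n (k+2) + (k+2) * AN n (k+2)) % (n+1) := rfl

lemma rN_succ (n k : ℕ) :
    rN n (k+3) = (n+1) - ((k+2) * AN n (k+2) - rN n (k+2)) := rfl

/-- If an arc of length `2 ≤ ℓ ≤ K-1` is not a "short" of stage `ℓ+1`,
then it is a "slack" of stage `ℓ`. -/
lemma slack_of_not_short {n a ℓ : ℕ} (hn : 2 ≤ n) (h2 : 2 ≤ ℓ) (hK : ℓ + 1 ≤ (n+1)/2)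
    (ha : a < n+1) (hns : ¬ dmn (n+1) a (pN n (ℓ+1)) < rN n (ℓ+1)) :
    dmn (n+1) a ((pN n ℓ + rN n ℓ) % (n+1)) < sN n ℓ := by
  obtain ⟨k, rfl⟩ : ∃ k, ℓ = k+2 := ⟨ℓ-2, by omega⟩
  obtain ⟨hr1, hr2, hr3, hr4⟩ := stage_facts hn (i := k+2) (by omega) (by omega)
  have hK2 : 2 * ((n+1)/2) ≤ n + 1 := by omega
  have hiA : (k+2) * AN n (k+2) = rN n (k+2) + sN n (k+2) := by unfold sN; omega
  have hsS : sN n (k+2) ≤ k+1 := by unfold sN; omega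
  have hp : pN n (k+2) < n+1 := pN_lt
  have hpsucc := pN_succ n k
  have hrsucc := rN_succ n k
  rw [hiA] at hpsucc
  rw [show pN n (k+2) + (rN n (k+2) + sN n (k+2)) = pN n (k+2) + rN n (k+2) + sN n (k+2)
      from by omega] at hpsucc
  rw [hpsucc, hrsucc] at hns
  have hm3 := mod_eval3 (m := n+1) (z := pN n (k+2) + rN n (k+2) + sN n (k+2))
      (by omega) (by omega)
  have hm2 := mod_eval (m := n+1) (z := pN n (k+2) + rN n (k+2)) (by omega) (by omega)
  rcases dmn_eval (n+1) a ((pN n (k+2) + rN n (k+2) + sN n (k+2)) % (n+1)) with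
      ⟨h5, h6⟩ | ⟨h5, h6⟩ <;>
    rcases dmn_eval (n+1) a ((pN n (k+2) + rN n (k+2)) % (n+1)) with ⟨h7, h8⟩ | ⟨h7, h8⟩ <;>
    rcases hm3 with ⟨h9, h10⟩ | ⟨h9, h9', h10⟩ | ⟨h9, h10⟩ <;>
    rcases hm2 with ⟨h11, h12⟩ | ⟨h11, h12⟩ <;>
    omega

/-- classification of the colouring -/
lemma g_cases {n a ℓ : ℕ} (hn : 2 ≤ n) (ha : a < n+1) (hl1 : 1 ≤ ℓ) (hl2 : ℓ ≤ n) :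
    ((n+1)/2 + 1 ≤ ℓ ∧ g n a ℓ = SN n + (ℓ - (n+1)/2)) ∨
    (∃ i v, 2 ≤ i ∧ i ≤ (n+1)/2 ∧ v < i * AN n i ∧ a = (pN n i + v) % (n+1) ∧
      ℓ = (if v < rN n i then i-1 else i) ∧ g n a ℓ = baseN n i + v / i) ∨
    (ℓ = (n+1)/2 ∧ g n a ℓ = MN n) := by
  unfold g
  split_ifs with h1 h2 h3
  · exact Or.inl ⟨h1, rfl⟩
  · refine Or.inr (Or.inl ⟨ℓ+1, dmn (n+1) a (pN n (ℓ+1)), by omega, h2.1, ?_, ?_, ?_, rfl⟩)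
    · obtain ⟨hr1, hr2, hr3, hr4⟩ := stage_facts hn (i := ℓ+1) (by omega) h2.1
      omega
    · exact dmn_inv ha pN_lt rfl
    · rw [if_pos h2.2]; omega
  · obtain ⟨h3a, h3b⟩ := h3
    refine Or.inr (Or.inl ⟨ℓ, rN n ℓ + dmn (n+1) a ((pN n ℓ + rN n ℓ) % (n+1)),
      h3a, by omega, ?_, ?_, ?_, rfl⟩)
    · obtain ⟨hr1, hr2, hr3, hr4⟩ := stage_facts hn (i := ℓ) h3a (by omega)
      unfold sN at h3b
      omega
    · have := dmn_inv ha (Nat.mod_lt (pN n ℓ + rN n ℓ) (Nat.succ_pos n)) rfl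
      rw [Nat.mod_add_mod, Nat.add_assoc] at this
      exact this
    · rw [if_neg (by omega)]
  · right; right
    refine ⟨?_, rfl⟩
    by_contra hne
    have hlK : ℓ < (n+1)/2 := by omega
    rcases Nat.lt_or_ge ℓ 2 with hl | hl
    · -- ℓ = 1 : always a short of stage 2
      have : ℓ = 1 := by omega
      subst this
      apply h2
      refine ⟨by omega, ?_⟩
      have : rN n 2 = n+1 := rfl
      rw [this]
      exact dmn_lt ha pN_lt
    · exact h3 ⟨hl, slack_of_not_short hn hl (by omega) ha (by tauto)⟩

lemma baseN_succ {n i : ℕ} (h2 : 2 ≤ i) : baseN n (i+1) = baseN n i + AN n i := by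
  unfold baseN
  rw [show i + 1 - 2 = (i-2) + 1 from by omega, Finset.sum_range_succ]
  unfold AN
  omega

lemma baseN_mono {n i i' : ℕ} (h : i ≤ i') : baseN n i ≤ baseN n i' := by
  unfold baseN
  have h3 : (∑ j ∈ Finset.range (i-2), (abN n j).1) ≤ ∑ j ∈ Finset.range (i'-2), (abN n j).1 :=
    Finset.sum_le_sum_of_subset (Finset.range_subset_range.mpr (show i - 2 ≤ i' - 2 from by omega))
  omega

lemma baseN_K (n : ℕ) : baseN n ((n+1)/2 + 1) = 1 + SN n := by
  unfold baseN SN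
  rfl

lemma stage_color_le {n i j : ℕ} (h2 : 2 ≤ i) (hiK : i ≤ (n+1)/2) (hj : j < AN n i) :
    baseN n i + j < baseN n (i+1) ∧ baseN n i + j ≤ SN n := by
  have hs := baseN_succ (n := n) h2
  have hm := baseN_mono (n := n) (show i + 1 ≤ (n+1)/2 + 1 from by omega)
  have hK := baseN_K n
  omega

lemma stage_eq {n i i' j j' : ℕ} (h2 : 2 ≤ i) (hiK : i ≤ (n+1)/2)
    (h2' : 2 ≤ i') (hiK' : i' ≤ (n+1)/2) (hj : j < AN n i) (hj' : j' < AN n i')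
    (hEq : baseN n i + j = baseN n i' + j') : i = i' ∧ j = j' := by
  rcases lt_trichotomy i i' with h | h | h
  · exfalso
    have hs := (stage_color_le h2 hiK hj).1
    have hm := baseN_mono (n := n) (show i + 1 ≤ i' from by omega)
    omega
  · exact ⟨h, by subst h; omega⟩
  · exfalso
    have hs := (stage_color_le h2' hiK' hj').1
    have hm := baseN_mono (n := n) (show i' + 1 ≤ i from by omega)
    omega

/-- two distinct members of a stage class, `v < v'` -/
lemma stage_sep_lt {n i v v' a c ℓ ℓ' : ℕ} (hn : 2 ≤ n) (h2 : 2 ≤ i) (hiK : i ≤ (n+1)/2)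
    (hv : v < i * AN n i) (hv' : v' < i * AN n i) (hj : v / i = v' / i) (hvv : v < v')
    (hadef : a = (pN n i + v) % (n+1)) (hcdef : c = (pN n i + v') % (n+1))
    (hldef : ℓ = if v < rN n i then i-1 else i) (hl'def : ℓ' = if v' < rN n i then i-1 else i) :
    CSegSeparated n (ArcSet n a ℓ) (ArcSet n c ℓ') := by
  obtain ⟨hr1, hr2, hr3, hr4⟩ := stage_facts hn h2 hiK
  have hK2 : 2 * ((n+1)/2) ≤ n + 1 := by omega
  have hKn : (n+1)/2 ≤ n := by omega
  have hp : pN n i < n+1 := pN_lt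
  -- v' - v < i
  have hd1 := Nat.div_add_mod v i
  have hd2 := Nat.div_add_mod v' i
  have hm1 : v % i < i := Nat.mod_lt _ (by omega)
  have hm2 : v' % i < i := Nat.mod_lt _ (by omega)
  rw [hj] at hd1
  have hdlt : v' - v < i := by omega
  -- cyclic difference is v' - v
  have hma := mod_eval3 (m := n+1) (z := pN n i + v) (by omega) (by omega)
  have hmc := mod_eval3 (m := n+1) (z := pN n i + v') (by omega) (by omega)
  have ha : a < n+1 := by rw [hadef]; exact Nat.mod_lt _ (by omega)
  have hc : c < n+1 := by rw [hcdef]; exact Nat.mod_lt _ (by omega)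
  have hdmn : dmn (n+1) c a = v' - v := by
    rcases dmn_eval (n+1) c a with ⟨h5, h6⟩ | ⟨h5, h6⟩ <;>
      rcases hma with ⟨h7, h8⟩ | ⟨h7, h7', h8⟩ | ⟨h7, h8⟩ <;>
      rcases hmc with ⟨h9, h10⟩ | ⟨h9, h9', h10⟩ | ⟨h9, h10⟩ <;>
      omega
  have hll : ℓ ≤ ℓ' ∧ i - 1 ≤ ℓ ∧ ℓ' ≤ i ∧ 1 ≤ ℓ := by
    rw [hldef, hl'def]; split_ifs <;> omega
  apply sep_master ha hc (by omega) (by omega) (by omega) (by omega) (by omega) (by omega)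

lemma stage_sep {n i v v' a c ℓ ℓ' : ℕ} (hn : 2 ≤ n) (h2 : 2 ≤ i) (hiK : i ≤ (n+1)/2)
    (hv : v < i * AN n i) (hv' : v' < i * AN n i) (hj : v / i = v' / i) (hvv : v ≠ v')
    (hadef : a = (pN n i + v) % (n+1)) (hcdef : c = (pN n i + v') % (n+1))
    (hldef : ℓ = if v < rN n i then i-1 else i) (hl'def : ℓ' = if v' < rN n i then i-1 else i) :
    CSegSeparated n (ArcSet n a ℓ) (ArcSet n c ℓ') := by
  rcases Nat.lt_or_ge v v' with h | h
  · exact stage_sep_lt hn h2 hiK hv hv' hj h hadef hcdef hldef hl'def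
  · exact sep_symm (stage_sep_lt hn h2 hiK hv' hv hj.symm (by omega)
      hcdef hadef hl'def hldef)

/-- main separation property of the colouring `g` -/
lemma g_sep {n a ℓ c ℓ' : ℕ} (hn : 2 ≤ n) (ha : a < n+1) (hc : c < n+1)
    (hl1 : 1 ≤ ℓ) (hl2 : ℓ ≤ n) (hl1' : 1 ≤ ℓ') (hl2' : ℓ' ≤ n)
    (hne : ¬ (a = c ∧ ℓ = ℓ')) (hg : g n a ℓ = g n c ℓ') :
    CSegSeparated n (ArcSet n a ℓ) (ArcSet n c ℓ') := by
  have hK2 : 2 * ((n+1)/2) ≤ n + 1 := by omega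
  have hK2' : n ≤ 2 * ((n+1)/2) := by omega
  have hKn : (n+1)/2 ≤ n - 1 := by omega
  rcases g_cases hn ha hl1 hl2 with ⟨hd, hgv⟩ | ⟨i, v, h2, hiK, hv, hadef, hldef, hgv⟩ |
      ⟨hd, hgv⟩ <;>
    rcases g_cases hn hc hl1' hl2' with ⟨hd', hgv'⟩ | ⟨i', v', h2', hiK', hv', hcdef, hl'def,
      hgv'⟩ | ⟨hd', hgv'⟩
  · -- dedicated / dedicated
    have hll : ℓ = ℓ' := by omega
    subst hll
    have hac : a ≠ c := fun h => hne ⟨h, rfl⟩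
    exact sep_rot ha hc hac hl1 hl2 (by omega)
  · -- dedicated / stage : impossible
    exfalso
    have hjlt : v' / i' < AN n i' := (Nat.div_lt_iff_lt_mul (by omega)).mpr
      (by rw [Nat.mul_comm] at hv'; omega)
    have := (stage_color_le h2' hiK' hjlt).2
    omega
  · -- dedicated / mid : impossible
    exfalso; unfold MN at hgv'; omega
  · -- stage / dedicated : impossible
    exfalso
    have hjlt : v / i < AN n i := (Nat.div_lt_iff_lt_mul (by omega)).mpr
      (by rw [Nat.mul_comm] at hv; omega)
    have := (stage_color_le h2 hiK hjlt).2
    omega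
  · -- stage / stage
    have hjlt : v / i < AN n i := (Nat.div_lt_iff_lt_mul (by omega)).mpr
      (by rw [Nat.mul_comm] at hv; omega)
    have hjlt' : v' / i' < AN n i' := (Nat.div_lt_iff_lt_mul (by omega)).mpr
      (by rw [Nat.mul_comm] at hv'; omega)
    obtain ⟨hii, hjj⟩ := stage_eq h2 hiK h2' hiK' hjlt hjlt' (by omega)
    subst hii
    have hvv : v ≠ v' := by
      intro hEq
      subst hEq
      exact hne ⟨by rw [hadef, hcdef], by rw [hldef, hl'def]⟩
    exact stage_sep hn h2 hiK hv hv' hjj hvv hadef hcdef hldef hl'def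
  · -- stage / mid : impossible
    exfalso
    have hjlt : v / i < AN n i := (Nat.div_lt_iff_lt_mul (by omega)).mpr
      (by rw [Nat.mul_comm] at hv; omega)
    have := (stage_color_le h2 hiK hjlt).2
    unfold MN at hgv'
    omega
  · -- mid / dedicated : impossible
    exfalso; unfold MN at hgv; omega
  · -- mid / stage : impossible
    exfalso
    have hjlt : v' / i' < AN n i' := (Nat.div_lt_iff_lt_mul (by omega)).mpr
      (by rw [Nat.mul_comm] at hv'; omega)
    have := (stage_color_le h2' hiK' hjlt).2
    unfold MN at hgv
    omega
  · -- mid / mid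
    have hll : ℓ = ℓ' := by omega
    subst hll
    have hac : a ≠ c := fun h => hne ⟨h, rfl⟩
    exact sep_rot ha hc hac hl1 hl2 (by omega)

/-- range of the colouring -/
lemma g_range {n a ℓ : ℕ} (hn : 2 ≤ n) (ha : a < n+1) (hl1 : 1 ≤ ℓ) (hl2 : ℓ ≤ n) :
    1 ≤ g n a ℓ ∧ g n a ℓ ≤ MN n := by
  have hK2 : 2 * ((n+1)/2) ≤ n + 1 := by omega
  have hKn : (n+1)/2 ≤ n - 1 := by omega
  rcases g_cases hn ha hl1 hl2 with ⟨hd, hgv⟩ | ⟨i, v, h2, hiK, hv, hadef, hldef, hgv⟩ |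
      ⟨hd, hgv⟩
  · unfold MN; omega
  · obtain ⟨j, hjdef⟩ : ∃ j, v / i = j := ⟨_, rfl⟩
    have hjlt : v / i < AN n i := (Nat.div_lt_iff_lt_mul (by omega)).mpr
      (by rw [Nat.mul_comm] at hv; omega)
    rw [hjdef] at hgv hjlt
    have hsle := (stage_color_le h2 hiK hjlt).2
    have hb : 1 ≤ baseN n i := by unfold baseN; omega
    have hM : SN n < MN n := by unfold MN; omega
    omega
  · have hM : 1 ≤ MN n := by unfold MN; omega
    omega


/-- The colouring `F` is a proper colouring with `MN n` colours. -/
theorem F_proper (n : ℕ) (hn : 2 ≤ n) : IsProperColouringCyclo n (MN n) (F n) := by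
  constructor
  · intro X hX
    obtain ⟨a, ℓ, ha, h1, h2, rfl⟩ := decompose hX
    unfold F
    rw [startOf_ArcSet ha h1 h2, card_ArcSet ha (by omega)]
    have := g_range (a := a) (ℓ := ℓ) hn ha h1 h2
    rw [Finset.mem_Icc]
    omega
  · intro X Y hX hY hXY hF
    obtain ⟨a, ℓ, ha, h1, h2, rfl⟩ := decompose hX
    obtain ⟨c, ℓ', hc, h1', h2', rfl⟩ := decompose hY
    unfold F at hF
    rw [startOf_ArcSet ha h1 h2, card_ArcSet ha (by omega),
      startOf_ArcSet hc h1' h2', card_ArcSet hc (by omega)] at hF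
    apply g_sep hn ha hc h1 h2 h1' h2' ?_ hF
    rintro ⟨rfl, rfl⟩
    exact hXY rfl

/-- ceiling of a ℕ-division -/
lemma ceil_nat_div (r q : ℕ) (hq : 0 < q) :
    ⌈(r : ℚ) / (q : ℚ)⌉ = (((r + q - 1) / q : ℕ) : ℤ) := by
  obtain ⟨hD1, hD2⟩ := ceil_div_facts (r := r) (i := q) hq
  obtain ⟨D, hD⟩ : ∃ D, (r + q - 1) / q = D := ⟨_, rfl⟩
  rw [hD] at hD1 hD2 ⊢
  have hq0 : (0:ℚ) < (q:ℚ) := by exact_mod_cast hq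
  have h1 : (r:ℚ) ≤ (q:ℚ) * (D:ℚ) := by exact_mod_cast hD1
  have h2 : (q:ℚ) * (D:ℚ) + 1 ≤ (r:ℚ) + (q:ℚ) := by
    have h3 : q * D + 1 ≤ r + q := by omega
    exact_mod_cast h3
  apply le_antisymm
  · rw [Int.ceil_le]
    push_cast
    rw [div_le_iff₀ hq0]
    nlinarith
  · have hlt : (D:ℤ) - 1 < ⌈(r : ℚ) / (q : ℚ)⌉ := by
      rw [Int.lt_ceil]
      push_cast
      rw [lt_div_iff₀ hq0]
      nlinarith
    omega

/-- matching the ℕ recursion with the given ℤ/ℚ recursion -/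
lemma abN_eq (n : ℕ) (hn : 2 ≤ n) :
    ∀ j, j + 2 ≤ (n+1)/2 + 1 →
      cycloAB n j = (((abN n j).1 : ℤ), ((abN n j).2 : ℤ) - ((n:ℤ)+1)) := by
  intro j
  induction j with
  | zero =>
      intro hj
      refine Prod.ext ?_ ?_
      · show (if 2 ≤ (n + 1) / 2 then (⌈((n : ℚ) + 1) / 2⌉ : ℤ)
            else if n % 2 = 0 then 1 else 0)
          = (((if 2 ≤ (n+1)/2 then (n+2)/2 else if n % 2 = 0 then 1 else 0 : ℕ)) : ℤ)
        by_cases hb : 2 ≤ (n+1)/2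
        · rw [if_pos hb, if_pos hb]
          have hc := ceil_nat_div (n+1) 2 (by omega)
          rw [show ((n + 1 : ℕ) : ℚ) = (n : ℚ) + 1 from by push_cast; ring,
            show ((2 : ℕ) : ℚ) = (2 : ℚ) from by norm_num] at hc
          rw [hc]
          congr 2
        · rw [if_neg hb, if_neg hb]
          by_cases hp : n % 2 = 0
          · rw [if_pos hp, if_pos hp]; norm_num
          · rw [if_neg hp, if_neg hp]; norm_num
      · show (0 : ℤ) = (((n+1 : ℕ)) : ℤ) - ((n:ℤ)+1)
        push_cast
        ring
  | succ j ih =>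
      intro hj
      have IH := ih (by omega)
      have IH1 : (cycloAB n j).1 = ((abN n j).1 : ℤ) := by rw [IH]
      have IH2 : (cycloAB n j).2 = ((abN n j).2 : ℤ) - ((n:ℤ)+1) := by rw [IH]
      obtain ⟨h3, h4, h5, h6⟩ := invariants n hn j (by omega)
      have hmul : (((j+2) * (abN n j).1 : ℕ) : ℤ) = ((j:ℤ)+2) * ((abN n j).1 : ℤ) := by
        push_cast; ring
      have hBval : (n : ℤ) + 1 + (cycloAB n j).2 - ((j:ℤ)+2) * (cycloAB n j).1
          = (((n+1) - ((j+2) * (abN n j).1 - (abN n j).2) : ℕ) : ℤ) - ((n:ℤ)+1) := by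
        rw [IH1, IH2]
        omega
      have c1 : cycloAB n (j+1) =
          (if j + 3 ≤ (n + 1) / 2 then
            ⌈((n : ℚ) + 1 + ((((n : ℤ) + 1 + (cycloAB n j).2
              - ((j:ℤ)+2) * (cycloAB n j).1) : ℤ) : ℚ)) / ((j : ℚ) + 3)⌉
            else if n % 2 = 0 then 1 else 0,
            (n : ℤ) + 1 + (cycloAB n j).2 - ((j:ℤ)+2) * (cycloAB n j).1) := rfl
      have c2 : abN n (j+1) =
          (if j + 3 ≤ (n+1)/2 then
              ((((n+1) - ((j+2) * (abN n j).1 - (abN n j).2)) + (j+2))/(j+3) : ℕ)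
            else if n % 2 = 0 then 1 else 0,
            (n+1) - ((j+2) * (abN n j).1 - (abN n j).2)) := rfl
      rw [c1, c2]
      refine Prod.ext ?_ ?_
      · show (if j + 3 ≤ (n + 1) / 2 then
            (⌈((n : ℚ) + 1 + ((((n : ℤ) + 1 + (cycloAB n j).2
              - ((j:ℤ)+2) * (cycloAB n j).1) : ℤ) : ℚ)) / ((j : ℚ) + 3)⌉ : ℤ)
            else if n % 2 = 0 then 1 else 0)
          = (((if j + 3 ≤ (n+1)/2 then
              ((((n+1) - ((j+2) * (abN n j).1 - (abN n j).2)) + (j+2))/(j+3) : ℕ)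
            else if n % 2 = 0 then 1 else 0 : ℕ)) : ℤ)
        by_cases hb : j + 3 ≤ (n+1)/2
        · rw [if_pos hb, if_pos hb]
          have e1 : ((n : ℚ) + 1 + ((((n : ℤ) + 1 + (cycloAB n j).2
              - ((j:ℤ)+2) * (cycloAB n j).1) : ℤ) : ℚ))
              = ((((n+1) - ((j+2) * (abN n j).1 - (abN n j).2) : ℕ)) : ℚ) := by
            rw [hBval]
            push_cast
            ring
          rw [e1]
          have hc := ceil_nat_div ((n+1) - ((j+2) * (abN n j).1 - (abN n j).2)) (j+3)
            (by omega)
          rw [show ((j + 3 : ℕ) : ℚ) = (j : ℚ) + 3 from by push_cast; ring] at hc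
          rw [hc]
          congr 2
        · rw [if_neg hb, if_neg hb]
          by_cases hp : n % 2 = 0
          · rw [if_pos hp, if_pos hp]; norm_num
          · rw [if_neg hp, if_neg hp]; norm_num
      · exact hBval

lemma A_last (n : ℕ) (hn : 2 ≤ n) :
    (abN n ((n+1)/2 - 1)).1 = if n % 2 = 0 then 1 else 0 := by
  rcases Nat.lt_or_ge ((n+1)/2) 2 with h | h
  · rw [show (n+1)/2 - 1 = 0 from by omega]
    show (if 2 ≤ (n+1)/2 then (n+2)/2 else if n % 2 = 0 then 1 else 0) = _
    rw [if_neg (by omega)]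
  · obtain ⟨k, hk⟩ : ∃ k, (n+1)/2 - 1 = k+1 := ⟨(n+1)/2 - 2, by omega⟩
    have hkval : k = (n+1)/2 - 2 := by omega
    rw [hk]
    show (if k + 3 ≤ (n+1)/2 then _ else if n % 2 = 0 then 1 else 0) = _
    rw [if_neg (by omega)]

/-- the number of colours matches the sum in the theorem -/
lemma count_eq (n : ℕ) (hn : 2 ≤ n) :
    ((MN n : ℕ) : ℤ) = ∑ i ∈ Finset.Icc 2 ((n + 1) / 2 + 1), (cycloA n i + 1) := by
  have hreidx : ∑ i ∈ Finset.Icc 2 ((n+1)/2+1), (cycloA n i + 1)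
      = ∑ j ∈ Finset.range ((n+1)/2), (cycloA n (2+j) + 1) := by
    rw [← Finset.Ico_add_one_right_eq_Icc, Finset.sum_Ico_eq_sum_range]
    congr 1
  have hA : ∀ j, j < (n+1)/2 → cycloA n (2+j) = ((abN n j).1 : ℤ) := by
    intro j hjK
    unfold cycloA
    rw [show 2 + j - 2 = j from by omega]
    rw [abN_eq n hn j (by omega)]
  rw [hreidx]
  rw [Finset.sum_congr rfl (fun j hj => by rw [hA j (Finset.mem_range.mp hj)])]
  rw [Finset.sum_add_distrib, Finset.sum_const, Finset.card_range]
  have hsum : ∑ j ∈ Finset.range ((n+1)/2), ((abN n j).1 : ℤ)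
      = ((∑ j ∈ Finset.range ((n+1)/2), (abN n j).1 : ℕ) : ℤ) := by
    rw [Nat.cast_sum]
  rw [hsum]
  have hsplit : ∑ j ∈ Finset.range ((n+1)/2), (abN n j).1
      = SN n + (abN n ((n+1)/2 - 1)).1 := by
    rw [show (n+1)/2 = ((n+1)/2 - 1) + 1 from by omega, Finset.sum_range_succ]
    rfl
  have hal := A_last n hn
  have hMval : MN n = SN n + (n - (n+1)/2) + 1 := rfl
  simp only [nsmul_eq_mul, mul_one]
  by_cases hp : n % 2 = 0
  · rw [if_pos hp] at hal
    rw [hsplit, hal]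
    omega
  · rw [if_neg hp] at hal
    rw [hsplit, hal]
    omega

end Cyclo

/-- Theorem: `γ_n ≤ Σ_{i=2}^{⌈n/2⌉+1} (A_i + 1)`. -/
theorem cycloChromatic_le_sum (n : ℕ) (hn : 2 ≤ n) :
    (cycloChromatic n : ℤ) ≤
      ∑ i ∈ Finset.Icc 2 ((n + 1) / 2 + 1), (cycloA n i + 1) := by
  have hmem : Cyclo.MN n ∈ {m : ℕ | ∃ f : Finset ℕ → ℕ, IsProperColouringCyclo n m f} :=
    ⟨Cyclo.F n, Cyclo.F_proper n hn⟩
  have h1 : cycloChromatic n ≤ Cyclo.MN n := Nat.sInf_le hmem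
  calc ((cycloChromatic n : ℕ) : ℤ) ≤ ((Cyclo.MN n : ℕ) : ℤ) := by exact_mod_cast h1
    _ = _ := Cyclo.count_eq n hn
end

section
/- For every n ≥ 1, there exists a proper colouring of the facets of the n-dimensional stellohedron with 2n − 1 − ⌊(n−1)/2⌋ colours; consequently σ_n ≤ 2n − 1 − ⌊(n−1)/2⌋. -/
/-- A facet of the `n`-dimensional stellohedron: a proper subset of `[n]₀ = {0,...,n}`
containing `0`, or a singleton `{i}` with `1 ≤ i ≤ n`. -/
def StellFacet (n : ℕ) (X : Finset ℕ) : Prop :=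
  (0 ∈ X ∧ X ⊂ Finset.range (n + 1)) ∨ ∃ i : ℕ, 1 ≤ i ∧ i ≤ n ∧ X = {i}

/-- Two facets of the stellohedron are separated when they are incomparable with
respect to inclusion and their union contains `0`. -/
def StellSeparated (X Y : Finset ℕ) : Prop :=
  ¬ X ⊆ Y ∧ ¬ Y ⊆ X ∧ 0 ∈ X ∪ Y

/-- A proper colouring of the facets of the `n`-dimensional stellohedron with `m`
colours: any two distinct facets of the same colour are separated. -/
def IsProperColouringStell (n m : ℕ) (f : Finset ℕ → ℕ) : Prop :=
  (∀ X, StellFacet n X → f X ∈ Finset.Icc 1 m) ∧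
  ∀ X Y, StellFacet n X → StellFacet n Y → X ≠ Y → f X = f Y → StellSeparated X Y

/-- The chromatic number `σ_n` of the `n`-dimensional stellohedron. -/
noncomputable def stellChromatic (n : ℕ) : ℕ :=
  sInf {m : ℕ | ∃ f : Finset ℕ → ℕ, IsProperColouringStell n m f}

/- ### Auxiliary construction -/

/-- Number of elements of `C` that are `≥ a`. -/
def stellCnt (C : Finset ℕ) (a : ℕ) : ℕ := (C.filter (fun x => a ≤ x)).card

/-- The element of `C` of rank `n - |C| + 1` from the top (when `C` is large). -/
def stellSel (n : ℕ) (C : Finset ℕ) : ℕ :=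
  if h : (C.filter (fun a => stellCnt C a ≤ n - C.card + 1)).Nonempty then
    (C.filter (fun a => stellCnt C a ≤ n - C.card + 1)).min' h
  else 0

/-- The colouring function. -/
def stellF (n : ℕ) (X : Finset ℕ) : ℕ :=
  if 0 ∈ X then
    if n + 1 ≤ 2 * ((Finset.range (n + 1)) \ X).card then
      stellSel n ((Finset.range (n + 1)) \ X)
    else n + n / 2 + 1 - ((Finset.range (n + 1)) \ X).card
  else X.sup id

lemma stellCnt_mono {C C' : Finset ℕ} (h : C' ⊆ C) (a : ℕ) :
    stellCnt C' a ≤ stellCnt C a :=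
  Finset.card_le_card (Finset.filter_subset_filter _ h)

lemma stellSel_spec {n : ℕ} {C : Finset ℕ} (hcard : C.card ≤ n)
    (hup : n + 1 ≤ 2 * C.card) :
    stellSel n C ∈ C ∧ stellCnt C (stellSel n C) = n - C.card + 1 := by
  have hCne : C.Nonempty := Finset.card_pos.1 (by omega)
  have hmaxA : C.max' hCne ∈ C.filter (fun a => stellCnt C a ≤ n - C.card + 1) := by
    have hfil : C.filter (fun x => C.max' hCne ≤ x) = {C.max' hCne} := by
      apply Finset.ext; intro x
      simp only [Finset.mem_filter, Finset.mem_singleton]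
      constructor
      · rintro ⟨hx, hle⟩
        exact le_antisymm (Finset.le_max' C x hx) hle
      · rintro rfl
        exact ⟨Finset.max'_mem _ _, le_refl _⟩
    refine Finset.mem_filter.2 ⟨Finset.max'_mem _ _, ?_⟩
    unfold stellCnt
    rw [hfil, Finset.card_singleton]
    omega
  have hAne : (C.filter (fun a => stellCnt C a ≤ n - C.card + 1)).Nonempty := ⟨_, hmaxA⟩
  have hg : stellSel n C =
      (C.filter (fun a => stellCnt C a ≤ n - C.card + 1)).min' hAne := by
    rw [stellSel, dif_pos hAne]
  have hgA : stellSel n C ∈ C.filter (fun a => stellCnt C a ≤ n - C.card + 1) := by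
    rw [hg]; exact Finset.min'_mem _ _
  obtain ⟨hgC, hgle⟩ := Finset.mem_filter.1 hgA
  refine ⟨hgC, le_antisymm hgle ?_⟩
  by_contra hlt
  push_neg at hlt
  have hsplit : (C.filter (fun x => stellSel n C ≤ x)).card
      + (C.filter (fun x => ¬ stellSel n C ≤ x)).card = C.card :=
    Finset.card_filter_add_card_filter_not _
  have hcntg : stellCnt C (stellSel n C) = (C.filter (fun x => stellSel n C ≤ x)).card := rfl
  have hBne : (C.filter (fun x => ¬ stellSel n C ≤ x)).Nonempty :=
    Finset.card_pos.1 (by omega)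
  set b := (C.filter (fun x => ¬ stellSel n C ≤ x)).max' hBne with hbdef
  have hbmem := Finset.max'_mem _ hBne
  rw [← hbdef] at hbmem
  obtain ⟨hbC, hblt⟩ := Finset.mem_filter.1 hbmem
  have hfb : C.filter (fun x => b ≤ x)
      = insert b (C.filter (fun x => stellSel n C ≤ x)) := by
    apply Finset.ext; intro x
    simp only [Finset.mem_filter, Finset.mem_insert]
    constructor
    · rintro ⟨hxC, hbx⟩
      by_cases hgx : stellSel n C ≤ x
      · right; exact ⟨hxC, hgx⟩
      · left
        have hxB : x ∈ C.filter (fun x => ¬ stellSel n C ≤ x) :=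
          Finset.mem_filter.2 ⟨hxC, hgx⟩
        exact le_antisymm (Finset.le_max' _ x hxB) hbx |>.symm ▸ rfl
    · rintro (rfl | ⟨hxC, hgx⟩)
      · exact ⟨hbC, le_refl _⟩
      · exact ⟨hxC, le_trans (le_of_not_ge hblt) hgx⟩
  have hbnotin : b ∉ C.filter (fun x => stellSel n C ≤ x) := by
    intro hmem
    exact hblt (Finset.mem_filter.1 hmem).2
  have hcntb : stellCnt C b = stellCnt C (stellSel n C) + 1 := by
    unfold stellCnt
    rw [hfb, Finset.card_insert_of_notMem hbnotin]
  have hbA : b ∈ C.filter (fun a => stellCnt C a ≤ n - C.card + 1) :=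
    Finset.mem_filter.2 ⟨hbC, by omega⟩
  have hmin := Finset.min'_le _ b hbA
  rw [← hg] at hmin
  exact hblt hmin

lemma stellF_singleton (n i : ℕ) (hi : 1 ≤ i) : stellF n {i} = i := by
  rw [stellF, if_neg]
  · simp
  · simp only [Finset.mem_singleton]
    omega

section Main

variable {n : ℕ}

/-- Basic facts about a `0`-facet. -/
lemma stell_zero_facts {X : Finset ℕ} (h0 : 0 ∈ X) (hss : X ⊂ Finset.range (n + 1)) :
    ((Finset.range (n + 1)) \ X).card + X.card = n + 1 ∧
    1 ≤ ((Finset.range (n + 1)) \ X).card ∧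
    ((Finset.range (n + 1)) \ X).card ≤ n := by
  have hXr : X ⊆ Finset.range (n + 1) := hss.subset
  have hcC : ((Finset.range (n + 1)) \ X).card = (n + 1) - X.card := by
    rw [Finset.card_sdiff_of_subset hXr, Finset.card_range]
  have hX1 : 1 ≤ X.card := Finset.card_pos.2 ⟨0, h0⟩
  have hXn : X.card ≤ n + 1 := by
    have := Finset.card_le_card hXr
    rwa [Finset.card_range] at this
  have hCne : ((Finset.range (n + 1)) \ X).Nonempty := by
    obtain ⟨x, hx, hx2⟩ := Finset.exists_of_ssubset hss
    exact ⟨x, Finset.mem_sdiff.2 ⟨hx, hx2⟩⟩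
  have hC1 : 1 ≤ ((Finset.range (n + 1)) \ X).card := Finset.card_pos.2 hCne
  omega

/-- For a `0`-facet coloured by the upper rule, the selector lies in `[1,n]` and
outside `X`. -/
lemma stell_upper_sel {X : Finset ℕ} (h0 : 0 ∈ X) (hss : X ⊂ Finset.range (n + 1))
    (hup : n + 1 ≤ 2 * ((Finset.range (n + 1)) \ X).card) :
    stellSel n ((Finset.range (n + 1)) \ X) ∈ (Finset.range (n + 1)) \ X ∧
    1 ≤ stellSel n ((Finset.range (n + 1)) \ X) ∧
    stellSel n ((Finset.range (n + 1)) \ X) ≤ n ∧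
    stellSel n ((Finset.range (n + 1)) \ X) ∉ X := by
  obtain ⟨hsum, hC1, hCn⟩ := stell_zero_facts h0 hss
  obtain ⟨hmem, -⟩ := stellSel_spec hCn hup
  obtain ⟨hrange, hnot⟩ := Finset.mem_sdiff.1 hmem
  have hlt : stellSel n ((Finset.range (n + 1)) \ X) < n + 1 := Finset.mem_range.1 hrange
  have hpos : stellSel n ((Finset.range (n + 1)) \ X) ≠ 0 := by
    intro hzero
    rw [hzero] at hnot
    exact hnot h0
  exact ⟨hmem, by omega, by omega, hnot⟩

/-- The key antichain property: two nested `0`-facets get different colours. -/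
lemma stell_not_subset {X Y : Finset ℕ} (h0X : 0 ∈ X) (hssX : X ⊂ Finset.range (n + 1))
    (h0Y : 0 ∈ Y) (hssY : Y ⊂ Finset.range (n + 1)) (hne : X ≠ Y)
    (hf : stellF n X = stellF n Y) : ¬ X ⊆ Y := by
  intro hXY
  obtain ⟨hsumX, hCX1, hCXn⟩ := stell_zero_facts h0X hssX
  obtain ⟨hsumY, hCY1, hCYn⟩ := stell_zero_facts h0Y hssY
  have hCsub : (Finset.range (n + 1)) \ Y ⊆ (Finset.range (n + 1)) \ X :=
    Finset.sdiff_subset_sdiff (le_refl _) hXY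
  have hXcard : X.card < Y.card :=
    Finset.card_lt_card (Finset.ssubset_iff_subset_ne.2 ⟨hXY, hne⟩)
  have hclt : ((Finset.range (n + 1)) \ Y).card < ((Finset.range (n + 1)) \ X).card := by
    omega
  rw [stellF, stellF, if_pos h0X, if_pos h0Y] at hf
  by_cases hupX : n + 1 ≤ 2 * ((Finset.range (n + 1)) \ X).card
  · by_cases hupY : n + 1 ≤ 2 * ((Finset.range (n + 1)) \ Y).card
    · -- both upper: rank contradiction
      rw [if_pos hupX, if_pos hupY] at hf
      obtain ⟨hgX, hcntX⟩ := stellSel_spec hCXn hupX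
      obtain ⟨hgY, hcntY⟩ := stellSel_spec hCYn hupY
      have hmono := stellCnt_mono hCsub (stellSel n ((Finset.range (n + 1)) \ Y))
      rw [hcntY, ← hf, hcntX] at hmono
      omega
    · -- X upper, Y lower: impossible since |C_Y| < |C_X|
      rw [if_pos hupX, if_neg hupY] at hf
      obtain ⟨-, hg1, hgn, -⟩ := stell_upper_sel h0X hssX hupX
      omega
  · by_cases hupY : n + 1 ≤ 2 * ((Finset.range (n + 1)) \ Y).card
    · omega
    · -- both lower: same layer, but different cards
      rw [if_neg hupX, if_neg hupY] at hf
      omega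

lemma stell_proper (n : ℕ) :
    IsProperColouringStell n (2 * n - 1 - (n - 1) / 2) (stellF n) := by
  have hm : 2 * n - 1 - (n - 1) / 2 = n + n / 2 ∨ n = 0 := by omega
  constructor
  · rintro X (⟨h0, hss⟩ | ⟨i, hi1, hin, rfl⟩)
    · obtain ⟨hsum, hC1, hCn⟩ := stell_zero_facts h0 hss
      rw [stellF, if_pos h0]
      by_cases hup : n + 1 ≤ 2 * ((Finset.range (n + 1)) \ X).card
      · rw [if_pos hup]
        obtain ⟨-, hg1, hgn, -⟩ := stell_upper_sel h0 hss hup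
        rw [Finset.mem_Icc]
        omega
      · rw [if_neg hup, Finset.mem_Icc]
        omega
    · rw [stellF_singleton n i hi1, Finset.mem_Icc]
      omega
  · rintro X Y (⟨h0X, hssX⟩ | ⟨i, hi1, hin, rfl⟩) (⟨h0Y, hssY⟩ | ⟨j, hj1, hjn, rfl⟩)
        <;> intro hne hf
    · -- both 0-facets
      exact ⟨stell_not_subset h0X hssX h0Y hssY hne hf,
        stell_not_subset h0Y hssY h0X hssX hne.symm hf.symm,
        Finset.mem_union_left _ h0X⟩
    · -- X a 0-facet, Y = {j}
      rw [stellF_singleton n j hj1] at hf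
      obtain ⟨hsum, hC1, hCn⟩ := stell_zero_facts h0X hssX
      have hjX : j ∉ X := by
        rw [stellF, if_pos h0X] at hf
        by_cases hup : n + 1 ≤ 2 * ((Finset.range (n + 1)) \ X).card
        · rw [if_pos hup] at hf
          obtain ⟨-, -, -, hnot⟩ := stell_upper_sel h0X hssX hup
          rwa [hf] at hnot
        · rw [if_neg hup] at hf
          omega
      refine ⟨?_, ?_, Finset.mem_union_left _ h0X⟩
      · intro hsub
        have := hsub h0X
        simp only [Finset.mem_singleton] at this
        omega
      · intro hsub
        exact hjX (hsub (Finset.mem_singleton_self j))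
    · -- X = {i}, Y a 0-facet
      rw [stellF_singleton n i hi1] at hf
      obtain ⟨hsum, hC1, hCn⟩ := stell_zero_facts h0Y hssY
      have hiY : i ∉ Y := by
        rw [stellF, if_pos h0Y] at hf
        by_cases hup : n + 1 ≤ 2 * ((Finset.range (n + 1)) \ Y).card
        · rw [if_pos hup] at hf
          obtain ⟨-, -, -, hnot⟩ := stell_upper_sel h0Y hssY hup
          rwa [← hf] at hnot
        · rw [if_neg hup] at hf
          omega
      refine ⟨?_, ?_, Finset.mem_union_right _ h0Y⟩
      · intro hsub
        exact hiY (hsub (Finset.mem_singleton_self i))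
      · intro hsub
        have := hsub h0Y
        simp only [Finset.mem_singleton] at this
        omega
    · -- both singletons
      rw [stellF_singleton n i hi1, stellF_singleton n j hj1] at hf
      exact absurd (by rw [hf]) hne

end Main

/-- There exists a proper colouring of the facets of the `n`-dimensional stellohedron
with `2n − 1 − ⌊(n−1)/2⌋` colours; consequently `σ_n ≤ 2n − 1 − ⌊(n−1)/2⌋`. -/
theorem stellChromatic_upper_bound (n : ℕ) (hn : 1 ≤ n) :
    (∃ f : Finset ℕ → ℕ, IsProperColouringStell n (2 * n - 1 - (n - 1) / 2) f) ∧
      stellChromatic n ≤ 2 * n - 1 - (n - 1) / 2 := by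
  have key := stell_proper n
  exact ⟨⟨stellF n, key⟩, Nat.sInf_le ⟨stellF n, key⟩⟩
end

section
/- For all Y, Z in 𝓗: (i) if Z is a proper subset of Y, then h(Z) ∈ F_Y, and hence h(Y) ≠ h(Z); (ii) if i ∈ Y and i ≠ 0, then i ∈ F_Y, and hence h(Y) ≠ i. -/
/-- Auxiliary recursion: `stellG k Y` computes the pair `(F_Y, h(Y))` for a finite set
`Y` containing `0` with `k` nonzero elements.  `F_{{0}} = ∅`, `h({0}) = 1`; for
`Y = {0, i₁, ..., i_k}` with the `i_j` distinct and nonzero,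
`F_Y = ((Y − {0}) ∪ {1}) ∪ Z₁ ∪ ⋯ ∪ Z_k` where `Z_j = F_{Y − {i_j}} ∪ {h(Y − {i_j})}`,
and `h(Y) = min(ℕ⁺ − F_Y)`. -/
noncomputable def stellG : ℕ → Finset ℕ → Finset ℕ × ℕ
  | 0, _ => (∅, 1)
  | k + 1, Y =>
      let F : Finset ℕ :=
        ((Y.erase 0) ∪ {1}) ∪
          (Y.erase 0).biUnion fun i => (stellG k (Y.erase i)).1 ∪ {(stellG k (Y.erase i)).2}
      (F, sInf {m : ℕ | 0 < m ∧ m ∉ F})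

/-- The set `F_Y`. -/
noncomputable def Fset (Y : Finset ℕ) : Finset ℕ := (stellG (Y.erase 0).card Y).1

/-- The value `h(Y) = min(ℕ⁺ − F_Y)`. -/
noncomputable def hval (Y : Finset ℕ) : ℕ := (stellG (Y.erase 0).card Y).2

lemma card_aux {Y : Finset ℕ} {i : ℕ} {m : ℕ} (hm : (Y.erase 0).card = m + 1)
    (hi : i ∈ Y.erase 0) : ((Y.erase i).erase 0).card = m := by
  rw [Finset.erase_right_comm, Finset.card_erase_of_mem hi, hm]
  omega

lemma Fset_eq (Y : Finset ℕ) (h : (Y.erase 0).Nonempty) :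
    Fset Y = ((Y.erase 0) ∪ {1}) ∪
      (Y.erase 0).biUnion (fun i => Fset (Y.erase i) ∪ {hval (Y.erase i)}) := by
  obtain ⟨m, hm⟩ : ∃ m, (Y.erase 0).card = m + 1 :=
    ⟨_, (Nat.succ_pred_eq_of_pos (Finset.card_pos.mpr h)).symm⟩
  unfold Fset
  rw [hm]
  simp only [stellG]
  congr 1
  apply Finset.biUnion_congr rfl
  intro i hi
  simp only [Fset, hval]
  rw [card_aux hm hi]

lemma hval_eq (Y : Finset ℕ) (h : (Y.erase 0).Nonempty) :
    hval Y = sInf {m : ℕ | 0 < m ∧ m ∉ Fset Y} := by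
  obtain ⟨m, hm⟩ : ∃ m, (Y.erase 0).card = m + 1 :=
    ⟨_, (Nat.succ_pred_eq_of_pos (Finset.card_pos.mpr h)).symm⟩
  unfold hval Fset
  rw [hm]
  simp only [stellG]

lemma hval_not_mem (Y : Finset ℕ) : 0 < hval Y ∧ hval Y ∉ Fset Y := by
  rcases (Y.erase 0).eq_empty_or_nonempty with he | hne
  · constructor
    · unfold hval; rw [he]; simp [stellG]
    · unfold Fset; rw [he]; simp [stellG]
  · rw [hval_eq Y hne]
    have hnon : {m : ℕ | 0 < m ∧ m ∉ Fset Y}.Nonempty := by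
      refine ⟨(Fset Y).sup id + 1, by omega, fun hmem => ?_⟩
      have := Finset.le_sup (f := id) hmem
      simp only [id_eq] at this
      omega
    exact Nat.sInf_mem hnon

lemma mem_Fset_of_mem {Y : Finset ℕ} {i : ℕ} (hi : i ∈ Y) (h0 : i ≠ 0) :
    i ∈ Fset Y := by
  have hi' : i ∈ Y.erase 0 := Finset.mem_erase.mpr ⟨h0, hi⟩
  rw [Fset_eq Y ⟨i, hi'⟩]
  exact Finset.mem_union_left _ (Finset.mem_union_left _ hi')

lemma mem_Fset_of_ssubset : ∀ Y : Finset ℕ, ∀ Z : Finset ℕ, 0 ∈ Z → Z ⊂ Y →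
    hval Z ∈ Fset Y := by
  intro Y
  induction Y using Finset.strongInduction with
  | _ Y ih =>
    intro Z hZ hZY
    obtain ⟨i, hiY, hiZ⟩ := Finset.exists_of_ssubset hZY
    have hi0 : i ≠ 0 := fun h => hiZ (h ▸ hZ)
    have hi' : i ∈ Y.erase 0 := Finset.mem_erase.mpr ⟨hi0, hiY⟩
    rw [Fset_eq Y ⟨i, hi'⟩]
    apply Finset.mem_union_right
    apply Finset.mem_biUnion.mpr
    refine ⟨i, hi', ?_⟩
    have hsub : Z ⊆ Y.erase i := Finset.subset_erase.mpr ⟨hZY.subset, hiZ⟩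
    rcases eq_or_ssubset_of_subset hsub with rfl | hss
    · exact Finset.mem_union_right _ (Finset.mem_singleton_self _)
    · exact Finset.mem_union_left _
        (ih (Y.erase i) (Finset.erase_ssubset hiY) Z hZ hss)

/-- Remark: (i) if `Z ⊂ Y` (both in `𝓗`), then `h(Z) ∈ F_Y`, hence `h(Y) ≠ h(Z)`;
(ii) if `i ∈ Y` and `i ≠ 0`, then `i ∈ F_Y`, hence `h(Y) ≠ i`. -/
theorem hval_Fset_properties (Y Z : Finset ℕ) (hY : 0 ∈ Y) (hZ : 0 ∈ Z) :
    (Z ⊂ Y → hval Z ∈ Fset Y ∧ hval Y ≠ hval Z) ∧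
      (∀ i ∈ Y, i ≠ 0 → i ∈ Fset Y ∧ hval Y ≠ i) := by
  constructor
  · intro hZY
    have h1 := mem_Fset_of_ssubset Y Z hZ hZY
    exact ⟨h1, fun he => (hval_not_mem Y).2 (he ▸ h1)⟩
  · intro i hi h0
    have h1 := mem_Fset_of_mem hi h0
    exact ⟨h1, fun he => (hval_not_mem Y).2 (he ▸ h1)⟩
end

section
/- For every Y ∈ 𝓗 with |Y − {0}| = k, one has h(Y) ∉ F_Y, the set F_Y ∪ {h(Y)} consists of the elements of (Y − {0}) ∪ {1} together with at most k initial elements of ℕ⁺ − ((Y − {0}) ∪ {1}), and consequently h(Y) ≤ 2k + 1. -/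
lemma sInf_spec (F : Finset ℕ) :
    0 < sInf {m : ℕ | 0 < m ∧ m ∉ F} ∧ sInf {m : ℕ | 0 < m ∧ m ∉ F} ∉ F := by
  have hne : {m : ℕ | 0 < m ∧ m ∉ F}.Nonempty := by
    refine ⟨F.sup id + 1, Nat.succ_pos _, fun hmem => ?_⟩
    have := Finset.le_sup (f := id) hmem
    simp only [id] at this
    omega
  exact Nat.sInf_mem hne

lemma sInf_le_card (F : Finset ℕ) (n : ℕ) (hn : (F.filter (fun m => 0 < m)).card ≤ n) :
    sInf {m : ℕ | 0 < m ∧ m ∉ F} ≤ n + 1 := by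
  by_contra hlt
  push_neg at hlt
  have hsub : Finset.Icc 1 (n+1) ⊆ F.filter (fun m => 0 < m) := by
    intro m hm
    simp only [Finset.mem_Icc] at hm
    have hmF : m ∈ F := by
      by_contra hmF
      have := Nat.sInf_le (show m ∈ {m : ℕ | 0 < m ∧ m ∉ F} from ⟨by omega, hmF⟩)
      omega
    simp only [Finset.mem_filter]
    exact ⟨hmF, by omega⟩
  have := Finset.card_le_card hsub
  rw [Nat.card_Icc] at this
  omega

lemma main_aux : ∀ k (Y : Finset ℕ), 0 ∈ Y → (Y.erase 0).card = k →
    (stellG k Y).2 ∉ (stellG k Y).1 ∧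
    (∃ I : Finset ℕ, I.card ≤ k ∧ (∀ m ∈ I, 0 < m ∧ m ∉ Y.erase 0 ∪ {1}) ∧
      (∀ m ∈ I, ∀ m' : ℕ, 0 < m' → m' ∉ Y.erase 0 ∪ {1} → m' < m → m' ∈ I) ∧
      (stellG k Y).1 ∪ {(stellG k Y).2} = (Y.erase 0 ∪ {1}) ∪ I) ∧
    (stellG k Y).2 ≤ 2 * k + 1 := by
  intro k
  induction k with
  | zero =>
    intro Y h0 hcard
    have he : Y.erase 0 = ∅ := Finset.card_eq_zero.mp hcard
    refine ⟨by simp [stellG], ⟨∅, by simp, by simp [he], by simp, by simp [stellG, he]⟩, by simp [stellG]⟩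
  | succ k IH =>
    intro Y h0 hcard
    set B : Finset ℕ := Y.erase 0 ∪ {1} with hB
    set F : Finset ℕ := ((Y.erase 0) ∪ {1}) ∪
        (Y.erase 0).biUnion (fun i => (stellG k (Y.erase i)).1 ∪ {(stellG k (Y.erase i)).2}) with hF
    have hstell : stellG (k+1) Y = (F, sInf {m : ℕ | 0 < m ∧ m ∉ F}) := by
      rw [stellG]
    set h : ℕ := sInf {m : ℕ | 0 < m ∧ m ∉ F} with hh
    have hchild : ∀ i ∈ Y.erase 0, 0 ∈ Y.erase i ∧ ((Y.erase i).erase 0).card = k := by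
      intro i hi
      have hi0 : i ≠ 0 := Finset.ne_of_mem_erase hi
      refine ⟨Finset.mem_erase.mpr ⟨fun hc => hi0 hc.symm, h0⟩, ?_⟩
      have hcomm : (Y.erase i).erase 0 = (Y.erase 0).erase i := by
        ext m; simp only [Finset.mem_erase]; tauto
      rw [hcomm, Finset.card_erase_of_mem hi, hcard]; omega
    have hIH : ∀ i ∈ Y.erase 0, ∃ I : Finset ℕ, I.card ≤ k ∧
        (∀ m ∈ I, 0 < m ∧ m ∉ (Y.erase i).erase 0 ∪ {1}) ∧
        (∀ m ∈ I, ∀ m' : ℕ, 0 < m' → m' ∉ (Y.erase i).erase 0 ∪ {1} → m' < m → m' ∈ I) ∧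
        (stellG k (Y.erase i)).1 ∪ {(stellG k (Y.erase i)).2} = ((Y.erase i).erase 0 ∪ {1}) ∪ I :=
      fun i hi => (IH (Y.erase i) (hchild i hi).1 (hchild i hi).2).2.1
    choose Iset hIcard hIpos hIinit hIeq using hIH
    have hBsub : ∀ i, (Y.erase i).erase 0 ∪ {1} ⊆ B := by
      intro i m hm
      rw [hB]
      simp only [Finset.mem_union, Finset.mem_erase, Finset.mem_singleton] at hm ⊢
      tauto
    have hBF : B ⊆ F := by rw [hB, hF]; exact Finset.subset_union_left
    have hmemF : ∀ m, m ∈ F ↔ m ∈ B ∨ ∃ i, ∃ hi : i ∈ Y.erase 0, m ∈ Iset i hi := by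
      intro m
      constructor
      · intro hm
        rw [hF] at hm
        rcases Finset.mem_union.mp hm with hm | hm
        · exact Or.inl hm
        · rcases Finset.mem_biUnion.mp hm with ⟨i, hi, hmi⟩
          have hmi' : m ∈ ((Y.erase i).erase 0 ∪ {1}) ∪ Iset i hi := by
            rw [← hIeq i hi]; exact hmi
          rcases Finset.mem_union.mp hmi' with hc | hc
          · exact Or.inl (hBsub i hc)
          · exact Or.inr ⟨i, hi, hc⟩
      · intro hm
        rcases hm with hm | ⟨i, hi, hmi⟩
        · exact hBF hm
        · rw [hF]
          refine Finset.mem_union_right _ (Finset.mem_biUnion.mpr ⟨i, hi, ?_⟩)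
          rw [hIeq i hi]
          exact Finset.mem_union_right _ hmi
    obtain ⟨hpos, hnotF⟩ := sInf_spec F
    rw [← hh] at hpos hnotF
    have hmin : ∀ m : ℕ, 0 < m → m ∉ F → h ≤ m := fun m hm hmf =>
      Nat.sInf_le (show m ∈ {m : ℕ | 0 < m ∧ m ∉ F} from ⟨hm, hmf⟩)
    have hFB : ∀ m ∈ F \ B, 0 < m ∧ m ∉ B := by
      intro m hm
      rcases Finset.mem_sdiff.mp hm with ⟨hmF, hmB⟩
      refine ⟨?_, hmB⟩
      rcases (hmemF m).mp hmF with hc | ⟨i, hi, hmi⟩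
      · exact absurd hc hmB
      · exact (hIpos i hi m hmi).1
    have hcardFB : (F \ B).card ≤ k := by
      rcases Finset.eq_empty_or_nonempty (F \ B) with he | hne
      · simp [he]
      · obtain ⟨m, hmmem, hmax⟩ := Finset.exists_max_image (F \ B) id hne
        rcases Finset.mem_sdiff.mp hmmem with ⟨hmF, hmB⟩
        rcases (hmemF m).mp hmF with hc | ⟨i, hi, hmi⟩
        · exact absurd hc hmB
        have hsub : F \ B ⊆ Iset i hi := by
          intro m' hm'
          rcases Finset.mem_sdiff.mp hm' with ⟨hm'F, hm'B⟩
          rcases lt_or_eq_of_le (hmax m' hm') with hlt | heq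
          · have hm'pos := (hFB m' hm').1
            have hm'Bi : m' ∉ (Y.erase i).erase 0 ∪ {1} := fun hc => hm'B (hBsub i hc)
            exact hIinit i hi m hmi m' hm'pos hm'Bi hlt
          · simp only [id] at heq
            rw [heq]; exact hmi
        exact (Finset.card_le_card hsub).trans (hIcard i hi)
    refine ⟨?_, ⟨(F \ B) ∪ {h}, ?_, ?_, ?_, ?_⟩, ?_⟩
    · rw [hstell]; exact hnotF
    · calc ((F \ B) ∪ {h}).card ≤ (F \ B).card + ({h} : Finset ℕ).card := Finset.card_union_le _ _
        _ ≤ k + 1 := by simp; omega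
    · intro m hm
      rcases Finset.mem_union.mp hm with hm | hm
      · exact hFB m hm
      · rw [Finset.mem_singleton] at hm
        subst hm
        exact ⟨hpos, fun hc => hnotF (hBF hc)⟩
    · intro m hm m' hm'pos hm'B hlt
      by_cases hm'F : m' ∈ F
      · exact Finset.mem_union_left _ (Finset.mem_sdiff.mpr ⟨hm'F, hm'B⟩)
      · exfalso
        have hle := hmin m' hm'pos hm'F
        rcases Finset.mem_union.mp hm with hm | hm
        · rcases Finset.mem_sdiff.mp hm with ⟨hmF, hmB⟩
          rcases (hmemF m).mp hmF with hc | ⟨i, hi, hmi⟩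
          · exact hmB hc
          · have hm'Bi : m' ∉ (Y.erase i).erase 0 ∪ {1} := fun hc => hm'B (hBsub i hc)
            have : m' ∈ Iset i hi := hIinit i hi m hmi m' hm'pos hm'Bi hlt
            exact hm'F ((hmemF m').mpr (Or.inr ⟨i, hi, this⟩))
        · rw [Finset.mem_singleton] at hm
          omega
    · rw [hstell]
      simp only
      rw [← Finset.union_assoc, Finset.union_sdiff_of_subset hBF]
    · rw [hstell]
      simp only
      have hfil : F.filter (fun m => 0 < m) ⊆ B ∪ (F \ B) := by
        intro m hm
        rcases Finset.mem_filter.mp hm with ⟨hmF, _⟩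
        by_cases hmB : m ∈ B
        · exact Finset.mem_union_left _ hmB
        · exact Finset.mem_union_right _ (Finset.mem_sdiff.mpr ⟨hmF, hmB⟩)
      have hcardB : B.card ≤ k + 2 := by
        calc B.card ≤ (Y.erase 0).card + ({1} : Finset ℕ).card := Finset.card_union_le _ _
          _ = k + 2 := by rw [hcard]; simp
      have hle : (F.filter (fun m => 0 < m)).card ≤ 2 * k + 2 := by
        calc (F.filter (fun m => 0 < m)).card ≤ (B ∪ (F \ B)).card := Finset.card_le_card hfil
          _ ≤ B.card + (F \ B).card := Finset.card_union_le _ _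
          _ ≤ 2 * k + 2 := by omega
      have := sInf_le_card F (2 * k + 2) hle
      omega

/-- Property (∗): for `Y ∈ 𝓗` with `k = |Y − {0}|` one has `h(Y) ∉ F_Y`; the set
`F_Y ∪ {h(Y)}` consists of the elements of `(Y − {0}) ∪ {1}` together with a set `I`
of at most `k` initial elements of `ℕ⁺ − ((Y − {0}) ∪ {1})`; and `h(Y) ≤ 2k + 1`. -/
theorem hval_Fset_initial_segment (Y : Finset ℕ) (hY : 0 ∈ Y) :
    hval Y ∉ Fset Y ∧
      (∃ I : Finset ℕ,
        I.card ≤ (Y.erase 0).card ∧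
        (∀ m ∈ I, 0 < m ∧ m ∉ Y.erase 0 ∪ {1}) ∧
        (∀ m ∈ I, ∀ m' : ℕ, 0 < m' → m' ∉ Y.erase 0 ∪ {1} → m' < m → m' ∈ I) ∧
        Fset Y ∪ {hval Y} = (Y.erase 0 ∪ {1}) ∪ I) ∧
      hval Y ≤ 2 * (Y.erase 0).card + 1 := by
  have := main_aux (Y.erase 0).card Y hY rfl
  unfold Fset hval
  exact this
end

section
/- If A₁ and A₂ are two different members of 𝓑₁^M, then for arbitrary permutations π₁ and π₂ of [n]₀ we have A₁^{π₁} ≠ A₂^{π₂}. -/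
/-- Membership in `𝓑₁`: `A` is a chain `S₀ ⊂ S₁ ⊂ ⋯ ⊂ S_l` of nonempty proper subsets
of `[n]₀ = {0,...,n}` with `|S_{j+1}| = |S_j| + 1` for all `j`. -/
def IsB1 (n : ℕ) (A : Finset (Finset ℕ)) : Prop :=
  ∃ (l : ℕ) (S : ℕ → Finset ℕ),
    A = (Finset.range (l + 1)).image S ∧
    (∀ j, j ≤ l → (S j).Nonempty ∧ S j ⊂ Finset.range (n + 1)) ∧
    (∀ j, j < l → S j ⊂ S (j + 1) ∧ (S (j + 1)).card = (S j).card + 1)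

/-- `π` is a permutation of `[n]₀` (a permutation of `ℕ` mapping `{0,...,n}` to itself). -/
def IsPermOn (n : ℕ) (π : Equiv.Perm ℕ) : Prop :=
  ∀ i, i < n + 1 → π i < n + 1

/-- `A^π = {π(S) : S ∈ A}`, the elementwise image of the chain `A` under `π`. -/
def permImage (π : Equiv.Perm ℕ) (A : Finset (Finset ℕ)) : Finset (Finset ℕ) :=
  A.image fun S => S.image π

/-- The maximal chain `M = {{n−1,…,0}, …, {n−1,n−2}, {n−1}}`, i.e. the sets
`{j : m ≤ j ≤ n−1}` for `0 ≤ m ≤ n−1`. -/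
def Mchain (n : ℕ) : Finset (Finset ℕ) :=
  (Finset.range n).image fun m => Finset.Icc m (n - 1)

/-- Membership in `𝓑₁^M = 𝓑₁ ∩ 𝒫(M)`. -/
def InB1M (n : ℕ) (A : Finset (Finset ℕ)) : Prop :=
  IsB1 n A ∧ A ⊆ Mchain n

/-- Proposition: if `A₁ ≠ A₂` are members of `𝓑₁^M`, then for arbitrary permutations
`π₁, π₂` of `[n]₀` we have `A₁^{π₁} ≠ A₂^{π₂}`. -/
theorem permImages_of_distinct_B1M_distinct (n : ℕ) (hn : 1 ≤ n)
    (A₁ A₂ : Finset (Finset ℕ)) (h₁ : InB1M n A₁) (h₂ : InB1M n A₂) (h12 : A₁ ≠ A₂)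
    (π₁ π₂ : Equiv.Perm ℕ) (hπ₁ : IsPermOn n π₁) (hπ₂ : IsPermOn n π₂) :
    permImage π₁ A₁ ≠ permImage π₂ A₂ := by
  intro h
  apply h12
  -- Each member of `Mchain n` is determined by its cardinality.
  have hM : ∀ S ∈ Mchain n, S = Finset.Icc (n - S.card) (n - 1) := by
    intro S hS
    simp only [Mchain, Finset.mem_image, Finset.mem_range] at hS
    obtain ⟨m, hm, rfl⟩ := hS
    have hcard : (Finset.Icc m (n - 1)).card = n - m := by
      rw [Nat.card_Icc]
      omega
    rw [hcard]
    congr 1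
    omega
  -- cardinalities are preserved by permImage
  have cardimg : ∀ (π : Equiv.Perm ℕ) (A : Finset (Finset ℕ)),
      (permImage π A).image Finset.card = A.image Finset.card := by
    intro π A
    rw [permImage, Finset.image_image]
    congr 1
    funext S
    simp [Finset.card_image_of_injective _ π.injective]
  have hcards : A₁.image Finset.card = A₂.image Finset.card := by
    rw [← cardimg π₁ A₁, ← cardimg π₂ A₂, h]
  -- conclude A₁ = A₂
  ext S
  constructor
  · intro hS
    have h1 : S.card ∈ A₂.image Finset.card := by
      rw [← hcards]; exact Finset.mem_image_of_mem _ hS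
    obtain ⟨T, hT, hTS⟩ := Finset.mem_image.mp h1
    have : T = S := by
      rw [hM T (h₂.2 hT), hM S (h₁.2 hS), hTS]
    exact this ▸ hT
  · intro hS
    have h1 : S.card ∈ A₁.image Finset.card := by
      rw [hcards]; exact Finset.mem_image_of_mem _ hS
    obtain ⟨T, hT, hTS⟩ := Finset.mem_image.mp h1
    have : T = S := by
      rw [hM T (h₁.2 hT), hM S (h₂.2 hS), hTS]
    exact this ▸ hT
end

section
/- Let f : 𝓑₁ → {1,...,m} be a function such that f(A) = f(A^π) for every A ∈ 𝓑₁ and every permutation π of [n]₀. If the restriction of f to 𝓑₁^M is proper, then f is proper. -/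
/-- Membership in `C₁`: `A` is a chain (with respect to inclusion) of nonempty proper
subsets of `[n]₀`. -/
def IsChain1 (n : ℕ) (A : Finset (Finset ℕ)) : Prop :=
  (∀ S ∈ A, S.Nonempty ∧ S ⊂ Finset.range (n + 1)) ∧
  ∀ S ∈ A, ∀ T ∈ A, S ⊆ T ∨ T ⊆ S

/-- `N ⊆ 𝓑₁` is a 1-nested set: the union of every family of at least two pairwise
incomparable members of `N` belongs to `C₁ − 𝓑₁`. -/
def IsNested1 (n : ℕ) (N : Set (Finset (Finset ℕ))) : Prop :=
  (∀ A ∈ N, IsB1 n A) ∧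
  ∀ W : Finset (Finset (Finset ℕ)), ↑W ⊆ N → 2 ≤ W.card →
    (∀ A ∈ W, ∀ B ∈ W, A ≠ B → ¬ A ⊆ B) →
    IsChain1 n (W.sup id) ∧ ¬ IsB1 n (W.sup id)

/-- A function `f` on `𝓔 ⊆ 𝓑₁` is proper when distinct members of `𝓔` of the same
colour never belong to a common 1-nested set. -/
def IsProperOn (n : ℕ) (E : Set (Finset (Finset ℕ))) (f : Finset (Finset ℕ) → ℕ) : Prop :=
  ∀ A ∈ E, ∀ B ∈ E, A ≠ B → f A = f B →
    ∀ N : Set (Finset (Finset ℕ)), IsNested1 n N → ¬ (A ∈ N ∧ B ∈ N)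

lemma myB1mono {l : ℕ} {S : ℕ → Finset ℕ}
    (hstep : ∀ j, j < l → S j ⊂ S (j + 1) ∧ (S (j + 1)).card = (S j).card + 1) :
    ∀ j k, j ≤ k → k ≤ l → S j ⊆ S k := by
  intro j k hjk hkl
  induction k with
  | zero =>
    have : j = 0 := Nat.le_zero.mp hjk
    subst this; exact subset_rfl
  | succ k ih =>
    rcases Nat.eq_or_lt_of_le hjk with rfl | h
    · exact subset_rfl
    · exact (ih (Nat.lt_succ_iff.mp h) (by omega)).trans
        (subset_of_ssubset (hstep k (by omega)).1)

lemma myChain1_of_isB1 (n : ℕ) {A : Finset (Finset ℕ)} (h : IsB1 n A) : IsChain1 n A := by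
  obtain ⟨l, S, rfl, hprop, hstep⟩ := h
  constructor
  · intro T hT
    rcases Finset.mem_image.mp hT with ⟨j, hj, rfl⟩
    exact hprop j (Nat.lt_succ_iff.mp (Finset.mem_range.mp hj))
  · intro T hT U hU
    rcases Finset.mem_image.mp hT with ⟨j, hj, rfl⟩
    rcases Finset.mem_image.mp hU with ⟨k, hk, rfl⟩
    rcases le_total j k with hle | hle
    · exact Or.inl (myB1mono hstep j k hle (Nat.lt_succ_iff.mp (Finset.mem_range.mp hk)))
    · exact Or.inr (myB1mono hstep k j hle (Nat.lt_succ_iff.mp (Finset.mem_range.mp hj)))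

lemma myImage_ssubset_range {n : ℕ} {π : Equiv.Perm ℕ} (hπ : IsPermOn n π) {S : Finset ℕ}
    (h : S ⊂ Finset.range (n + 1)) : S.image π ⊂ Finset.range (n + 1) := by
  have hsub : S.image π ⊆ Finset.range (n + 1) := by
    intro v hv
    rcases Finset.mem_image.mp hv with ⟨x, hx, rfl⟩
    exact Finset.mem_range.mpr (hπ x (Finset.mem_range.mp (subset_of_ssubset h hx)))
  refine hsub.ssubset_of_ne fun he => ?_
  have h1 : (S.image π).card = S.card := Finset.card_image_of_injective _ π.injective
  have h2 := Finset.card_lt_card h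
  rw [he, Finset.card_range] at h1
  rw [Finset.card_range] at h2
  omega

lemma myB1_permImage {n : ℕ} {π : Equiv.Perm ℕ} (hπ : IsPermOn n π) {A : Finset (Finset ℕ)}
    (hA : IsB1 n A) : IsB1 n (permImage π A) := by
  obtain ⟨l, S, rfl, hprop, hstep⟩ := hA
  refine ⟨l, fun j => (S j).image π, ?_, ?_, ?_⟩
  · simp only [permImage, Finset.image_image]
    rfl
  · intro j hj
    obtain ⟨hne, hsub⟩ := hprop j hj
    exact ⟨hne.image _, myImage_ssubset_range hπ hsub⟩
  · intro j hj
    dsimp only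
    obtain ⟨hss, hcard⟩ := hstep j hj
    have hc1 : ((S j).image π).card = (S j).card := Finset.card_image_of_injective _ π.injective
    have hc2 : ((S (j+1)).image π).card = (S (j+1)).card := Finset.card_image_of_injective _ π.injective
    constructor
    · refine (Finset.image_subset_image (subset_of_ssubset hss)).ssubset_of_ne fun he => ?_
      rw [he] at hc1; omega
    · omega

lemma myChain1_permImage {n : ℕ} {π : Equiv.Perm ℕ} (hπ : IsPermOn n π) {A : Finset (Finset ℕ)}
    (hA : IsChain1 n A) : IsChain1 n (permImage π A) := by
  constructor
  · intro T hT
    rcases Finset.mem_image.mp hT with ⟨X, hX, rfl⟩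
    obtain ⟨hne, hsub⟩ := hA.1 X hX
    exact ⟨hne.image _, myImage_ssubset_range hπ hsub⟩
  · intro T hT U hU
    rcases Finset.mem_image.mp hT with ⟨X, hX, rfl⟩
    rcases Finset.mem_image.mp hU with ⟨Y, hY, rfl⟩
    rcases hA.2 X hX Y hY with h | h
    · exact Or.inl (Finset.image_subset_image h)
    · exact Or.inr (Finset.image_subset_image h)

lemma myPermImage_inv (π : Equiv.Perm ℕ) (A : Finset (Finset ℕ)) :
    permImage π⁻¹ (permImage π A) = A := by
  unfold permImage
  rw [Finset.image_image]
  have h : ((fun S => Finset.image (⇑π⁻¹) S) ∘ fun S => Finset.image (⇑π) S) = id := by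
    funext S
    simp only [Function.comp, Finset.image_image, id]
    rw [show ⇑π⁻¹ ∘ ⇑π = id from funext fun x => Equiv.symm_apply_apply π x, Finset.image_id]
  rw [h, Finset.image_id]

lemma myPermOn_inv {n : ℕ} {π : Equiv.Perm ℕ} (hπ : IsPermOn n π) : IsPermOn n π⁻¹ := by
  intro j hj
  have himg : (Finset.range (n + 1)).image π = Finset.range (n + 1) := by
    apply Finset.eq_of_subset_of_card_le
    · intro v hv
      rcases Finset.mem_image.mp hv with ⟨x, hx, rfl⟩
      exact Finset.mem_range.mpr (hπ x (Finset.mem_range.mp hx))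
    · rw [Finset.card_image_of_injective _ π.injective]
  have hjm : j ∈ (Finset.range (n + 1)).image π := by
    rw [himg]; exact Finset.mem_range.mpr hj
  rcases Finset.mem_image.mp hjm with ⟨x, hx, hxj⟩
  have : π⁻¹ j = x := by rw [← hxj]; simp
  rw [this]; exact Finset.mem_range.mp hx

lemma myExistsPerm (n : ℕ) (hn : 1 ≤ n) (C : Finset (Finset ℕ)) (hC : IsChain1 n C) :
    ∃ π : Equiv.Perm ℕ, IsPermOn n π ∧ ∀ S ∈ C, S.image π ∈ Mchain n := by
  classical
  set R := Finset.range (n + 1) with hR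
  set w : ℕ → ℕ := fun x => (C.filter (fun T => x ∈ T)).card with hw
  set key : ℕ → ℕ := fun x => w x * (n + 2) + x with hkey
  set g : ℕ → ℕ := fun x => (R.filter (fun y => key y < key x)).card with hg
  have hwlt : ∀ S ∈ C, ∀ x ∈ S, ∀ y, y ∉ S → w y < w x := by
    intro S hS x hx y hy
    have hsub : C.filter (fun T => y ∈ T) ⊆ (C.filter (fun T => x ∈ T)).erase S := by
      intro T hT
      rcases Finset.mem_filter.mp hT with ⟨hTC, hyT⟩
      have hST : S ⊆ T := by
        rcases hC.2 S hS T hTC with h | h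
        · exact h
        · exact absurd (h hyT) hy
      refine Finset.mem_erase.mpr ⟨?_, Finset.mem_filter.mpr ⟨hTC, hST hx⟩⟩
      rintro rfl; exact hy hyT
    have hmem : S ∈ C.filter (fun T => x ∈ T) := Finset.mem_filter.mpr ⟨hS, hx⟩
    calc w y ≤ ((C.filter (fun T => x ∈ T)).erase S).card := Finset.card_le_card hsub
      _ < (C.filter (fun T => x ∈ T)).card := Finset.card_erase_lt_of_mem hmem
  have hkeylt : ∀ S ∈ C, ∀ x ∈ S, ∀ y ∈ R, y ∉ S → key y < key x := by
    intro S hS x hx y hyR hyS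
    have h1 : w y + 1 ≤ w x := hwlt S hS x hx y hyS
    have h2 : y < n + 1 := Finset.mem_range.mp hyR
    have : (w y + 1) * (n + 2) ≤ w x * (n + 2) := Nat.mul_le_mul_right _ h1
    simp only [hkey]
    nlinarith
  have hgle : ∀ x ∈ R, g x ≤ n := by
    intro x hx
    have hsub : R.filter (fun y => key y < key x) ⊆ R.erase x := by
      intro y hy
      rcases Finset.mem_filter.mp hy with ⟨hyR, hyk⟩
      exact Finset.mem_erase.mpr ⟨fun he => by subst he; exact lt_irrefl _ hyk, hyR⟩
    calc g x ≤ (R.erase x).card := Finset.card_le_card hsub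
      _ = n := by rw [Finset.card_erase_of_mem hx, hR, Finset.card_range]; omega
  have hkeyinj : ∀ x ∈ R, ∀ y ∈ R, key x = key y → x = y := by
    intro x hx y hy hxy
    have hx' : x < n + 2 := by have := Finset.mem_range.mp hx; omega
    have hy' : y < n + 2 := by have := Finset.mem_range.mp hy; omega
    have : (w x * (n + 2) + x) % (n + 2) = (w y * (n + 2) + y) % (n + 2) := by
      simp only [hkey] at hxy; rw [hxy]
    rw [Nat.mul_comm (w x), Nat.mul_comm (w y)] at this
    rwa [Nat.mul_add_mod, Nat.mul_add_mod, Nat.mod_eq_of_lt hx', Nat.mod_eq_of_lt hy'] at this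
  have hgmono : ∀ x ∈ R, ∀ y ∈ R, key y < key x → g y < g x := by
    intro x hx y hy hk
    apply Finset.card_lt_card
    constructor
    · intro z hz
      rcases Finset.mem_filter.mp hz with ⟨hzR, hzk⟩
      exact Finset.mem_filter.mpr ⟨hzR, lt_trans hzk hk⟩
    · intro hcon
      have : y ∈ R.filter (fun z => key z < key y) := hcon (Finset.mem_filter.mpr ⟨hy, hk⟩)
      exact lt_irrefl _ (Finset.mem_filter.mp this).2
  have hginj : ∀ x ∈ R, ∀ y ∈ R, g x = g y → x = y := by
    intro x hx y hy hxy
    by_contra hne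
    have hk : key x ≠ key y := fun h => hne (hkeyinj x hx y hy h)
    rcases lt_or_gt_of_ne hk with h | h
    · exact absurd hxy (Nat.ne_of_lt (hgmono y hy x hx h))
    · exact absurd hxy (Ne.symm (Nat.ne_of_lt (hgmono x hx y hy h)))
  -- build the permutation
  let G : Fin (n + 1) → Fin (n + 1) := fun x =>
    if g x.val = 0 then ⟨n, Nat.lt_succ_self n⟩
    else ⟨g x.val - 1, by
      have := hgle x.1 (Finset.mem_range.mpr x.2); omega⟩
  have hGinj : Function.Injective G := by
    intro x y hxy
    have hx : x.1 ∈ R := Finset.mem_range.mpr x.2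
    have hy : y.1 ∈ R := Finset.mem_range.mpr y.2
    have hgx := hgle x.1 hx
    have hgy := hgle y.1 hy
    have hgeq : g x.1 = g y.1 := by
      by_cases h1 : g x.1 = 0 <;> by_cases h2 : g y.1 = 0 <;>
        simp only [G, h1, h2, if_pos, if_neg, if_true, if_false, Fin.mk.injEq] at hxy <;>
        omega
    exact Fin.ext (hginj x.1 hx y.1 hy hgeq)
  have hGbij : Function.Bijective G := Finite.injective_iff_bijective.mp hGinj
  let e : Equiv.Perm (Fin (n + 1)) := Equiv.ofBijective G hGbij
  let π : Equiv.Perm ℕ := e.extendDomain Fin.equivSubtype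
  have hπval : ∀ (x : ℕ) (h : x < n + 1), π x = (G ⟨x, h⟩).val := by
    intro x h
    have := Equiv.Perm.extendDomain_apply_subtype e Fin.equivSubtype (b := x) h
    rw [show π x = _ from this]
    rfl
  have hπOn : IsPermOn n π := by
    intro i hi
    rw [hπval i hi]
    exact (G ⟨i, hi⟩).2
  refine ⟨π, hπOn, ?_⟩
  intro S hS
  obtain ⟨hSne, hSsub⟩ := hC.1 S hS
  set s := S.card with hs
  have hs1 : 1 ≤ s := Finset.card_pos.mpr hSne
  have hsn : s ≤ n := by
    have := Finset.card_lt_card hSsub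
    rw [Finset.card_range] at this; omega
  have hSR : S ⊆ R := subset_of_ssubset hSsub
  have hcardRS : (R \ S).card = n + 1 - s := by
    rw [Finset.card_sdiff_of_subset hSR, hR, Finset.card_range]
  have hga : ∀ x ∈ S, n + 1 - s ≤ g x := by
    intro x hx
    have hsub : R \ S ⊆ R.filter (fun y => key y < key x) := by
      intro y hy
      rcases Finset.mem_sdiff.mp hy with ⟨hyR, hyS⟩
      exact Finset.mem_filter.mpr ⟨hyR, hkeylt S hS x hx y hyR hyS⟩
    calc n + 1 - s = (R \ S).card := hcardRS.symm
      _ ≤ g x := Finset.card_le_card hsub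
  have himg : S.image π ⊆ Finset.Icc (n - s) (n - 1) := by
    intro v hv
    rcases Finset.mem_image.mp hv with ⟨x, hx, rfl⟩
    have hxR : x ∈ R := hSR hx
    have hxlt : x < n + 1 := Finset.mem_range.mp hxR
    have h1 : n + 1 - s ≤ g x := hga x hx
    have h2 : g x ≤ n := hgle x hxR
    have hg0 : g x ≠ 0 := by omega
    rw [hπval x hxlt]
    simp only [G, if_neg hg0]
    exact Finset.mem_Icc.mpr ⟨by omega, by omega⟩
  have hcard1 : (S.image π).card = s := Finset.card_image_of_injective _ π.injective
  have hcard2 : (Finset.Icc (n - s) (n - 1)).card = s := by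
    rw [Nat.card_Icc]; omega
  have heq : S.image π = Finset.Icc (n - s) (n - 1) :=
    Finset.eq_of_subset_of_card_le himg (by omega)
  rw [heq]
  simp only [Mchain, Finset.mem_image]
  exact ⟨n - s, Finset.mem_range.mpr (by omega), rfl⟩

/-- Proposition (localisation): if `f : 𝓑₁ → {1,...,m}` satisfies `f(A) = f(A^π)` for
every `A ∈ 𝓑₁` and every permutation `π` of `[n]₀`, and the restriction of `f` to
`𝓑₁^M` is proper, then `f` is proper. -/
theorem proper_of_proper_on_B1M (n m : ℕ) (hn : 1 ≤ n) (f : Finset (Finset ℕ) → ℕ)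
    (hcod : ∀ A, IsB1 n A → f A ∈ Finset.Icc 1 m)
    (hsym : ∀ A, IsB1 n A → ∀ π : Equiv.Perm ℕ, IsPermOn n π → f A = f (permImage π A))
    (hM : IsProperOn n {A | InB1M n A} f) :
    IsProperOn n {A | IsB1 n A} f := by
  intro A hA B hB hAB hf N hN hmem
  obtain ⟨hAN, hBN⟩ := hmem
  have hA1 : IsB1 n A := hA
  have hB1 : IsB1 n B := hB
  have pair_sup : ∀ X Y : Finset (Finset ℕ),
      ({X, Y} : Finset (Finset (Finset ℕ))).sup id = X ∪ Y := by
    intro X Y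
    simp [Finset.sup_insert, Finset.sup_singleton, Finset.sup_eq_union]
  have pair_cond : ¬ A ⊆ B → ¬ B ⊆ A →
      IsChain1 n (A ∪ B) ∧ ¬ IsB1 n (A ∪ B) := by
    intro h1 h2
    have hsubN : ↑({A, B} : Finset (Finset (Finset ℕ))) ⊆ N := by
      intro X hX
      simp only [Finset.coe_insert, Finset.coe_singleton, Set.mem_insert_iff,
        Set.mem_singleton_iff] at hX
      rcases hX with rfl | rfl
      · exact hAN
      · exact hBN
    have hcard : 2 ≤ ({A, B} : Finset (Finset (Finset ℕ))).card := by
      rw [Finset.card_pair hAB]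
    have hinc : ∀ X ∈ ({A, B} : Finset (Finset (Finset ℕ))),
        ∀ Y ∈ ({A, B} : Finset (Finset (Finset ℕ))), X ≠ Y → ¬ X ⊆ Y := by
      intro X hX Y hY hXY
      simp only [Finset.mem_insert, Finset.mem_singleton] at hX hY
      rcases hX with rfl | rfl <;> rcases hY with rfl | rfl
      · exact absurd rfl hXY
      · exact h1
      · exact h2
      · exact absurd rfl hXY
    have := hN.2 {A, B} hsubN hcard hinc
    rwa [pair_sup A B] at this
  have hchain : IsChain1 n (A ∪ B) := by
    by_cases hsub : A ⊆ B
    · rw [Finset.union_eq_right.mpr hsub]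
      exact myChain1_of_isB1 n hB1
    by_cases hsub' : B ⊆ A
    · rw [Finset.union_eq_left.mpr hsub']
      exact myChain1_of_isB1 n hA1
    · exact (pair_cond hsub hsub').1
  obtain ⟨π, hπ, hπM⟩ := myExistsPerm n hn (A ∪ B) hchain
  set A' := permImage π A with hA'
  set B' := permImage π B with hB'
  have hA'B1 : IsB1 n A' := myB1_permImage hπ hA1
  have hB'B1 : IsB1 n B' := myB1_permImage hπ hB1
  have hA'M : A' ⊆ Mchain n := by
    intro T hT
    rcases Finset.mem_image.mp hT with ⟨S, hS, rfl⟩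
    exact hπM S (Finset.mem_union_left _ hS)
  have hB'M : B' ⊆ Mchain n := by
    intro T hT
    rcases Finset.mem_image.mp hT with ⟨S, hS, rfl⟩
    exact hπM S (Finset.mem_union_right _ hS)
  have hne' : A' ≠ B' := by
    intro h
    apply hAB
    rw [← myPermImage_inv π A, ← myPermImage_inv π B, ← hA', ← hB', h]
  have hf' : f A' = f B' := by
    rw [hA', hB', ← hsym A hA1 π hπ, ← hsym B hB1 π hπ]
    exact hf
  have hnested : IsNested1 n {A', B'} := by
    constructor
    · intro X hX
      rcases hX with rfl | hX
      · exact hA'B1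
      · rw [Set.mem_singleton_iff.mp hX]; exact hB'B1
    · intro W hWsub hWcard hWinc
      have hWsub' : W ⊆ ({A', B'} : Finset (Finset (Finset ℕ))) := by
        intro X hX
        have := hWsub hX
        simp only [Set.mem_insert_iff, Set.mem_singleton_iff] at this
        simp only [Finset.mem_insert, Finset.mem_singleton]
        exact this
      have hWeq : W = ({A', B'} : Finset (Finset (Finset ℕ))) := by
        refine (Finset.eq_of_subset_of_card_le hWsub' ?_).symm.symm
        have hle : ({A', B'} : Finset (Finset (Finset ℕ))).card ≤ 2 := by
          rw [Finset.card_pair hne']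
        omega
      subst hWeq
      have hmemA' : A' ∈ ({A', B'} : Finset (Finset (Finset ℕ))) := Finset.mem_insert_self _ _
      have hmemB' : B' ∈ ({A', B'} : Finset (Finset (Finset ℕ))) :=
        Finset.mem_insert_of_mem (Finset.mem_singleton_self _)
      have hnAB : ¬ A ⊆ B := fun h =>
        hWinc A' hmemA' B' hmemB' hne' (Finset.image_subset_image h)
      have hnBA : ¬ B ⊆ A := fun h =>
        hWinc B' hmemB' A' hmemA' hne'.symm (Finset.image_subset_image h)
      obtain ⟨hch, hnb⟩ := pair_cond hnAB hnBA
      rw [pair_sup A' B']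
      have hunion : A' ∪ B' = permImage π (A ∪ B) := by
        rw [hA', hB']
        exact (Finset.image_union _ _).symm
      constructor
      · rw [hunion]; exact myChain1_permImage hπ hch
      · rw [hunion]
        intro hb
        exact hnb (myPermImage_inv π (A ∪ B) ▸ myB1_permImage (myPermOn_inv hπ) hb)
  exact hM A' ⟨hA'B1, hA'M⟩ B' ⟨hB'B1, hB'M⟩ hne' hf' {A', B'} hnested
    ⟨Set.mem_insert _ _, Set.mem_insert_of_mem _ rfl⟩
end

section
/- For every n ≥ 2, the chromatic number of the n-dimensional simple permutoassociahedron satisfies δ_n = α_{n−1} + 1, where α_{n−1} is the chromatic number of the (n−1)-dimensional associahedron. -/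
/-- A segment of `[n]₀ = {0,...,n}`: a set `[a,b] = {x : a ≤ x ≤ b}` with
`0 ≤ a ≤ b ≤ n` that is a proper subset of `[n]₀`. -/
def IsSegment (n : ℕ) (S : Finset ℕ) : Prop :=
  ∃ a b : ℕ, a ≤ b ∧ b ≤ n ∧ S = Finset.Icc a b ∧ S ⊂ Finset.range (n + 1)

/-- The segment `[a,b]` precedes the segment `[c,d]` when `a+1 ≤ c ≤ b+1` and `b < d`. -/
def SegPrecedes (n : ℕ) (S T : Finset ℕ) : Prop :=
  ∃ a b c d : ℕ, a ≤ b ∧ b ≤ n ∧ c ≤ d ∧ d ≤ n ∧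
    S = Finset.Icc a b ∧ T = Finset.Icc c d ∧ a + 1 ≤ c ∧ c ≤ b + 1 ∧ b < d

/-- Two segments are separated when one of them precedes the other. -/
def SegSeparated (n : ℕ) (S T : Finset ℕ) : Prop :=
  SegPrecedes n S T ∨ SegPrecedes n T S

/-- A proper colouring of the `n`-dimensional associahedron with `m` colours:
a function from the segments of `[n]₀` to `{1,...,m}` such that any two distinct
segments of the same colour are separated. -/
def IsProperColouringAssoc (n m : ℕ) (f : Finset ℕ → ℕ) : Prop :=
  (∀ S, IsSegment n S → f S ∈ Finset.Icc 1 m) ∧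
  ∀ S T, IsSegment n S → IsSegment n T → S ≠ T → f S = f T → SegSeparated n S T

/-- The chromatic number `α_n` of the `n`-dimensional associahedron: the least `m`
for which a proper colouring with `m` colours exists. -/
noncomputable def assocChromatic (n : ℕ) : ℕ :=
  sInf {m : ℕ | ∃ f : Finset ℕ → ℕ, IsProperColouringAssoc n m f}

/-- A proper colouring of the `n`-dimensional simple permutoassociahedron with `m`
colours: a proper function `f : 𝓑₁ → {1,...,m}`. -/
def IsProperColouringPA (n m : ℕ) (f : Finset (Finset ℕ) → ℕ) : Prop :=
  (∀ A, IsB1 n A → f A ∈ Finset.Icc 1 m) ∧ IsProperOn n {A | IsB1 n A} f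

/-- The chromatic number `δ_n` of the `n`-dimensional simple permutoassociahedron. -/
noncomputable def paChromatic (n : ℕ) : ℕ :=
  sInf {m : ℕ | ∃ f : Finset (Finset ℕ) → ℕ, IsProperColouringPA n m f}

/-- Structural characterization of `IsB1`. -/
def Good (n : ℕ) (A : Finset (Finset ℕ)) : Prop :=
  A.Nonempty ∧ (∀ S ∈ A, S.Nonempty ∧ S ⊂ Finset.range (n + 1)) ∧
  (∀ S ∈ A, ∀ T ∈ A, S ⊆ T ∨ T ⊆ S) ∧
  (∀ S ∈ A, ∀ T ∈ A, ∀ c, S.card ≤ c → c ≤ T.card → ∃ U ∈ A, U.card = c)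

theorem isB1_iff_good (n : ℕ) (A : Finset (Finset ℕ)) : IsB1 n A ↔ Good n A := by
  constructor
  · rintro ⟨l, S, rfl, hne, hstep⟩
    have hmono : ∀ i, ∀ j, i ≤ j → j ≤ l → S i ⊆ S j := by
      intro i j hij hjl
      induction j, hij using Nat.le_induction with
      | base => exact subset_rfl
      | succ k hk ih => exact (ih (by omega)).trans (hstep k (by omega)).1.subset
    have hcard : ∀ j, j ≤ l → (S j).card = (S 0).card + j := by
      intro j hj
      induction j with
      | zero => rfl
      | succ k ih => rw [(hstep k (by omega)).2, ih (by omega)]; omega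
    refine ⟨⟨S 0, Finset.mem_image.mpr ⟨0, by simp⟩⟩, ?_, ?_, ?_⟩
    · intro T hT
      obtain ⟨j, hj, rfl⟩ := Finset.mem_image.mp hT
      exact hne j (by have := Finset.mem_range.mp hj; omega)
    · intro T hT U hU
      obtain ⟨j, hj, rfl⟩ := Finset.mem_image.mp hT
      obtain ⟨k, hk, rfl⟩ := Finset.mem_image.mp hU
      simp only [Finset.mem_range] at hj hk
      rcases le_total j k with h | h
      · exact Or.inl (hmono j k h (by omega))
      · exact Or.inr (hmono k j h (by omega))
    · intro T hT U hU c hTc hcU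
      obtain ⟨j, hj, rfl⟩ := Finset.mem_image.mp hT
      obtain ⟨k, hk, rfl⟩ := Finset.mem_image.mp hU
      simp only [Finset.mem_range] at hj hk
      rw [hcard j (by omega)] at hTc
      rw [hcard k (by omega)] at hcU
      refine ⟨S (c - (S 0).card), Finset.mem_image.mpr ⟨c - (S 0).card, Finset.mem_range.mpr (by omega), rfl⟩, ?_⟩
      rw [hcard _ (by omega)]; omega
  · rintro ⟨hne, helem, hchain, hint⟩
    have uniq : ∀ U ∈ A, ∀ V ∈ A, U.card = V.card → U = V := by
      intro U hU V hV hcard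
      rcases hchain U hU V hV with h | h
      · exact Finset.eq_of_subset_of_card_le h hcard.ge
      · exact (Finset.eq_of_subset_of_card_le h hcard.le).symm
    obtain ⟨S0, hS0, hS0min⟩ := A.exists_min_image Finset.card hne
    obtain ⟨S1, hS1, hS1max⟩ := A.exists_max_image Finset.card hne
    set l := S1.card - S0.card with hl
    have hle : S0.card ≤ S1.card := hS0min S1 hS1
    have hex : ∀ j, j ≤ l → ∃ U ∈ A, U.card = S0.card + j := by
      intro j hj
      exact hint S0 hS0 S1 hS1 (S0.card + j) (by omega) (by omega)
    classical
    have hex' : ∀ j : ℕ, ∃ U : Finset ℕ, j ≤ l → U ∈ A ∧ U.card = S0.card + j := by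
      intro j
      by_cases h : j ≤ l
      · obtain ⟨U, hU, hc⟩ := hex j h
        exact ⟨U, fun _ => ⟨hU, hc⟩⟩
      · exact ⟨∅, fun h' => absurd h' h⟩
    choose Sf hSf using hex'
    refine ⟨l, Sf, ?_, ?_, ?_⟩
    · ext U
      simp only [Finset.mem_image, Finset.mem_range]
      constructor
      · rintro hU
        have h1 : S0.card ≤ U.card := hS0min U hU
        have h2 : U.card ≤ S1.card := hS1max U hU
        refine ⟨U.card - S0.card, by omega, ?_⟩
        obtain ⟨hmem, hcard⟩ := hSf (U.card - S0.card) (by omega)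
        exact uniq _ hmem _ hU (by omega)
      · rintro ⟨j, hj, rfl⟩
        exact (hSf j (by omega)).1
    · intro j hj
      exact helem _ (hSf j hj).1
    · intro j hj
      obtain ⟨hm1, hc1⟩ := hSf j (by omega)
      obtain ⟨hm2, hc2⟩ := hSf (j+1) (by omega)
      have hsub : Sf j ⊆ Sf (j+1) := by
        rcases hchain _ hm1 _ hm2 with h | h
        · exact h
        · have := Finset.card_le_card h; omega
      refine ⟨⟨hsub, fun hrev => ?_⟩, by omega⟩
      have := Finset.card_le_card hrev; omega

/-- Minimum cardinality of members of `A`. -/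
noncomputable def loC (A : Finset (Finset ℕ)) : ℕ := sInf {c | ∃ S ∈ A, S.card = c}

/-- Maximum cardinality of members of `A`. -/
def hiC (A : Finset (Finset ℕ)) : ℕ := A.sup Finset.card

theorem b1_cards {n : ℕ} {A : Finset (Finset ℕ)} (hA : IsB1 n A) :
    (∃ S ∈ A, S.card = loC A) ∧ (∀ S ∈ A, loC A ≤ S.card) ∧
    (∃ S ∈ A, S.card = hiC A) ∧ (∀ S ∈ A, S.card ≤ hiC A) ∧
    1 ≤ loC A ∧ hiC A ≤ n ∧
    (∀ c, loC A ≤ c → c ≤ hiC A → ∃ S ∈ A, S.card = c) := by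
  obtain ⟨hne, helem, hchain, hint⟩ := (isB1_iff_good n A).mp hA
  obtain ⟨S0, hS0⟩ := hne
  have hsetne : {c | ∃ S ∈ A, S.card = c}.Nonempty := ⟨S0.card, S0, hS0, rfl⟩
  have hlomem : ∃ S ∈ A, S.card = loC A := Nat.sInf_mem hsetne
  have hlole : ∀ S ∈ A, loC A ≤ S.card := fun S hS => Nat.sInf_le ⟨S, hS, rfl⟩
  have hhimem : ∃ S ∈ A, S.card = hiC A := by
    obtain ⟨S, hS, hSc⟩ := Finset.exists_mem_eq_sup A ⟨S0, hS0⟩ Finset.card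
    exact ⟨S, hS, hSc.symm⟩
  have hhile : ∀ S ∈ A, S.card ≤ hiC A := fun S hS => Finset.le_sup hS
  refine ⟨hlomem, hlole, hhimem, hhile, ?_, ?_, ?_⟩
  · obtain ⟨S, hS, hc⟩ := hlomem
    have := (helem S hS).1
    rw [← hc]
    exact Finset.card_pos.mpr this
  · obtain ⟨S, hS, hc⟩ := hhimem
    have := Finset.card_lt_card (helem S hS).2
    rw [Finset.card_range] at this
    omega
  · intro c h1 h2
    obtain ⟨Sl, hSl, hcl⟩ := hlomem
    obtain ⟨Sh, hSh, hch⟩ := hhimem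
    exact hint Sl hSl Sh hSh c (by omega) (by omega)

theorem b1_subset_lo_hi {n : ℕ} {A B : Finset (Finset ℕ)} (hA : IsB1 n A) (hB : IsB1 n B)
    (h : A ⊆ B) : loC B ≤ loC A ∧ hiC A ≤ hiC B := by
  obtain ⟨⟨Sl, hSl, hcl⟩, -, ⟨Sh, hSh, hch⟩, -, -⟩ := b1_cards hA
  have h1 := (b1_cards hB).2.1 Sl (h hSl)
  have h2 := (b1_cards hB).2.2.2.1 Sh (h hSh)
  omega

/-- Two B1 chains with the same cardinality range whose union is a chain are equal. -/
theorem b1_eq_of_bounds {n : ℕ} {A B : Finset (Finset ℕ)} (hA : IsB1 n A) (hB : IsB1 n B)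
    (hlo : loC A = loC B) (hhi : hiC A = hiC B)
    (hch : ∀ S ∈ A ∪ B, ∀ T ∈ A ∪ B, S ⊆ T ∨ T ⊆ S) : A = B := by
  have key : ∀ (C D : Finset (Finset ℕ)), IsB1 n C → IsB1 n D → loC C = loC D → hiC C = hiC D →
      (∀ S ∈ C ∪ D, ∀ T ∈ C ∪ D, S ⊆ T ∨ T ⊆ S) → C ⊆ D := by
    intro C D hC hD hlo' hhi' hch' T hT
    obtain ⟨-, hle, -, hge, -, -, hint⟩ := b1_cards hC
    obtain ⟨S, hS, hSc⟩ := (b1_cards hD).2.2.2.2.2.2 T.card (by rw [← hlo']; exact hle T hT)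
      (by rw [← hhi']; exact hge T hT)
    have hcomp := hch' T (Finset.mem_union_left _ hT) S (Finset.mem_union_right _ hS)
    have : T = S := by
      rcases hcomp with h | h
      · exact Finset.eq_of_subset_of_card_le h (by omega)
      · exact (Finset.eq_of_subset_of_card_le h (by omega)).symm
    rwa [this]
  have h1 := key A B hA hB hlo hhi hch
  have h2 := key B A hB hA hlo.symm hhi.symm (by rwa [Finset.union_comm])
  exact Finset.Subset.antisymm h1 h2

/-- If the union of two B1 chains is a chain and cardinality ranges overlap or are
adjacent, the union is B1. -/
theorem b1_union {n : ℕ} {A B : Finset (Finset ℕ)} (hA : IsB1 n A) (hB : IsB1 n B)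
    (hch : ∀ S ∈ A ∪ B, ∀ T ∈ A ∪ B, S ⊆ T ∨ T ⊆ S)
    (h1 : loC A ≤ loC B) (h2 : loC B ≤ hiC A + 1) : IsB1 n (A ∪ B) := by
  obtain ⟨-, hleA, -, hgeA, -, -, hintA⟩ := b1_cards hA
  obtain ⟨-, hleB, -, hgeB, -, -, hintB⟩ := b1_cards hB
  obtain ⟨SA, hSA⟩ := ((isB1_iff_good n A).mp hA).1
  rw [isB1_iff_good]
  refine ⟨⟨SA, Finset.mem_union_left _ hSA⟩, ?_, hch, ?_⟩
  · intro S hS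
    rcases Finset.mem_union.mp hS with h | h
    · exact ((isB1_iff_good n A).mp hA).2.1 S h
    · exact ((isB1_iff_good n B).mp hB).2.1 S h
  · intro S hS T hT c hSc hcT
    have hSlo : loC A ≤ S.card := by
      rcases Finset.mem_union.mp hS with h | h
      · exact hleA S h
      · exact le_trans h1 (hleB S h)
    by_cases hc : c ≤ hiC A
    · obtain ⟨U, hU, hUc⟩ := hintA c (by omega) hc
      exact ⟨U, Finset.mem_union_left _ hU, hUc⟩
    · have hThi : T.card ≤ hiC B := by
        rcases Finset.mem_union.mp hT with h | h
        · have := hgeA T h; omega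
        · exact hgeB T h
      obtain ⟨U, hU, hUc⟩ := hintB c (by omega) (by omega)
      exact ⟨U, Finset.mem_union_right _ hU, hUc⟩

theorem sup_pair (A B : Finset (Finset ℕ)) : ({A, B} : Finset (Finset (Finset ℕ))).sup id = A ∪ B := by
  simp [Finset.sup_insert, Finset.sup_singleton]

/-- Two comparable B1 chains always lie in a common nested set. -/
theorem nested_pair_of_subset {n : ℕ} {A B : Finset (Finset ℕ)} (hA : IsB1 n A) (hB : IsB1 n B)
    (h : A ⊆ B ∨ B ⊆ A) : IsNested1 n {A, B} := by
  constructor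
  · intro C hC
    rcases hC with hC | hC <;> subst hC <;> assumption
  · intro W hW hcard hinc
    exfalso
    obtain ⟨x, hx, y, hy, hxy⟩ := Finset.one_lt_card.mp (lt_of_lt_of_le one_lt_two hcard)
    have hx' := hW hx
    have hy' := hW hy
    simp only [Set.mem_insert_iff, Set.mem_singleton_iff] at hx' hy'
    rcases hx' with rfl | rfl <;> rcases hy' with rfl | rfl
    · exact hxy rfl
    · rcases h with h | h
      · exact hinc _ hx _ hy hxy h
      · exact hinc _ hy _ hx (Ne.symm hxy) h
    · rcases h with h | h
      · exact hinc _ hy _ hx (Ne.symm hxy) h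
      · exact hinc _ hx _ hy hxy h
    · exact hxy rfl

/-- Two incomparable B1 chains whose union is a chain but not B1 lie in a common nested set. -/
theorem nested_pair_of_incomp {n : ℕ} {A B : Finset (Finset ℕ)} (hA : IsB1 n A) (hB : IsB1 n B)
    (hne : A ≠ B) (hchain : IsChain1 n (A ∪ B)) (hnb1 : ¬ IsB1 n (A ∪ B)) :
    IsNested1 n {A, B} := by
  constructor
  · intro C hC
    rcases hC with hC | hC <;> subst hC <;> assumption
  · intro W hW hcard hinc
    have hWsub : W ⊆ ({A, B} : Finset (Finset (Finset ℕ))) := by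
      intro x hx
      have := hW hx
      simp only [Set.mem_insert_iff, Set.mem_singleton_iff] at this
      simp only [Finset.mem_insert, Finset.mem_singleton]
      exact this
    have hWeq : W = ({A, B} : Finset (Finset (Finset ℕ))) := by
      apply Finset.eq_of_subset_of_card_le hWsub
      calc ({A, B} : Finset (Finset (Finset ℕ))).card ≤ 2 := Finset.card_insert_le _ _ |>.trans (by simp)
        _ ≤ W.card := hcard
    rw [hWeq, sup_pair]
    exact ⟨hchain, hnb1⟩

/-- Key extraction: distinct same-coloured B1 chains under a proper colouring are
incomparable, and if their union is a chain then it is B1. -/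
theorem proper_extract {n : ℕ} {f : Finset (Finset ℕ) → ℕ}
    (hf : IsProperOn n {A | IsB1 n A} f) {A B : Finset (Finset ℕ)}
    (hA : IsB1 n A) (hB : IsB1 n B) (hne : A ≠ B) (hcol : f A = f B) :
    (¬ A ⊆ B ∧ ¬ B ⊆ A) ∧ (IsChain1 n (A ∪ B) → IsB1 n (A ∪ B)) := by
  have hmem : A ∈ ({A, B} : Set (Finset (Finset ℕ))) := Or.inl rfl
  have hmem' : B ∈ ({A, B} : Set (Finset (Finset ℕ))) := Or.inr rfl
  constructor
  · constructor
    · intro h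
      exact hf A hA B hB hne hcol _ (nested_pair_of_subset hA hB (Or.inl h)) ⟨hmem, hmem'⟩
    · intro h
      exact hf A hA B hB hne hcol _ (nested_pair_of_subset hA hB (Or.inr h)) ⟨hmem, hmem'⟩
  · intro hchain
    by_contra hnb1
    exact hf A hA B hB hne hcol _ (nested_pair_of_incomp hA hB hne hchain hnb1) ⟨hmem, hmem'⟩

/-- The chain `{Icc i (n-1) : a ≤ i ≤ b}` inside the maximal chain `M`. -/
def runS (n a b : ℕ) : Finset (Finset ℕ) :=
  (Finset.Icc a b).image fun i => Finset.Icc i (n - 1)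

theorem icc_eq_icc {a b c d : ℕ} (hab : a ≤ b) (hcd : c ≤ d)
    (h : Finset.Icc a b = Finset.Icc c d) : a = c ∧ b = d := by
  have h1 : a ∈ Finset.Icc c d := h ▸ Finset.mem_Icc.mpr ⟨le_refl a, hab⟩
  have h2 : c ∈ Finset.Icc a b := h.symm ▸ Finset.mem_Icc.mpr ⟨le_refl c, hcd⟩
  have h3 : b ∈ Finset.Icc c d := h ▸ Finset.mem_Icc.mpr ⟨hab, le_refl b⟩
  have h4 : d ∈ Finset.Icc a b := h.symm ▸ Finset.mem_Icc.mpr ⟨hcd, le_refl d⟩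
  simp only [Finset.mem_Icc] at h1 h2 h3 h4
  omega

theorem card_icc_top {n i : ℕ} (hn : 1 ≤ n) (h : i ≤ n - 1) : (Finset.Icc i (n-1)).card = n - i := by
  rw [Nat.card_Icc]; omega

theorem run_mem {n a b : ℕ} {S : Finset ℕ} :
    S ∈ runS n a b ↔ ∃ i, a ≤ i ∧ i ≤ b ∧ S = Finset.Icc i (n-1) := by
  simp only [runS, Finset.mem_image, Finset.mem_Icc]
  constructor
  · rintro ⟨i, ⟨h1, h2⟩, rfl⟩; exact ⟨i, h1, h2, rfl⟩
  · rintro ⟨i, h1, h2, rfl⟩; exact ⟨i, ⟨h1, h2⟩, rfl⟩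

theorem run_b1 {n a b : ℕ} (hn : 1 ≤ n) (hab : a ≤ b) (hb : b ≤ n - 1) :
    IsB1 n (runS n a b) := by
  rw [isB1_iff_good]
  refine ⟨⟨Finset.Icc a (n-1), run_mem.mpr ⟨a, le_refl a, hab, rfl⟩⟩, ?_, ?_, ?_⟩
  · intro S hS
    obtain ⟨i, h1, h2, rfl⟩ := run_mem.mp hS
    constructor
    · exact Finset.nonempty_Icc.mpr (by omega)
    · constructor
      · intro x hx
        rw [Finset.mem_Icc] at hx
        rw [Finset.mem_range]; omega
      · intro hsub
        have := hsub (Finset.mem_range.mpr (by omega : n < n + 1))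
        rw [Finset.mem_Icc] at this; omega
  · intro S hS T hT
    obtain ⟨i, hi1, hi2, rfl⟩ := run_mem.mp hS
    obtain ⟨j, hj1, hj2, rfl⟩ := run_mem.mp hT
    rcases le_total j i with h | h
    · exact Or.inl (Finset.Icc_subset_Icc h (le_refl _))
    · exact Or.inr (Finset.Icc_subset_Icc h (le_refl _))
  · intro S hS T hT c hSc hcT
    obtain ⟨i, hi1, hi2, rfl⟩ := run_mem.mp hS
    obtain ⟨j, hj1, hj2, rfl⟩ := run_mem.mp hT
    rw [card_icc_top hn (by omega)] at hSc
    rw [card_icc_top hn (by omega)] at hcT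
    refine ⟨Finset.Icc (n - c) (n-1), run_mem.mpr ⟨n - c, by omega, by omega, rfl⟩, ?_⟩
    rw [card_icc_top hn (by omega)]; omega

theorem run_subset_iff {n a b c d : ℕ} (hn : 1 ≤ n) (hab : a ≤ b) (hb : b ≤ n - 1)
    (hcd : c ≤ d) (hd : d ≤ n - 1) :
    runS n a b ⊆ runS n c d ↔ c ≤ a ∧ b ≤ d := by
  constructor
  · intro h
    have h1 : Finset.Icc a (n-1) ∈ runS n c d := h (run_mem.mpr ⟨a, le_refl a, hab, rfl⟩)
    have h2 : Finset.Icc b (n-1) ∈ runS n c d := h (run_mem.mpr ⟨b, hab, le_refl b, rfl⟩)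
    obtain ⟨i, hi1, hi2, hieq⟩ := run_mem.mp h1
    obtain ⟨j, hj1, hj2, hjeq⟩ := run_mem.mp h2
    have e1 := icc_eq_icc (by omega) (by omega) hieq
    have e2 := icc_eq_icc (by omega) (by omega) hjeq
    omega
  · rintro ⟨h1, h2⟩ S hS
    obtain ⟨i, hi1, hi2, rfl⟩ := run_mem.mp hS
    exact run_mem.mpr ⟨i, by omega, by omega, rfl⟩

theorem run_inj {n a b c d : ℕ} (hn : 1 ≤ n) (hab : a ≤ b) (hb : b ≤ n - 1)
    (hcd : c ≤ d) (hd : d ≤ n - 1) (h : runS n a b = runS n c d) : a = c ∧ b = d := by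
  have h1 := (run_subset_iff hn hab hb hcd hd).mp (fun x hx => h ▸ hx)
  have h2 := (run_subset_iff hn hcd hd hab hb).mp (fun x hx => h ▸ hx)
  omega

theorem run_lo {n a b : ℕ} (hn : 1 ≤ n) (hab : a ≤ b) (hb : b ≤ n - 1) :
    loC (runS n a b) = n - b := by
  apply Nat.le_antisymm
  · exact Nat.sInf_le ⟨Finset.Icc b (n-1), run_mem.mpr ⟨b, hab, le_refl b, rfl⟩, card_icc_top hn hb⟩
  · obtain ⟨S, hS, hc⟩ := (b1_cards (run_b1 hn hab hb)).1
    obtain ⟨i, hi1, hi2, rfl⟩ := run_mem.mp hS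
    rw [← hc, card_icc_top hn (by omega)]; omega

theorem run_hi {n a b : ℕ} (hn : 1 ≤ n) (hab : a ≤ b) (hb : b ≤ n - 1) :
    hiC (runS n a b) = n - a := by
  apply Nat.le_antisymm
  · apply Finset.sup_le
    intro S hS
    obtain ⟨i, hi1, hi2, rfl⟩ := run_mem.mp hS
    rw [card_icc_top hn (by omega)]; omega
  · have : Finset.Icc a (n-1) ∈ runS n a b := run_mem.mpr ⟨a, le_refl a, hab, rfl⟩
    have := Finset.le_sup (f := Finset.card) this
    rwa [card_icc_top hn (by omega)] at this

theorem run_union_chain {n a b c d : ℕ} (hn : 1 ≤ n) (hb : b ≤ n - 1) (hd : d ≤ n - 1) :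
    IsChain1 n (runS n a b ∪ runS n c d) := by
  constructor
  · intro S hS
    rcases Finset.mem_union.mp hS with h | h <;>
    · obtain ⟨i, h1, h2, rfl⟩ := run_mem.mp h
      refine ⟨Finset.nonempty_Icc.mpr (by omega), ?_, ?_⟩
      · intro x hx
        rw [Finset.mem_Icc] at hx
        rw [Finset.mem_range]; omega
      · intro hsub
        have := hsub (Finset.mem_range.mpr (by omega : n < n + 1))
        rw [Finset.mem_Icc] at this; omega
  · intro S hS T hT
    have hS' : ∃ i, S = Finset.Icc i (n-1) := by
      rcases Finset.mem_union.mp hS with h | h <;>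
      · obtain ⟨i, _, _, rfl⟩ := run_mem.mp h; exact ⟨i, rfl⟩
    have hT' : ∃ j, T = Finset.Icc j (n-1) := by
      rcases Finset.mem_union.mp hT with h | h <;>
      · obtain ⟨j, _, _, rfl⟩ := run_mem.mp h; exact ⟨j, rfl⟩
    obtain ⟨i, rfl⟩ := hS'
    obtain ⟨j, rfl⟩ := hT'
    rcases le_total j i with h | h
    · exact Or.inl (Finset.Icc_subset_Icc h (le_refl _))
    · exact Or.inr (Finset.Icc_subset_Icc h (le_refl _))

theorem mchain_eq_run (n : ℕ) (hn : 1 ≤ n) : Mchain n = runS n 0 (n - 1) := by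
  unfold Mchain runS
  congr 1
  ext x
  simp only [Finset.mem_range, Finset.mem_Icc]
  omega

theorem range_eq_icc {n : ℕ} (hn : 1 ≤ n) : Finset.range n = Finset.Icc 0 (n - 1) := by
  ext x; simp only [Finset.mem_range, Finset.mem_Icc]; omega

theorem nested_union_facts {n : ℕ} {N : Set (Finset (Finset ℕ))} (hN : IsNested1 n N)
    {A B : Finset (Finset ℕ)} (hAN : A ∈ N) (hBN : B ∈ N) (hne : A ≠ B)
    (h1 : ¬ A ⊆ B) (h2 : ¬ B ⊆ A) : IsChain1 n (A ∪ B) ∧ ¬ IsB1 n (A ∪ B) := by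
  have := hN.2 ({A, B} : Finset (Finset (Finset ℕ)))
    (by intro x hx
        rcases Finset.mem_insert.mp (Finset.mem_coe.mp hx) with rfl | hx
        · exact hAN
        · rw [Finset.mem_singleton] at hx; subst hx; exact hBN)
    (by rw [Finset.card_pair hne])
    (by intro x hx y hy hxy
        have hx' : x = A ∨ x = B := by simpa using hx
        have hy' : y = A ∨ y = B := by simpa using hy
        rcases hx' with rfl | rfl <;> rcases hy' with rfl | rfl
        · exact absurd rfl hxy
        · exact h1
        · exact h2
        · exact absurd rfl hxy)
  rwa [sup_pair] at this

/-- The colouring of `𝓑₁` induced by an associahedron colouring. -/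
noncomputable def liftCol (n α : ℕ) (g : Finset ℕ → ℕ) : Finset (Finset ℕ) → ℕ :=
  fun A => if loC A = 1 ∧ hiC A = n then α + 1
           else g (Finset.Icc (loC A - 1) (hiC A - 1))

theorem upper_bound {n α : ℕ} (hn : 2 ≤ n) {g : Finset ℕ → ℕ}
    (hg : IsProperColouringAssoc (n - 1) α g) :
    IsProperColouringPA n (α + 1) (liftCol n α g) := by
  obtain ⟨hg1, hg2⟩ := hg
  -- the induced segment is a genuine segment when `A` is not full
  have hseg : ∀ A : Finset (Finset ℕ), IsB1 n A → ¬ (loC A = 1 ∧ hiC A = n) →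
      IsSegment (n - 1) (Finset.Icc (loC A - 1) (hiC A - 1)) := by
    intro A hA hfull
    obtain ⟨-, -, -, -, hlo1, hhin, -⟩ := b1_cards hA
    have hlohi : loC A ≤ hiC A := by
      obtain ⟨⟨S, hS, hc⟩, -, -, hge, -⟩ := b1_cards hA
      have := hge S hS; omega
    refine ⟨loC A - 1, hiC A - 1, by omega, by omega, rfl, ?_⟩
    rw [Finset.ssubset_iff_subset_ne]
    constructor
    · intro x hx
      rw [Finset.mem_Icc] at hx
      rw [Finset.mem_range]; omega
    · intro h
      rw [range_eq_icc (by omega : 1 ≤ n - 1 + 1)] at h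
      have := icc_eq_icc (by omega) (by omega) h
      exact hfull ⟨by omega, by omega⟩
  constructor
  · intro A hA
    unfold liftCol
    by_cases hfull : loC A = 1 ∧ hiC A = n
    · rw [if_pos hfull, Finset.mem_Icc]; omega
    · rw [if_neg hfull]
      have := hg1 _ (hseg A hA hfull)
      rw [Finset.mem_Icc] at this ⊢; omega
  · intro A hA B hB hne hcol N hN hmem
    simp only [Set.mem_setOf_eq] at hA hB
    obtain ⟨hAN, hBN⟩ := hmem
    obtain ⟨-, hleA, -, hgeA, hlo1A, hhinA, -⟩ := b1_cards hA
    obtain ⟨-, hleB, -, hgeB, hlo1B, hhinB, -⟩ := b1_cards hB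
    have hlohiA : loC A ≤ hiC A := by
      obtain ⟨⟨S, hS, hc⟩, -, -, hge, -⟩ := b1_cards hA
      have := hge S hS; omega
    have hlohiB : loC B ≤ hiC B := by
      obtain ⟨⟨S, hS, hc⟩, -, -, hge, -⟩ := b1_cards hB
      have := hge S hS; omega
    -- from equal colours: equal bounds, or strictly separated bounds
    have hbounds : (loC A = loC B ∧ hiC A = hiC B) ∨
        (loC A < loC B ∧ loC B ≤ hiC A + 1 ∧ hiC A < hiC B) ∨
        (loC B < loC A ∧ loC A ≤ hiC B + 1 ∧ hiC B < hiC A) := by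
      unfold liftCol at hcol
      by_cases hfA : loC A = 1 ∧ hiC A = n <;> by_cases hfB : loC B = 1 ∧ hiC B = n
      · left; omega
      · rw [if_pos hfA, if_neg hfB] at hcol
        have := hg1 _ (hseg B hB hfB)
        rw [Finset.mem_Icc] at this; omega
      · rw [if_neg hfA, if_pos hfB] at hcol
        have := hg1 _ (hseg A hA hfA)
        rw [Finset.mem_Icc] at this; omega
      · rw [if_neg hfA, if_neg hfB] at hcol
        by_cases heq : Finset.Icc (loC A - 1) (hiC A - 1) = Finset.Icc (loC B - 1) (hiC B - 1)
        · left
          have := icc_eq_icc (by omega) (by omega) heq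
          omega
        · have hsep := hg2 _ _ (hseg A hA hfA) (hseg B hB hfB) heq hcol
          rcases hsep with ⟨a, b, c, d, hab, hb, hcd, hd, he1, he2, hp1, hp2, hp3⟩ |
            ⟨a, b, c, d, hab, hb, hcd, hd, he1, he2, hp1, hp2, hp3⟩
          · obtain ⟨e1, e2⟩ := icc_eq_icc (by omega) hab he1
            obtain ⟨e3, e4⟩ := icc_eq_icc (by omega) hcd he2
            right; left; omega
          · obtain ⟨e1, e2⟩ := icc_eq_icc (by omega) hab he1
            obtain ⟨e3, e4⟩ := icc_eq_icc (by omega) hcd he2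
            right; right; omega
    rcases hbounds with ⟨h1, h2⟩ | ⟨h1, h2, h3⟩ | ⟨h1, h2, h3⟩
    · -- equal bounds: derive A = B
      apply hne
      by_cases hcomp : A ⊆ B ∨ B ⊆ A
      · rcases hcomp with h | h
        · refine b1_eq_of_bounds hA hB h1 h2 ?_
          rw [Finset.union_eq_right.mpr h]
          exact ((isB1_iff_good n B).mp hB).2.2.1
        · refine b1_eq_of_bounds hA hB h1 h2 ?_
          rw [Finset.union_eq_left.mpr h]
          exact ((isB1_iff_good n A).mp hA).2.2.1
      · push_neg at hcomp
        obtain ⟨hchain, -⟩ := nested_union_facts hN hAN hBN hne hcomp.1 hcomp.2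
        exact b1_eq_of_bounds hA hB h1 h2 hchain.2
    · -- A before B
      have hcomp1 : ¬ A ⊆ B := fun h => by have := b1_subset_lo_hi hA hB h; omega
      have hcomp2 : ¬ B ⊆ A := fun h => by have := b1_subset_lo_hi hB hA h; omega
      obtain ⟨hchain, hnb1⟩ := nested_union_facts hN hAN hBN hne hcomp1 hcomp2
      exact hnb1 (b1_union hA hB hchain.2 (by omega) h2)
    · -- B before A
      have hcomp1 : ¬ A ⊆ B := fun h => by have := b1_subset_lo_hi hA hB h; omega
      have hcomp2 : ¬ B ⊆ A := fun h => by have := b1_subset_lo_hi hB hA h; omega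
      obtain ⟨hchain, hnb1⟩ := nested_union_facts hN hAN hBN hne hcomp1 hcomp2
      rw [Finset.union_comm] at hchain hnb1
      exact hnb1 (b1_union hB hA hchain.2 (by omega) h2)

noncomputable def aOf (S : Finset ℕ) : ℕ := sInf {x | x ∈ S}
def bOf (S : Finset ℕ) : ℕ := S.sup id

theorem seg_canon {a b : ℕ} (hab : a ≤ b) :
    aOf (Finset.Icc a b) = a ∧ bOf (Finset.Icc a b) = b := by
  constructor
  · apply Nat.le_antisymm
    · exact Nat.sInf_le (Finset.mem_Icc.mpr ⟨le_refl a, hab⟩)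
    · have h := Nat.sInf_mem (⟨a, Finset.mem_Icc.mpr ⟨le_refl a, hab⟩⟩ :
        {x | x ∈ Finset.Icc a b}.Nonempty)
      exact (Finset.mem_Icc.mp h).1
  · apply Nat.le_antisymm
    · exact Finset.sup_le fun x hx => (Finset.mem_Icc.mp hx).2
    · exact Finset.le_sup (f := id) (Finset.mem_Icc.mpr ⟨hab, le_refl b⟩)

/-- The colouring of segments induced by a PA colouring: use the colour of the
corresponding run, swapping colour `m` with the colour of the maximal chain. -/
noncomputable def dropCol (n m : ℕ) (f : Finset (Finset ℕ) → ℕ) : Finset ℕ → ℕ :=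
  fun S => if f (runS n (aOf S) (bOf S)) = m then f (Mchain n)
           else f (runS n (aOf S) (bOf S))

theorem range_sub (n : ℕ) : Finset.range (n - 1 + 1) = Finset.Icc 0 (n - 1) := by
  ext x; simp only [Finset.mem_range, Finset.mem_Icc]; omega

theorem lower_bound {n m : ℕ} (hn : 2 ≤ n) {f : Finset (Finset ℕ) → ℕ}
    (hf : IsProperColouringPA n m f) :
    1 ≤ m ∧ IsProperColouringAssoc (n - 1) (m - 1) (dropCol n m f) := by
  obtain ⟨hf1, hf2⟩ := hf
  have hn1 : 1 ≤ n := by omega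
  have hM : IsB1 n (Mchain n) := by
    rw [mchain_eq_run n hn1]
    exact run_b1 hn1 (by omega) (le_refl _)
  have hMrange := hf1 _ hM
  rw [Finset.mem_Icc] at hMrange
  have hm1 : 1 ≤ m := by omega
  -- key fact: colour of a proper run differs from colour of the maximal chain
  have hrun_ne : ∀ a b : ℕ, a ≤ b → b ≤ n - 1 → ¬(a = 0 ∧ b = n - 1) →
      f (runS n a b) ≠ f (Mchain n) := by
    intro a b hab hb hprop hcol
    have hrun := run_b1 hn1 hab hb
    have hneq : runS n a b ≠ Mchain n := by
      rw [mchain_eq_run n hn1]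
      intro h
      exact hprop (by have := run_inj hn1 hab hb (by omega) (le_refl _) h; omega)
    have hsub : runS n a b ⊆ Mchain n := by
      rw [mchain_eq_run n hn1]
      exact (run_subset_iff hn1 hab hb (by omega) (le_refl _)).mpr ⟨by omega, hb⟩
    exact hf2 _ hrun _ hM hneq hcol _
      (nested_pair_of_subset hrun hM (Or.inl hsub))
      ⟨Or.inl rfl, Or.inr rfl⟩
  refine ⟨hm1, ?_, ?_⟩
  · -- range
    rintro S ⟨a, b, hab, hb, rfl, hss⟩
    obtain ⟨ha', hb'⟩ := seg_canon hab
    unfold dropCol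
    rw [ha', hb']
    have hprop : ¬(a = 0 ∧ b = n - 1) := by
      rintro ⟨rfl, rfl⟩
      rw [range_sub n] at hss
      exact (lt_irrefl _ hss)
    have hne := hrun_ne a b hab hb hprop
    have hrange := hf1 _ (run_b1 hn1 hab hb)
    rw [Finset.mem_Icc] at hrange
    by_cases hcase : f (runS n a b) = m
    · rw [if_pos hcase, Finset.mem_Icc]
      omega
    · rw [if_neg hcase, Finset.mem_Icc]
      omega
  · -- separation
    rintro S T ⟨a, b, hab, hb, rfl, hssS⟩ ⟨c, d, hcd, hd, rfl, hssT⟩ hne hcol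
    obtain ⟨haS, hbS⟩ := seg_canon hab
    obtain ⟨haT, hbT⟩ := seg_canon hcd
    unfold dropCol at hcol
    rw [haS, hbS, haT, hbT] at hcol
    have hpropS : ¬(a = 0 ∧ b = n - 1) := by
      rintro ⟨rfl, rfl⟩
      rw [range_sub n] at hssS
      exact (lt_irrefl _ hssS)
    have hpropT : ¬(c = 0 ∧ d = n - 1) := by
      rintro ⟨rfl, rfl⟩
      rw [range_sub n] at hssT
      exact (lt_irrefl _ hssT)
    have hneS := hrun_ne a b hab hb hpropS
    have hneT := hrun_ne c d hcd hd hpropT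
    -- the swap is injective away from the colour of M
    have hcol' : f (runS n a b) = f (runS n c d) := by
      by_cases h1 : f (runS n a b) = m <;> by_cases h2 : f (runS n c d) = m
      · rw [h1, h2]
      · rw [if_pos h1, if_neg h2] at hcol; exact absurd hcol.symm hneT
      · rw [if_neg h1, if_pos h2] at hcol; exact absurd hcol hneS
      · rwa [if_neg h1, if_neg h2] at hcol
    have hrneq : runS n a b ≠ runS n c d := by
      intro h
      obtain ⟨rfl, rfl⟩ := run_inj hn1 hab hb hcd hd h
      exact hne rfl
    obtain ⟨⟨hns1, hns2⟩, hchainb1⟩ := proper_extract hf2 (run_b1 hn1 hab hb)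
      (run_b1 hn1 hcd hd) hrneq hcol'
    have hB1U := hchainb1 (run_union_chain hn1 hb hd)
    have hns1' : ¬(c ≤ a ∧ b ≤ d) := fun h =>
      hns1 ((run_subset_iff hn1 hab hb hcd hd).mpr h)
    have hns2' : ¬(a ≤ c ∧ d ≤ b) := fun h =>
      hns2 ((run_subset_iff hn1 hcd hd hab hb).mpr h)
    -- adjacency of the index intervals from B1-ness of the union
    have hadj : ∀ a' b' c' d' : ℕ, a' ≤ b' → b' ≤ n - 1 → c' ≤ d' → d' ≤ n - 1 →
        a' < c' → b' < d' → IsB1 n (runS n a' b' ∪ runS n c' d') → c' ≤ b' + 1 := by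
      intro a' b' c' d' hab' hb' hcd' hd' h1 h2 hU
      by_contra hgap
      push_neg at hgap
      obtain ⟨-, -, -, hint⟩ := (isB1_iff_good n _).mp hU
      obtain ⟨U, hU', hUc⟩ := hint (Finset.Icc d' (n-1))
        (Finset.mem_union_right _ (run_mem.mpr ⟨d', hcd', le_refl _, rfl⟩))
        (Finset.Icc a' (n-1))
        (Finset.mem_union_left _ (run_mem.mpr ⟨a', le_refl _, hab', rfl⟩))
        (n - (b' + 1))
        (by rw [card_icc_top hn1 hd']; omega)
        (by rw [card_icc_top hn1 (by omega)]; omega)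
      have : ∃ i, (a' ≤ i ∧ i ≤ b' ∨ c' ≤ i ∧ i ≤ d') ∧ U = Finset.Icc i (n-1) := by
        rcases Finset.mem_union.mp hU' with h | h
        · obtain ⟨i, hi1, hi2, rfl⟩ := run_mem.mp h; exact ⟨i, Or.inl ⟨hi1, hi2⟩, rfl⟩
        · obtain ⟨i, hi1, hi2, rfl⟩ := run_mem.mp h; exact ⟨i, Or.inr ⟨hi1, hi2⟩, rfl⟩
      obtain ⟨i, hi, rfl⟩ := this
      rw [card_icc_top hn1 (by omega)] at hUc
      omega
    rcases (by omega : (a < c ∧ b < d) ∨ (c < a ∧ d < b)) with ⟨h1, h2⟩ | ⟨h1, h2⟩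
    · left
      exact ⟨a, b, c, d, hab, hb, hcd, hd, rfl, rfl, by omega,
        hadj a b c d hab hb hcd hd h1 h2 hB1U, h2⟩
    · right
      refine ⟨c, d, a, b, hcd, hd, hab, hb, rfl, rfl, by omega, ?_, h2⟩
      rw [Finset.union_comm] at hB1U
      exact hadj c d a b hcd hd hab hb h1 h2 hB1U

theorem assoc_nonempty (n : ℕ) (hn : 2 ≤ n) :
    ∃ f : Finset ℕ → ℕ, IsProperColouringAssoc (n - 1) (n * n) f := by
  refine ⟨fun S => bOf S * n + aOf S + 1, ?_, ?_⟩
  · rintro S ⟨a, b, hab, hb, rfl, hss⟩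
    obtain ⟨ha', hb'⟩ := seg_canon hab
    simp only []
    rw [ha', hb', Finset.mem_Icc]
    have h1 : b * n ≤ (n - 1) * n := Nat.mul_le_mul_right n hb
    have h2 : (n - 1) * n + n = n * n := by
      have : n - 1 + 1 = n := by omega
      calc (n - 1) * n + n = (n - 1 + 1) * n := by rw [add_mul, one_mul]
        _ = n * n := by rw [this]
    omega
  · rintro S T ⟨a, b, hab, hb, rfl, hssS⟩ ⟨c, d, hcd, hd, rfl, hssT⟩ hne hcol
    exfalso
    obtain ⟨haS, hbS⟩ := seg_canon hab
    obtain ⟨haT, hbT⟩ := seg_canon hcd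
    simp only [] at hcol
    rw [haS, hbS, haT, hbT] at hcol
    have key : ∀ x y u v : ℕ, x < n → y < n → u ≤ v → u * n + x = v * n + y → u = v := by
      intro x y u v hx hy huv heq
      by_contra hne'
      have h3 : u + 1 ≤ v := by omega
      have h4 : (u + 1) * n ≤ v * n := Nat.mul_le_mul_right _ h3
      rw [add_mul, one_mul] at h4
      linarith
    have hb' : b = d := by
      rcases le_total b d with h | h
      · exact key a c b d (by omega) (by omega) h (by omega)
      · exact (key c a d b (by omega) (by omega) h (by omega)).symm
    apply hne
    subst hb'
    have : a = c := by
      have h1 : b * n + a + 1 = b * n + c + 1 := hcol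
      omega
    rw [this]

theorem paChromatic_eq' (n : ℕ) (hn : 2 ≤ n) :
    paChromatic n = assocChromatic (n - 1) + 1 := by
  have hAne : {m : ℕ | ∃ f : Finset ℕ → ℕ, IsProperColouringAssoc (n - 1) m f}.Nonempty :=
    ⟨n * n, assoc_nonempty n hn⟩
  obtain ⟨g, hg⟩ := Nat.sInf_mem hAne
  have hup : assocChromatic (n - 1) + 1 ∈
      {m : ℕ | ∃ f : Finset (Finset ℕ) → ℕ, IsProperColouringPA n m f} :=
    ⟨liftCol n (assocChromatic (n - 1)) g, upper_bound hn hg⟩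
  have h1 : paChromatic n ≤ assocChromatic (n - 1) + 1 := Nat.sInf_le hup
  obtain ⟨f, hf⟩ := Nat.sInf_mem (⟨_, hup⟩ :
    {m : ℕ | ∃ f : Finset (Finset ℕ) → ℕ, IsProperColouringPA n m f}.Nonempty)
  obtain ⟨hm1, hlow⟩ := lower_bound hn hf
  have h2 : assocChromatic (n - 1) ≤ paChromatic n - 1 :=
    Nat.sInf_le ⟨dropCol n (paChromatic n) f, hlow⟩
  have hm1' : 1 ≤ paChromatic n := hm1
  omega

/-- Theorem: `δ_n = α_{n−1} + 1` for every `n ≥ 2`. -/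
theorem paChromatic_eq (n : ℕ) (hn : 2 ≤ n) :
    paChromatic n = assocChromatic (n - 1) + 1 := by
  exact paChromatic_eq' n hn
end
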